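/- arXiv:2302.06869 — 8 statements merged into one kernel-verified Lean document; each statement's English description precedes it below -/
import Mathlib

section
/- If X is a binomial random variable with m trials and success probability p > 0, then E[1/((X+1)(X+2))] ≤ 1/(p^2 (m+1)(m+2)). -/
/-- For `X ~ Bin(m, p)` with `0 < p ≤ 1`,
`E[1/((X+1)(X+2))] ≤ 1/(p² (m+1)(m+2))`. -/
theorem binomial_expectation_inv_succ_sq (m : ℕ) (p : ℝ) (hp : 0 < p) (hp1 : p ≤ 1) :
    ∑ j ∈ Finset.range (m + 1),
      (m.choose j : ℝ) * p ^ j * (1 - p) ^ (m - j) * (1 / (((j : ℝ) + 1) * ((j : ℝ) + 2)))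
    ≤ 1 / (p ^ 2 * ((m : ℝ) + 1) * ((m : ℝ) + 2)) := by
  have h1p : (0:ℝ) ≤ 1 - p := by linarith
  have hden : (0:ℝ) < p ^ 2 * ((m : ℝ) + 1) * ((m : ℝ) + 2) := by positivity
  set g : ℕ → ℝ := fun k => ((m+2).choose k : ℝ) * p ^ k * (1 - p) ^ ((m + 2) - k) with hg
  have hgnonneg : ∀ k, 0 ≤ g k := by
    intro k; simp only [hg]; positivity
  have key : ∀ j : ℕ, ((m.choose j : ℝ)) * ((m:ℝ)+1) * ((m:ℝ)+2)
      = ((m+2).choose (j+2) : ℝ) * ((j:ℝ)+1) * ((j:ℝ)+2) := by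
    intro j
    have h1 : (m+1) * m.choose j = (m+1).choose (j+1) * (j+1) := Nat.add_one_mul_choose_eq m j
    have h2 : (m+2) * (m+1).choose (j+1) = (m+2).choose (j+2) * (j+2) :=
      Nat.add_one_mul_choose_eq (m+1) (j+1)
    have h1' : ((m:ℝ)+1) * (m.choose j : ℝ) = ((m+1).choose (j+1) : ℝ) * ((j:ℝ)+1) := by
      exact_mod_cast congrArg (Nat.cast : ℕ → ℝ) h1
    have h2' : ((m:ℝ)+2) * ((m+1).choose (j+1) : ℝ) = ((m+2).choose (j+2) : ℝ) * ((j:ℝ)+2) := by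
      exact_mod_cast congrArg (Nat.cast : ℕ → ℝ) h2
    nlinarith [h1', h2']
  have step : ∀ j ∈ Finset.range (m + 1),
      (m.choose j : ℝ) * p ^ j * (1 - p) ^ (m - j) * (1 / (((j : ℝ) + 1) * ((j : ℝ) + 2)))
      = g (j+2) / (p ^ 2 * ((m : ℝ) + 1) * ((m : ℝ) + 2)) := by
    intro j hj
    have hjm : j ≤ m := Nat.lt_succ_iff.mp (Finset.mem_range.mp hj)
    have hsub : (m + 2) - (j + 2) = m - j := by omega
    have hj1 : ((j:ℝ) + 1) ≠ 0 := by positivity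
    have hj2 : ((j:ℝ) + 2) ≠ 0 := by positivity
    have hm1 : ((m:ℝ) + 1) ≠ 0 := by positivity
    have hm2 : ((m:ℝ) + 2) ≠ 0 := by positivity
    simp only [hg, hsub]
    field_simp
    linear_combination (p ^ 2 * p ^ j * (1 - p) ^ (m - j)) * key j
  rw [Finset.sum_congr rfl step, ← Finset.sum_div]
  have hfull : ∑ k ∈ Finset.range (m + 3), g k = 1 := by
    calc ∑ k ∈ Finset.range (m + 3), g k
        = ∑ k ∈ Finset.range (m + 2 + 1), p ^ k * (1 - p) ^ (m + 2 - k) * ((m+2).choose k : ℝ) :=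
          Finset.sum_congr rfl (fun k _ => by simp only [hg]; ring)
      _ = (p + (1 - p)) ^ (m + 2) := (add_pow p (1 - p) (m + 2)).symm
      _ = 1 := by norm_num
  have hle : ∑ j ∈ Finset.range (m + 1), g (j + 2) ≤ ∑ k ∈ Finset.range (m + 3), g k := by
    rw [Finset.sum_range_succ' g (m + 2), Finset.sum_range_succ' (fun i => g (i + 1)) (m + 1)]
    have h0 := hgnonneg 0
    have h1 := hgnonneg 1
    calc ∑ j ∈ Finset.range (m + 1), g (j + 2)
        ≤ ∑ j ∈ Finset.range (m + 1), g (j + 2) + g 1 + g 0 := by linarith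
      _ = ∑ x ∈ Finset.range (m + 1), g (x + 1 + 1) + g (0 + 1) + g 0 := by norm_num
  calc (∑ j ∈ Finset.range (m + 1), g (j + 2)) / (p ^ 2 * ((m : ℝ) + 1) * ((m : ℝ) + 2))
      ≤ (∑ k ∈ Finset.range (m + 3), g k) / (p ^ 2 * ((m : ℝ) + 1) * ((m : ℝ) + 2)) :=
        by gcongr
    _ = 1 / (p ^ 2 * ((m : ℝ) + 1) * ((m : ℝ) + 2)) := by rw [hfull]
end

section
/- If N ~ Poisson(λ) with λ > 0, then for every δ ∈ (0,1), with probability at least 1 - δ we have |N + 1 - λ| ≤ 6 √(N+1) · log(2/δ). -/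
set_option maxHeartbeats 1000000

open Real

private lemma pc_exp_tsum (x : ℝ) : ∑' n : ℕ, x ^ n / n.factorial = Real.exp x := by
  rw [Real.exp_eq_exp_ℝ, NormedSpace.exp_eq_tsum_div]

private lemma pc_exp_quad {θ : ℝ} (h0 : 0 ≤ θ) (h1 : θ ≤ 1) :
    Real.exp θ ≤ 1 + θ + (3/4) * θ ^ 2 := by
  have h := Real.exp_bound (x := θ) (by rw [abs_of_nonneg h0]; exact h1) (n := 2) (by norm_num)
  rw [abs_of_nonneg h0] at h
  simp [Finset.sum_range_succ] at h
  nlinarith [le_abs_self (Real.exp θ - (1 + θ))]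

private lemma pc_exp_neg_quad {θ : ℝ} (h0 : 0 ≤ θ) :
    Real.exp (-θ) ≤ 1 - θ + θ ^ 2 / 2 := by
  have h := Real.sum_le_exp_of_nonneg h0 3
  simp [Finset.sum_range_succ] at h
  have he : Real.exp (-θ) * Real.exp θ = 1 := by rw [← Real.exp_add]; simp
  nlinarith [Real.exp_pos θ, Real.exp_pos (-θ), sq_nonneg (θ ^ 2)]

private lemma pc_chernoff (lam θ c : ℝ) (hlam : 0 < lam) (P : ℕ → Prop) [DecidablePred P]
    (h : ∀ N : ℕ, P N → 0 ≤ θ * ((N : ℝ) - c)) :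
    ∑' N : ℕ, (if P N then Real.exp (-lam) * lam ^ N / N.factorial else 0)
      ≤ Real.exp (lam * Real.exp θ - lam - θ * c) := by
  have hl0 : (0:ℝ) ≤ lam := hlam.le
  have hsum : Summable (fun N : ℕ =>
      Real.exp (-lam - θ * c) * ((lam * Real.exp θ) ^ N / N.factorial)) :=
    (Real.summable_pow_div_factorial _).mul_left _
  have hle : ∀ N : ℕ, (if P N then Real.exp (-lam) * lam ^ N / N.factorial else 0)
      ≤ Real.exp (-lam - θ * c) * ((lam * Real.exp θ) ^ N / N.factorial) := by
    intro N
    have hrw : Real.exp (-lam - θ * c) * ((lam * Real.exp θ) ^ N / N.factorial)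
        = (Real.exp (-lam) * lam ^ N / N.factorial) * Real.exp (θ * ((N:ℝ) - c)) := by
      have haux : Real.exp (-lam - θ * c) * Real.exp ((N:ℝ) * θ)
          = Real.exp (-lam) * Real.exp (θ * ((N:ℝ) - c)) := by
        rw [← Real.exp_add, ← Real.exp_add]; ring_nf
      calc Real.exp (-lam - θ * c) * ((lam * Real.exp θ) ^ N / N.factorial)
          = (Real.exp (-lam - θ * c) * Real.exp ((N:ℝ) * θ)) * (lam ^ N / N.factorial) := by
            rw [mul_pow, ← Real.exp_nat_mul]; ring
        _ = (Real.exp (-lam) * Real.exp (θ * ((N:ℝ) - c))) * (lam ^ N / N.factorial) := by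
            rw [haux]
        _ = (Real.exp (-lam) * lam ^ N / N.factorial) * Real.exp (θ * ((N:ℝ) - c)) := by ring
    rw [hrw]
    have h2 : 0 ≤ Real.exp (-lam) * lam ^ N / N.factorial :=
      div_nonneg (mul_nonneg (Real.exp_pos _).le (pow_nonneg hl0 _)) (Nat.cast_nonneg _)
    split_ifs with hP
    · have h1 : (1:ℝ) ≤ Real.exp (θ * ((N:ℝ) - c)) := Real.one_le_exp (h N hP)
      nlinarith
    · positivity
  have hsumL : Summable (fun N : ℕ =>
      if P N then Real.exp (-lam) * lam ^ N / N.factorial else 0) := by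
    apply Summable.of_nonneg_of_le _ hle hsum
    intro N
    split_ifs
    · exact div_nonneg (mul_nonneg (Real.exp_pos _).le (pow_nonneg hl0 _)) (Nat.cast_nonneg _)
    · exact le_refl 0
  calc ∑' N : ℕ, (if P N then Real.exp (-lam) * lam ^ N / N.factorial else 0)
      ≤ ∑' N : ℕ, Real.exp (-lam - θ * c) * ((lam * Real.exp θ) ^ N / N.factorial) :=
        Summable.tsum_le_tsum hle hsumL hsum
    _ = Real.exp (-lam - θ * c) * Real.exp (lam * Real.exp θ) := by
        rw [tsum_mul_left, pc_exp_tsum]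
    _ = Real.exp (lam * Real.exp θ - lam - θ * c) := by
        rw [← Real.exp_add]; ring_nf

private lemma pc_upper (lam L : ℝ) (hlam : 0 < lam) (hL : (0.6931:ℝ) < L) :
    ∑' N : ℕ, (if lam + (max (36 * L ^ 2) (6 * L * Real.sqrt lam) - 1) ≤ (N : ℝ)
      then Real.exp (-lam) * lam ^ N / N.factorial else 0) ≤ Real.exp (-L) := by
  set u : ℝ := max (36 * L ^ 2) (6 * L * Real.sqrt lam) - 1 with hu_def
  have hL0 : (0:ℝ) < L := by linarith
  have hu1 : 36 * L ^ 2 - 1 ≤ u := by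
    have := le_max_left (36 * L ^ 2) (6 * L * Real.sqrt lam); linarith
  have hu0 : 0 < u := by nlinarith
  have hkey : 3 * lam * L ≤ u ^ 2 := by
    set m : ℝ := Real.sqrt lam with hm_def
    have hm2 : m ^ 2 = lam := Real.sq_sqrt hlam.le
    have hm0 : 0 ≤ m := Real.sqrt_nonneg lam
    rcases le_or_gt 1 lam with hc | hc
    · have hm1 : 1 ≤ m := by nlinarith
      have hu2 : 6 * L * m - 1 ≤ u := by
        have := le_max_right (36 * L ^ 2) (6 * L * Real.sqrt lam); rw [← hm_def] at this
        linarith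
      have h6 : 0 < 6 * L * m - 1 := by nlinarith
      have e1 : (6 * L * m - 1) ^ 2 ≤ u ^ 2 := by nlinarith
      have e2 : 3 * m ^ 2 * L ≤ (6 * L * m - 1) ^ 2 := by
        nlinarith [mul_nonneg (mul_nonneg hL0.le (sub_nonneg.2 hm1)) hm0,
          mul_nonneg (mul_nonneg (mul_nonneg (sub_nonneg.2 hL.le) hm0) hm0) hL0.le,
          mul_nonneg (mul_nonneg (sub_nonneg.2 hL.le) hm0) hm0]
      nlinarith
    · have hp : 0 < 36 * L ^ 2 - 1 := by nlinarith
      have e1 : (36 * L ^ 2 - 1) ^ 2 ≤ u ^ 2 := by nlinarith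
      have e2 : 3 * L ≤ (36 * L ^ 2 - 1) ^ 2 := by
        nlinarith [mul_nonneg (mul_nonneg (sub_nonneg.2 hL.le) hL0.le) hL0.le,
          mul_nonneg (mul_nonneg (mul_nonneg (sub_nonneg.2 hL.le) hL0.le) hL0.le) hL0.le,
          sq_nonneg (L - 0.6931)]
      nlinarith [mul_lt_mul_of_pos_right hc hL0]
  rcases le_or_gt u (1.5 * lam) with hc | hc
  · set θ : ℝ := u / (1.5 * lam) with hθ_def
    have h15 : (0:ℝ) < 1.5 * lam := by linarith
    have hθ0 : 0 ≤ θ := div_nonneg hu0.le h15.le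
    have hθ1 : θ ≤ 1 := by rw [hθ_def, div_le_one h15]; exact hc
    have hθlam : θ * (1.5 * lam) = u := div_mul_cancel₀ _ h15.ne'
    refine le_trans (pc_chernoff lam θ (lam + u) hlam _ ?_) ?_
    · intro N hN; exact mul_nonneg hθ0 (by linarith)
    · apply Real.exp_le_exp.2
      have hexp := pc_exp_quad hθ0 hθ1
      nlinarith [mul_le_mul_of_nonneg_left hexp hlam.le, mul_pos hlam hlam,
        mul_nonneg (mul_nonneg hθ0 hθ0) hlam.le]
  · refine le_trans (pc_chernoff lam 1 (lam + u) hlam _ ?_) ?_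
    · intro N hN; nlinarith
    · apply Real.exp_le_exp.2
      have hexp : Real.exp 1 < 2.7182818286 := Real.exp_one_lt_d9
      nlinarith

private lemma pc_lower (lam L : ℝ) (hlam : 0 < lam) (hL : (0.6931:ℝ) < L)
    (hbig : 1 + 6 * L < lam) :
    ∑' N : ℕ, (if (N : ℝ) ≤ lam - min (3 * L * Real.sqrt lam) (3 * lam / 4) - 1
      then Real.exp (-lam) * lam ^ N / N.factorial else 0) ≤ Real.exp (-L) := by
  set s : ℝ := min (3 * L * Real.sqrt lam) (3 * lam / 4) with hs_def
  have hL0 : (0:ℝ) < L := by linarith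
  have hm0 : 0 ≤ Real.sqrt lam := Real.sqrt_nonneg lam
  have hm2 : Real.sqrt lam ^ 2 = lam := Real.sq_sqrt hlam.le
  have hs0 : 0 ≤ s := le_min (by positivity) (by linarith)
  set t : ℝ := s / lam with ht_def
  have ht0 : 0 ≤ t := div_nonneg hs0 hlam.le
  have htlam : t * lam = s := div_mul_cancel₀ _ hlam.ne'
  refine le_trans (pc_chernoff lam (-t) (lam - s - 1) hlam _ ?_) ?_
  · intro N hN
    exact mul_nonneg_of_nonpos_of_nonpos (neg_nonpos.2 ht0) (by linarith)
  · apply Real.exp_le_exp.2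
    have hexp := pc_exp_neg_quad ht0
    have hkey : 2 * lam * L ≤ s ^ 2 := by
      rcases min_cases (3 * L * Real.sqrt lam) (3 * lam / 4) with ⟨he, hc⟩ | ⟨he, hc⟩
      · rw [hs_def, he]
        nlinarith [mul_nonneg (mul_nonneg (sub_nonneg.2 hL.le) hL0.le) hlam.le]
      · rw [hs_def, he]
        nlinarith [mul_pos hL0 hlam]
    -- goal: lam * exp (-t) - lam - (-t) * (lam - s - 1) ≤ -L
    have h1 : lam * Real.exp (-t) ≤ lam * (1 - t + t ^ 2 / 2) :=
      mul_le_mul_of_nonneg_left hexp hlam.le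
    nlinarith [mul_nonneg ht0 hs0, mul_pos hlam hlam]

/-- If `N ~ Poisson(λ)` with `λ > 0`, then for every `δ ∈ (0,1)`, with probability at
least `1 - δ` we have `|N + 1 - λ| ≤ 6 √(N+1) log(2/δ)`. -/
theorem poisson_concentration (lam δ : ℝ) (hlam : 0 < lam) (hδ : δ ∈ Set.Ioo (0 : ℝ) 1) :
    1 - δ ≤ ∑' N : ℕ,
      if |(N : ℝ) + 1 - lam| ≤ 6 * Real.sqrt ((N : ℝ) + 1) * Real.log (2 / δ)
      then Real.exp (-lam) * lam ^ N / N.factorial else 0 := by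
  obtain ⟨hδ0, hδ1⟩ := hδ
  set L : ℝ := Real.log (2 / δ) with hL_def
  have hlog2 : (0.6931:ℝ) < Real.log 2 := lt_trans (by norm_num) Real.log_two_gt_d9
  have hL : (0.6931:ℝ) < L := by
    refine lt_of_lt_of_le hlog2 ?_
    rw [hL_def]
    apply Real.log_le_log (by norm_num)
    rw [le_div_iff₀ hδ0]; nlinarith
  have hL0 : (0:ℝ) < L := by linarith
  have hexpL : Real.exp (-L) = δ / 2 := by
    rw [hL_def, Real.exp_neg, Real.exp_log (by positivity), inv_div]
  have hp_nonneg : ∀ N : ℕ, 0 ≤ Real.exp (-lam) * lam ^ N / N.factorial := fun N =>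
    div_nonneg (mul_nonneg (Real.exp_pos _).le (pow_nonneg hlam.le _)) (Nat.cast_nonneg _)
  have hp_sum : Summable (fun N : ℕ => Real.exp (-lam) * lam ^ N / N.factorial) := by
    simpa [mul_div_assoc] using (Real.summable_pow_div_factorial lam).mul_left (Real.exp (-lam))
  have hp_tsum : ∑' N : ℕ, Real.exp (-lam) * lam ^ N / N.factorial = 1 := by
    calc ∑' N : ℕ, Real.exp (-lam) * lam ^ N / N.factorial
        = ∑' N : ℕ, Real.exp (-lam) * (lam ^ N / N.factorial) := by
          simp [mul_div_assoc]
      _ = Real.exp (-lam) * Real.exp lam := by rw [tsum_mul_left, pc_exp_tsum]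
      _ = 1 := by rw [← Real.exp_add]; simp
  -- summability of the pieces
  have hgood_sum : Summable (fun N : ℕ =>
      if |(N : ℝ) + 1 - lam| ≤ 6 * Real.sqrt ((N : ℝ) + 1) * L
      then Real.exp (-lam) * lam ^ N / N.factorial else 0) := by
    refine Summable.of_nonneg_of_le (fun N => ?_) (fun N => ?_) hp_sum
    · split_ifs; exacts [hp_nonneg N, le_refl 0]
    · split_ifs; exacts [le_refl _, hp_nonneg N]
  have hbad_sum : Summable (fun N : ℕ =>
      if |(N : ℝ) + 1 - lam| ≤ 6 * Real.sqrt ((N : ℝ) + 1) * L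
      then 0 else Real.exp (-lam) * lam ^ N / N.factorial) := by
    refine Summable.of_nonneg_of_le (fun N => ?_) (fun N => ?_) hp_sum
    · split_ifs; exacts [le_refl 0, hp_nonneg N]
    · split_ifs; exacts [hp_nonneg N, le_refl _]
  have hup_sum : Summable (fun N : ℕ =>
      if lam + (max (36 * L ^ 2) (6 * L * Real.sqrt lam) - 1) ≤ (N : ℝ)
      then Real.exp (-lam) * lam ^ N / N.factorial else 0) := by
    refine Summable.of_nonneg_of_le (fun N => ?_) (fun N => ?_) hp_sum
    · split_ifs; exacts [hp_nonneg N, le_refl 0]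
    · split_ifs; exacts [le_refl _, hp_nonneg N]
  have hlow_sum : Summable (fun N : ℕ =>
      if (N : ℝ) ≤ lam - min (3 * L * Real.sqrt lam) (3 * lam / 4) - 1
      then Real.exp (-lam) * lam ^ N / N.factorial else 0) := by
    refine Summable.of_nonneg_of_le (fun N => ?_) (fun N => ?_) hp_sum
    · split_ifs; exacts [hp_nonneg N, le_refl 0]
    · split_ifs; exacts [le_refl _, hp_nonneg N]
  have hsum_eq : (∑' N : ℕ, if |(N : ℝ) + 1 - lam| ≤ 6 * Real.sqrt ((N : ℝ) + 1) * L
        then Real.exp (-lam) * lam ^ N / N.factorial else 0)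
      + (∑' N : ℕ, if |(N : ℝ) + 1 - lam| ≤ 6 * Real.sqrt ((N : ℝ) + 1) * L
        then 0 else Real.exp (-lam) * lam ^ N / N.factorial) = 1 := by
    rw [← Summable.tsum_add hgood_sum hbad_sum, ← hp_tsum]
    exact tsum_congr fun N => by split_ifs <;> ring
  -- key threshold implications
  have hup_key : ∀ N : ℕ, 6 * Real.sqrt ((N : ℝ) + 1) * L < (N : ℝ) + 1 - lam →
      lam + (max (36 * L ^ 2) (6 * L * Real.sqrt lam) - 1) ≤ (N : ℝ) := by
    intro N h
    set x : ℝ := (N : ℝ) + 1 with hx_def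
    have hx1 : (1:ℝ) ≤ x := by
      have : (0:ℝ) ≤ (N : ℝ) := Nat.cast_nonneg N
      linarith
    have hsx : 0 < Real.sqrt x := Real.sqrt_pos.2 (by linarith)
    have hxl : 0 < x - lam := by nlinarith
    have h1 : Real.sqrt (x - lam) ≤ Real.sqrt x := Real.sqrt_le_sqrt (by linarith)
    have hy2 : Real.sqrt (x - lam) ^ 2 = x - lam := Real.sq_sqrt hxl.le
    have hy0 : 0 < Real.sqrt (x - lam) := Real.sqrt_pos.2 hxl
    have h2 : 6 * L * Real.sqrt (x - lam) < x - lam := by nlinarith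
    have h3 : 6 * L < Real.sqrt (x - lam) := by nlinarith
    have h36 : 36 * L ^ 2 < x - lam := by nlinarith
    have hsl : Real.sqrt lam ≤ Real.sqrt x := Real.sqrt_le_sqrt (by linarith)
    have h6 : 6 * L * Real.sqrt lam < x - lam := by nlinarith
    have hmax : max (36 * L ^ 2) (6 * L * Real.sqrt lam) ≤ x - lam :=
      max_le h36.le h6.le
    linarith
  have hlow_key : ∀ N : ℕ, 6 * Real.sqrt ((N : ℝ) + 1) * L < lam - ((N : ℝ) + 1) →
      (N : ℝ) ≤ lam - min (3 * L * Real.sqrt lam) (3 * lam / 4) - 1 := by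
    intro N h
    set x : ℝ := (N : ℝ) + 1 with hx_def
    have hx1 : (1:ℝ) ≤ x := by
      have : (0:ℝ) ≤ (N : ℝ) := Nat.cast_nonneg N
      linarith
    have hsx : 0 < Real.sqrt x := Real.sqrt_pos.2 (by linarith)
    rcases le_or_gt (lam / 4) x with hc | hc
    · have h4 : Real.sqrt (lam / 4) ≤ Real.sqrt x := Real.sqrt_le_sqrt hc
      have h5 : Real.sqrt (lam / 4) = Real.sqrt lam / 2 := by
        rw [Real.sqrt_div hlam.le, show (4:ℝ) = 2 ^ 2 by norm_num,
          Real.sqrt_sq (by norm_num : (0:ℝ) ≤ 2)]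
      have h7 : 3 * L * Real.sqrt lam ≤ 6 * Real.sqrt x * L := by nlinarith
      have h8 := min_le_left (3 * L * Real.sqrt lam) (3 * lam / 4)
      linarith
    · have h8 := min_le_right (3 * L * Real.sqrt lam) (3 * lam / 4)
      linarith
  -- reduce to bounding the bad sum
  suffices hbad : (∑' N : ℕ, if |(N : ℝ) + 1 - lam| ≤ 6 * Real.sqrt ((N : ℝ) + 1) * L
      then 0 else Real.exp (-lam) * lam ^ N / N.factorial) ≤ δ by linarith
  rcases le_or_gt lam (1 + 6 * L) with hsmall | hbig
  · have hptw : ∀ N : ℕ,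
        (if |(N : ℝ) + 1 - lam| ≤ 6 * Real.sqrt ((N : ℝ) + 1) * L
          then 0 else Real.exp (-lam) * lam ^ N / N.factorial)
        ≤ (if lam + (max (36 * L ^ 2) (6 * L * Real.sqrt lam) - 1) ≤ (N : ℝ)
          then Real.exp (-lam) * lam ^ N / N.factorial else 0) := by
      intro N
      by_cases h1 : |(N : ℝ) + 1 - lam| ≤ 6 * Real.sqrt ((N : ℝ) + 1) * L
      · rw [if_pos h1]
        split_ifs
        exacts [hp_nonneg N, le_refl 0]
      · rw [if_neg h1]
        rcases lt_abs.1 (not_le.1 h1) with hu | hl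
        · rw [if_pos (hup_key N hu)]
        · exfalso
          have h01 : (1:ℝ) ≤ (N:ℝ) + 1 := by linarith [Nat.cast_nonneg (α := ℝ) N]
          have hsx1 : (1:ℝ) ≤ Real.sqrt ((N:ℝ) + 1) :=
            le_trans Real.sqrt_one.symm.le (Real.sqrt_le_sqrt h01)
          nlinarith [Nat.cast_nonneg (α := ℝ) N]
    calc (∑' N : ℕ, if |(N : ℝ) + 1 - lam| ≤ 6 * Real.sqrt ((N : ℝ) + 1) * L
          then 0 else Real.exp (-lam) * lam ^ N / N.factorial)
        ≤ ∑' N : ℕ, (if lam + (max (36 * L ^ 2) (6 * L * Real.sqrt lam) - 1) ≤ (N : ℝ)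
          then Real.exp (-lam) * lam ^ N / N.factorial else 0) :=
          Summable.tsum_le_tsum hptw hbad_sum hup_sum
      _ ≤ Real.exp (-L) := pc_upper lam L hlam hL
      _ = δ / 2 := hexpL
      _ ≤ δ := by linarith
  · have hptw : ∀ N : ℕ,
        (if |(N : ℝ) + 1 - lam| ≤ 6 * Real.sqrt ((N : ℝ) + 1) * L
          then 0 else Real.exp (-lam) * lam ^ N / N.factorial)
        ≤ (if lam + (max (36 * L ^ 2) (6 * L * Real.sqrt lam) - 1) ≤ (N : ℝ)
            then Real.exp (-lam) * lam ^ N / N.factorial else 0)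
          + (if (N : ℝ) ≤ lam - min (3 * L * Real.sqrt lam) (3 * lam / 4) - 1
            then Real.exp (-lam) * lam ^ N / N.factorial else 0) := by
      intro N
      have hN := hp_nonneg N
      by_cases h1 : |(N : ℝ) + 1 - lam| ≤ 6 * Real.sqrt ((N : ℝ) + 1) * L
      · rw [if_pos h1]
        split_ifs <;> linarith
      · rw [if_neg h1]
        rcases lt_abs.1 (not_le.1 h1) with hu | hl
        · rw [if_pos (hup_key N hu)]
          split_ifs <;> linarith
        · rw [if_pos (hlow_key N (by linarith))]
          split_ifs <;> linarith
    calc (∑' N : ℕ, if |(N : ℝ) + 1 - lam| ≤ 6 * Real.sqrt ((N : ℝ) + 1) * L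
          then 0 else Real.exp (-lam) * lam ^ N / N.factorial)
        ≤ ∑' N : ℕ, ((if lam + (max (36 * L ^ 2) (6 * L * Real.sqrt lam) - 1) ≤ (N : ℝ)
            then Real.exp (-lam) * lam ^ N / N.factorial else 0)
          + (if (N : ℝ) ≤ lam - min (3 * L * Real.sqrt lam) (3 * lam / 4) - 1
            then Real.exp (-lam) * lam ^ N / N.factorial else 0)) :=
          Summable.tsum_le_tsum hptw hbad_sum (hup_sum.add hlow_sum)
      _ = (∑' N : ℕ, if lam + (max (36 * L ^ 2) (6 * L * Real.sqrt lam) - 1) ≤ (N : ℝ)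
            then Real.exp (-lam) * lam ^ N / N.factorial else 0)
          + (∑' N : ℕ, if (N : ℝ) ≤ lam - min (3 * L * Real.sqrt lam) (3 * lam / 4) - 1
            then Real.exp (-lam) * lam ^ N / N.factorial else 0) :=
          Summable.tsum_add hup_sum hlow_sum
      _ ≤ Real.exp (-L) + Real.exp (-L) :=
          add_le_add (pc_upper lam L hlam hL) (pc_lower lam L hlam hL hbig)
      _ = δ := by rw [hexpL]; ring
end

section
/- For every real p_i ∈ (0,1], positive integer n, and nonnegative integer N'_i, one has p_i · log(n p_i / (N'_i + 1)) + (N'_i + 1)/n − p_i ≤ (n p_i − (N'_i + 1))^2 / (n (N'_i + 1)). -/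
/-- For `p ∈ (0,1]`, `n ≥ 1`, `N' ≥ 0`,
`p log(n p/(N'+1)) + (N'+1)/n − p ≤ (n p − (N'+1))² / (n (N'+1))`. -/
theorem kl_term_upper_bound (p : ℝ) (hp : p ∈ Set.Ioc (0 : ℝ) 1) (n : ℕ) (hn : 0 < n)
    (N' : ℕ) :
    p * Real.log ((n : ℝ) * p / ((N' : ℝ) + 1)) + ((N' : ℝ) + 1) / (n : ℝ) - p
      ≤ ((n : ℝ) * p - ((N' : ℝ) + 1)) ^ 2 / ((n : ℝ) * ((N' : ℝ) + 1)) := by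
  obtain ⟨hp0, hp1⟩ := hp
  have hn' : (0 : ℝ) < n := by exact_mod_cast hn
  have hm : (0 : ℝ) < (N' : ℝ) + 1 := by positivity
  have hx : (0 : ℝ) < (n : ℝ) * p / ((N' : ℝ) + 1) := by positivity
  have hlog := Real.log_le_sub_one_of_pos hx
  have h1 : p * Real.log ((n : ℝ) * p / ((N' : ℝ) + 1))
      ≤ p * ((n : ℝ) * p / ((N' : ℝ) + 1) - 1) :=
    mul_le_mul_of_nonneg_left hlog hp0.le
  have h2 : p * ((n : ℝ) * p / ((N' : ℝ) + 1) - 1) + ((N' : ℝ) + 1) / (n : ℝ) - p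
      = ((n : ℝ) * p - ((N' : ℝ) + 1)) ^ 2 / ((n : ℝ) * ((N' : ℝ) + 1)) := by
    field_simp
    ring
  linarith
end

section
/- Let N_1 ~ Binomial(n_0, 1/2) for an integer n_0 ≥ 0. Then Var(log(N_1 (n_0 − N_1) + n_0 + 1)) ≥ 2 n_0 (n_0 − 1) / (n_0 + 2)^4. -/
open Finset

lemma sum_choose_mul_choose (n k : ℕ) :
    2 ^ k * ∑ j ∈ range (n + 1), n.choose j * j.choose k = n.choose k * 2 ^ n := by
  by_cases hkn : k ≤ n
  · have hsplit : range (n+1) = range k ∪ Ico k (n+1) := by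
      rw [range_eq_Ico, ← Finset.Ico_union_Ico_eq_Ico (Nat.zero_le k) (by omega : k ≤ n+1),
        range_eq_Ico]
    rw [hsplit, Finset.sum_union (by
      simp [Finset.disjoint_left]
      intro a ha h2; omega)]
    have h0 : ∑ j ∈ range k, n.choose j * j.choose k = 0 := by
      apply Finset.sum_eq_zero
      intro j hj
      rw [Nat.choose_eq_zero_of_lt (mem_range.mp hj)]
      ring
    rw [h0, zero_add]
    have h1 : ∑ j ∈ Ico k (n+1), n.choose j * j.choose k
        = n.choose k * ∑ i ∈ range (n - k + 1), (n-k).choose i := by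
      rw [Finset.mul_sum, Finset.sum_Ico_eq_sum_range]
      have : n + 1 - k = n - k + 1 := by omega
      rw [this]
      apply Finset.sum_congr rfl
      intro i hi
      rw [mem_range] at hi
      rw [Nat.choose_mul (show k ≤ k + i by omega)]
      congr 2
      omega
    rw [h1, Nat.sum_range_choose]
    have : 2 ^ k * (n.choose k * 2 ^ (n - k)) = n.choose k * (2 ^ k * 2 ^ (n-k)) := by ring
    rw [this, ← pow_add]
    congr 2
    omega
  · rw [Nat.choose_eq_zero_of_lt (by omega), Finset.sum_eq_zero, Nat.mul_zero, Nat.zero_mul]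
    intro j hj
    rw [mem_range] at hj
    rw [Nat.choose_eq_zero_of_lt (show j < k by omega)]
    ring

lemma cast_choose_one (j : ℕ) : (j.choose 1 : ℝ) = j := by
  rw [Nat.choose_one_right]

lemma cast_choose_two (j : ℕ) : (j.choose 2 : ℝ) = j * (j - 1) / 2 := by
  induction j with
  | zero => simp
  | succ j ih =>
      rw [Nat.choose_succ_succ]
      push_cast
      rw [Nat.choose_one_right] at *
      push_cast
      rw [ih]
      ring

lemma cast_choose_three (j : ℕ) : (j.choose 3 : ℝ) = j * (j - 1) * (j - 2) / 6 := by
  induction j with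
  | zero => simp
  | succ j ih =>
      rw [Nat.choose_succ_succ]
      push_cast
      rw [ih, cast_choose_two]
      ring

lemma cast_choose_four (j : ℕ) : (j.choose 4 : ℝ) = j * (j - 1) * (j - 2) * (j - 3) / 24 := by
  induction j with
  | zero => simp
  | succ j ih =>
      rw [Nat.choose_succ_succ]
      push_cast
      rw [ih, cast_choose_three]
      ring

lemma sumT0 (n : ℕ) : ∑ j ∈ Finset.range (n+1), (n.choose j : ℝ) = 2 ^ n := by
  exact_mod_cast congrArg (Nat.cast : ℕ → ℝ) (Nat.sum_range_choose n)

lemma sumT1 (n : ℕ) : ∑ j ∈ Finset.range (n+1), (n.choose j : ℝ) * j = n * 2 ^ n / 2 := by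
  have h := sum_choose_mul_choose n 1
  have h' : (2:ℝ)^1 * ∑ j ∈ range (n+1), (n.choose j : ℝ) * (j.choose 1 : ℝ)
      = (n.choose 1 : ℝ) * 2^n := by exact_mod_cast h
  have e : ∀ j ∈ range (n+1), (n.choose j : ℝ) * (j:ℝ)
      = (n.choose j:ℝ) * (j.choose 1:ℝ) := by
    intro j _; rw [cast_choose_one]
  rw [Finset.sum_congr rfl e]
  rw [cast_choose_one] at h'
  linarith

lemma sumT2 (n : ℕ) : ∑ j ∈ Finset.range (n+1), (n.choose j : ℝ) * ((j:ℝ) * ((j:ℝ)-1))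
    = n * ((n:ℝ)-1) * 2 ^ n / 4 := by
  have h := sum_choose_mul_choose n 2
  have h' : (2:ℝ)^2 * ∑ j ∈ range (n+1), (n.choose j : ℝ) * (j.choose 2 : ℝ)
      = (n.choose 2 : ℝ) * 2^n := by exact_mod_cast h
  have e : ∀ j ∈ range (n+1), (n.choose j : ℝ) * ((j:ℝ) * ((j:ℝ)-1))
      = 2 * ((n.choose j:ℝ) * (j.choose 2:ℝ)) := by
    intro j _; rw [cast_choose_two]; ring
  rw [Finset.sum_congr rfl e, ← Finset.mul_sum]
  rw [cast_choose_two] at h'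
  linarith

lemma sumT3 (n : ℕ) : ∑ j ∈ Finset.range (n+1),
      (n.choose j : ℝ) * ((j:ℝ) * ((j:ℝ)-1) * ((j:ℝ)-2))
    = n * ((n:ℝ)-1) * ((n:ℝ)-2) * 2 ^ n / 8 := by
  have h := sum_choose_mul_choose n 3
  have h' : (2:ℝ)^3 * ∑ j ∈ range (n+1), (n.choose j : ℝ) * (j.choose 3 : ℝ)
      = (n.choose 3 : ℝ) * 2^n := by exact_mod_cast h
  have e : ∀ j ∈ range (n+1), (n.choose j : ℝ) * ((j:ℝ) * ((j:ℝ)-1) * ((j:ℝ)-2))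
      = 6 * ((n.choose j:ℝ) * (j.choose 3:ℝ)) := by
    intro j _; rw [cast_choose_three]; ring
  rw [Finset.sum_congr rfl e, ← Finset.mul_sum]
  rw [cast_choose_three] at h'
  linarith

lemma sumT4 (n : ℕ) : ∑ j ∈ Finset.range (n+1),
      (n.choose j : ℝ) * ((j:ℝ) * ((j:ℝ)-1) * ((j:ℝ)-2) * ((j:ℝ)-3))
    = n * ((n:ℝ)-1) * ((n:ℝ)-2) * ((n:ℝ)-3) * 2 ^ n / 16 := by
  have h := sum_choose_mul_choose n 4
  have h' : (2:ℝ)^4 * ∑ j ∈ range (n+1), (n.choose j : ℝ) * (j.choose 4 : ℝ)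
      = (n.choose 4 : ℝ) * 2^n := by exact_mod_cast h
  have e : ∀ j ∈ range (n+1), (n.choose j : ℝ)
        * ((j:ℝ) * ((j:ℝ)-1) * ((j:ℝ)-2) * ((j:ℝ)-3))
      = 24 * ((n.choose j:ℝ) * (j.choose 4:ℝ)) := by
    intro j _; rw [cast_choose_four]; ring
  rw [Finset.sum_congr rfl e, ← Finset.mul_sum]
  rw [cast_choose_four] at h'
  linarith

lemma var_eq_double (s : Finset ℕ) (p g : ℕ → ℝ) (hp : ∑ j ∈ s, p j = 1) :
    ∑ j ∈ s, p j * (g j)^2 - (∑ j ∈ s, p j * g j)^2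
    = (1/2) * ∑ j ∈ s, ∑ k ∈ s, p j * p k * (g j - g k)^2 := by
  have inner : ∀ j ∈ s, ∑ k ∈ s, p j * p k * (g j - g k)^2
      = (p j * (g j)^2) * (∑ k ∈ s, p k)
        - (2 * (p j * g j)) * (∑ k ∈ s, p k * g k)
        + p j * (∑ k ∈ s, p k * (g k)^2) := by
    intro j _
    rw [Finset.mul_sum, Finset.mul_sum, Finset.mul_sum, ← Finset.sum_sub_distrib,
      ← Finset.sum_add_distrib]
    apply Finset.sum_congr rfl
    intro k _
    ring
  rw [Finset.sum_congr rfl inner, hp]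
  simp only [mul_one]
  rw [Finset.sum_add_distrib, Finset.sum_sub_distrib, ← Finset.sum_mul, ← Finset.sum_mul,
    ← Finset.mul_sum, hp]
  ring

lemma log_diff_ge (b y z : ℝ) (hz : 0 < z) (hzy : z ≤ y) (hyb : y ≤ b) :
    (y - z) / b ≤ Real.log y - Real.log z := by
  have hy : 0 < y := lt_of_lt_of_le hz hzy
  have hb : 0 < b := lt_of_lt_of_le hy hyb
  have h1 : Real.log (z/y) ≤ z/y - 1 := Real.log_le_sub_one_of_pos (by positivity)
  rw [Real.log_div (ne_of_gt hz) (ne_of_gt hy)] at h1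
  have h2 : (y - z)/y ≤ Real.log y - Real.log z := by
    have : z/y - 1 = -((y - z)/y) := by field_simp; ring
    rw [this] at h1
    linarith
  have h3 : (y - z)/b ≤ (y - z)/y := by
    apply div_le_div_of_nonneg_left (by linarith) hy hyb
  linarith

lemma sq_log_diff (b y z : ℝ) (hb : 0 < b) (hz : 0 < z) (hy : 0 < y)
    (hzb : z ≤ b) (hyb : y ≤ b) :
    ((y - z)/b)^2 ≤ (Real.log y - Real.log z)^2 := by
  rcases le_total z y with h | h
  · have h1 := log_diff_ge b y z hz h hyb
    have h2 : 0 ≤ (y - z)/b := div_nonneg (by linarith) (le_of_lt hb)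
    exact pow_le_pow_left₀ h2 h1 2
  · have h1 := log_diff_ge b z y hy h hzb
    have h2 : 0 ≤ (z - y)/b := div_nonneg (by linarith) (le_of_lt hb)
    have h3 := pow_le_pow_left₀ h2 h1 2
    calc ((y - z)/b)^2 = ((z - y)/b)^2 := by ring
      _ ≤ (Real.log z - Real.log y)^2 := h3
      _ = (Real.log y - Real.log z)^2 := by ring

lemma sum_y (n : ℕ) :
    ∑ j ∈ Finset.range (n+1), (n.choose j : ℝ) * ((j:ℝ)*((n:ℝ)-j) + n + 1)
    = ((n:ℝ)*((n:ℝ)-1)/4 + n + 1) * 2 ^ n := by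
  have e : ∀ j ∈ Finset.range (n+1),
      (n.choose j : ℝ) * ((j:ℝ)*((n:ℝ)-j) + n + 1)
      = (-1) * ((n.choose j:ℝ) * ((j:ℝ)*((j:ℝ)-1)))
        + ((n:ℝ)-1) * ((n.choose j:ℝ) * (j:ℝ))
        + ((n:ℝ)+1) * (n.choose j:ℝ) := by
    intro j _; ring
  rw [Finset.sum_congr rfl e]
  simp only [Finset.sum_add_distrib, ← Finset.mul_sum]
  rw [sumT2, sumT1, sumT0]
  ring

lemma sum_y2 (n : ℕ) :
    ∑ j ∈ Finset.range (n+1), (n.choose j : ℝ) * ((j:ℝ)*((n:ℝ)-j) + n + 1)^2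
    = ((n:ℝ)*((n:ℝ)-1)/8 + ((n:ℝ)*((n:ℝ)-1)/4 + n + 1)^2) * 2 ^ n := by
  have e : ∀ j ∈ Finset.range (n+1),
      (n.choose j : ℝ) * ((j:ℝ)*((n:ℝ)-j) + n + 1)^2
      = 1 * ((n.choose j:ℝ) * ((j:ℝ)*((j:ℝ)-1)*((j:ℝ)-2)*((j:ℝ)-3)))
        + (6-2*(n:ℝ)) * ((n.choose j:ℝ) * ((j:ℝ)*((j:ℝ)-1)*((j:ℝ)-2)))
        + ((n:ℝ)^2-8*(n:ℝ)+5) * ((n.choose j:ℝ) * ((j:ℝ)*((j:ℝ)-1)))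
        + (3*(n:ℝ)^2-2*(n:ℝ)-1) * ((n.choose j:ℝ) * (j:ℝ))
        + ((n:ℝ)+1)^2 * (n.choose j:ℝ) := by
    intro j _; ring
  rw [Finset.sum_congr rfl e]
  simp only [Finset.sum_add_distrib, ← Finset.mul_sum]
  rw [sumT4, sumT3, sumT2, sumT1, sumT0]
  ring

lemma main_aux (n : ℕ) (b V : ℝ) (p yv : ℕ → ℝ) (hb : 0 < b)
    (hp1 : ∑ j ∈ Finset.range (n+1), p j = 1)
    (hpnn : ∀ j ∈ Finset.range (n+1), 0 ≤ p j)
    (hylb : ∀ j ∈ Finset.range (n+1), 0 < yv j)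
    (hyub : ∀ j ∈ Finset.range (n+1), yv j ≤ b)
    (hvar : ∑ j ∈ Finset.range (n+1), p j * (yv j)^2
      - (∑ j ∈ Finset.range (n+1), p j * yv j)^2 = V) :
    V / b^2 ≤ ∑ j ∈ Finset.range (n+1), p j * (Real.log (yv j))^2
      - (∑ j ∈ Finset.range (n+1), p j * Real.log (yv j))^2 := by
  rw [var_eq_double _ _ _ hp1]
  rw [var_eq_double _ _ _ hp1] at hvar
  rw [← hvar]
  have key : (∑ j ∈ Finset.range (n+1), ∑ k ∈ Finset.range (n+1),
        p j * p k * (yv j - yv k)^2) / b^2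
      ≤ ∑ j ∈ Finset.range (n+1), ∑ k ∈ Finset.range (n+1),
        p j * p k * (Real.log (yv j) - Real.log (yv k))^2 := by
    rw [Finset.sum_div]
    apply Finset.sum_le_sum
    intro j hj
    rw [Finset.sum_div]
    apply Finset.sum_le_sum
    intro k hk
    have hs := sq_log_diff b (yv j) (yv k) hb (hylb k hk) (hylb j hj)
      (hyub k hk) (hyub j hj)
    have hpp : 0 ≤ p j * p k := mul_nonneg (hpnn j hj) (hpnn k hk)
    calc p j * p k * (yv j - yv k)^2 / b^2
        = p j * p k * (((yv j - yv k)/b)^2) := by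
          field_simp
      _ ≤ p j * p k * (Real.log (yv j) - Real.log (yv k))^2 :=
          mul_le_mul_of_nonneg_left hs hpp
  have hrw : (1/2 * ∑ j ∈ Finset.range (n+1), ∑ k ∈ Finset.range (n+1),
        p j * p k * (yv j - yv k)^2) / b^2
      = 1/2 * ((∑ j ∈ Finset.range (n+1), ∑ k ∈ Finset.range (n+1),
        p j * p k * (yv j - yv k)^2) / b^2) := by ring
  rw [hrw]
  linarith

/-- If `N₁ ~ Binomial(n₀, 1/2)`, then
`Var(log(N₁(n₀ − N₁) + n₀ + 1)) ≥ 2 n₀ (n₀ − 1) / (n₀ + 2)⁴`. -/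
theorem variance_log_binomial_prod_ge (n₀ : ℕ) :
    2 * (n₀ : ℝ) * ((n₀ : ℝ) - 1) / ((n₀ : ℝ) + 2) ^ 4
    ≤ (∑ j ∈ Finset.range (n₀ + 1),
        (n₀.choose j : ℝ) * (1 / 2) ^ n₀
          * (Real.log ((j : ℝ) * ((n₀ : ℝ) - j) + (n₀ : ℝ) + 1)) ^ 2)
      - (∑ j ∈ Finset.range (n₀ + 1),
        (n₀.choose j : ℝ) * (1 / 2) ^ n₀
          * Real.log ((j : ℝ) * ((n₀ : ℝ) - j) + (n₀ : ℝ) + 1)) ^ 2 := by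
  have hq : (2:ℝ)^n₀ * (1/2)^n₀ = 1 := by
    rw [← mul_pow]; norm_num
  have hb : (0:ℝ) < ((n₀:ℝ)+2)^2/4 := by positivity
  have hp1 : ∑ j ∈ Finset.range (n₀+1), (n₀.choose j : ℝ) * (1/2)^n₀ = 1 := by
    rw [← Finset.sum_mul, sumT0, hq]
  have hpnn : ∀ j ∈ Finset.range (n₀+1), (0:ℝ) ≤ (n₀.choose j : ℝ) * (1/2)^n₀ := by
    intro j _; positivity
  have hylb : ∀ j ∈ Finset.range (n₀+1),
      (0:ℝ) < (j:ℝ)*((n₀:ℝ)-j) + (n₀:ℝ) + 1 := by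
    intro j hj
    rw [Finset.mem_range] at hj
    have hjn : (j:ℝ) ≤ (n₀:ℝ) := by exact_mod_cast Nat.lt_succ_iff.mp hj
    have h0 : (0:ℝ) ≤ (j:ℝ)*((n₀:ℝ)-j) :=
      mul_nonneg (by positivity) (by linarith)
    have : (0:ℝ) ≤ (n₀:ℝ) := Nat.cast_nonneg n₀
    linarith
  have hyub : ∀ j ∈ Finset.range (n₀+1),
      (j:ℝ)*((n₀:ℝ)-j) + (n₀:ℝ) + 1 ≤ ((n₀:ℝ)+2)^2/4 := by
    intro j _
    nlinarith [sq_nonneg ((n₀:ℝ) - 2*(j:ℝ))]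
  have h1 : ∑ j ∈ Finset.range (n₀+1),
      ((n₀.choose j : ℝ) * (1/2)^n₀) * ((j:ℝ)*((n₀:ℝ)-j) + (n₀:ℝ) + 1)
      = (n₀:ℝ)*((n₀:ℝ)-1)/4 + (n₀:ℝ) + 1 := by
    have e : ∀ j ∈ Finset.range (n₀+1),
        ((n₀.choose j : ℝ) * (1/2)^n₀) * ((j:ℝ)*((n₀:ℝ)-j) + (n₀:ℝ) + 1)
        = ((n₀.choose j : ℝ) * ((j:ℝ)*((n₀:ℝ)-j) + (n₀:ℝ) + 1)) * (1/2)^n₀ := by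
      intro j _; ring
    rw [Finset.sum_congr rfl e, ← Finset.sum_mul, sum_y, mul_assoc, hq, mul_one]
  have h2 : ∑ j ∈ Finset.range (n₀+1),
      ((n₀.choose j : ℝ) * (1/2)^n₀) * ((j:ℝ)*((n₀:ℝ)-j) + (n₀:ℝ) + 1)^2
      = (n₀:ℝ)*((n₀:ℝ)-1)/8 + ((n₀:ℝ)*((n₀:ℝ)-1)/4 + (n₀:ℝ) + 1)^2 := by
    have e : ∀ j ∈ Finset.range (n₀+1),
        ((n₀.choose j : ℝ) * (1/2)^n₀) * ((j:ℝ)*((n₀:ℝ)-j) + (n₀:ℝ) + 1)^2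
        = ((n₀.choose j : ℝ) * ((j:ℝ)*((n₀:ℝ)-j) + (n₀:ℝ) + 1)^2) * (1/2)^n₀ := by
      intro j _; ring
    rw [Finset.sum_congr rfl e, ← Finset.sum_mul, sum_y2, mul_assoc, hq, mul_one]
  have hvar : ∑ j ∈ Finset.range (n₀+1),
      ((n₀.choose j : ℝ) * (1/2)^n₀) * ((j:ℝ)*((n₀:ℝ)-j) + (n₀:ℝ) + 1)^2
      - (∑ j ∈ Finset.range (n₀+1),
        ((n₀.choose j : ℝ) * (1/2)^n₀) * ((j:ℝ)*((n₀:ℝ)-j) + (n₀:ℝ) + 1))^2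
      = (n₀:ℝ)*((n₀:ℝ)-1)/8 := by
    rw [h1, h2]; ring
  have main := main_aux n₀ (((n₀:ℝ)+2)^2/4) ((n₀:ℝ)*((n₀:ℝ)-1)/8)
    (fun j => (n₀.choose j : ℝ) * (1/2)^n₀)
    (fun j => (j:ℝ)*((n₀:ℝ)-j) + (n₀:ℝ) + 1)
    hb hp1 hpnn hylb hyub hvar
  have heq : 2 * (n₀ : ℝ) * ((n₀ : ℝ) - 1) / ((n₀ : ℝ) + 2) ^ 4
      = ((n₀:ℝ)*((n₀:ℝ)-1)/8) / (((n₀:ℝ)+2)^2/4)^2 := by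
    have h0 : ((n₀:ℝ)+2) ≠ 0 := by positivity
    field_simp
    ring
  rw [heq]
  exact main
end

section
/- Let p be the uniform distribution over [k] with k even, and let p̂¹ be the Laplace add-1 estimator computed from n ≥ 10k i.i.d. samples of p. Then Var(KL(p ‖ p̂¹)) ≥ k/(32 n^2). -/
open MeasureTheory ProbabilityTheory Finset

namespace VKL

variable {K n : ℕ}

def ee (j : Fin K) : Fin (2*K) := ⟨j.1, by omega⟩
def oo (j : Fin K) : Fin (2*K) := ⟨K + j.1, by omega⟩
def sg (i : Fin (2*K)) : Fin (2*K) :=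
  ⟨if i.1 < K then i.1 + K else i.1 - K, by have := i.2; split <;> omega⟩

@[simp] lemma ee_val (j : Fin K) : (ee j).1 = j.1 := rfl
@[simp] lemma oo_val (j : Fin K) : (oo j).1 = K + j.1 := rfl
lemma sg_val (i : Fin (2*K)) : (sg i).1 = if i.1 < K then i.1 + K else i.1 - K := rfl

lemma sg_sg (i : Fin (2*K)) : sg (sg i) = i := by
  have h2 := i.2
  apply Fin.ext
  rw [sg_val, sg_val]
  split <;> split <;> omega

lemma sg_invol : Function.Involutive (sg (K := K)) := sg_sg

lemma sg_ee (j : Fin K) : sg (ee j) = oo j := by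
  apply Fin.ext; rw [sg_val]; have := j.2; simp only [ee_val, oo_val]
  show (if (j.1:ℕ) < K then j.1 + K else j.1 - K) = K + j.1
  rw [if_pos this]; omega

lemma sg_oo (j : Fin K) : sg (oo j) = ee j := by
  apply Fin.ext; rw [sg_val]; have := j.2; simp only [ee_val, oo_val]
  show (if K + (j.1:ℕ) < K then K + j.1 + K else K + j.1 - K) = j.1
  rw [if_neg (by omega)]; omega

lemma ee_ne_oo (j l : Fin K) : ee j ≠ oo l := by
  intro h
  have := congrArg Fin.val h
  have := j.2; have := l.2
  simp only [ee_val, oo_val] at *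
  omega

lemma ee_inj {j l : Fin K} (h : ee j = ee l) : j = l := by
  have := congrArg Fin.val h; exact Fin.ext this

lemma oo_inj {j l : Fin K} (h : oo j = oo l) : j = l := by
  have := congrArg Fin.val h; simp only [oo_val] at this; exact Fin.ext (by omega)

lemma sg_eq_ee_iff (j : Fin K) (x : Fin (2*K)) : sg x = ee j ↔ x = oo j := by
  constructor
  · intro h; have := congrArg sg h; rwa [sg_sg, sg_ee] at this
  · rintro rfl; exact sg_oo j

lemma sg_eq_oo_iff (j : Fin K) (x : Fin (2*K)) : sg x = oo j ↔ x = ee j := by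
  constructor
  · intro h; have := congrArg sg h; rwa [sg_sg, sg_oo] at this
  · rintro rfl; exact sg_ee j

lemma mem_pair_cases (x : Fin (2*K)) : ∃ j : Fin K, x = ee j ∨ x = oo j := by
  have h2 := x.2
  by_cases h : x.1 < K
  · exact ⟨⟨x.1, h⟩, Or.inl (Fin.ext rfl)⟩
  · exact ⟨⟨x.1 - K, by omega⟩, Or.inr (Fin.ext (by simp only [oo_val]; omega))⟩

lemma sg_pair_mem_iff (j : Fin K) (x : Fin (2*K)) :
    (sg x = ee j ∨ sg x = oo j) ↔ (x = ee j ∨ x = oo j) := by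
  rw [sg_eq_ee_iff, sg_eq_oo_iff, or_comm]

/-! ### The maps on the sample space -/

/-- global flip on first `n/2` coordinates -/
def TT (ω : Fin n → Fin (2*K)) : Fin n → Fin (2*K) :=
  fun t => if t.1 < n/2 then sg (ω t) else ω t

/-- flip of pair `l` values on the second-half coordinates -/
def UU (l : Fin K) (ω : Fin n → Fin (2*K)) : Fin n → Fin (2*K) :=
  fun t => if (¬ t.1 < n/2) ∧ (ω t = ee l ∨ ω t = oo l) then sg (ω t) else ω t

/-- flip of pair `j` value at single coordinate `t0` -/
def VV (j : Fin K) (t0 : Fin n) (ω : Fin n → Fin (2*K)) : Fin n → Fin (2*K) :=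
  fun t => if t = t0 ∧ (ω t = ee j ∨ ω t = oo j) then sg (ω t) else ω t

lemma TT_apply (ω : Fin n → Fin (2*K)) (t : Fin n) :
    TT ω t = if t.1 < n/2 then sg (ω t) else ω t := rfl

lemma UU_apply (l : Fin K) (ω : Fin n → Fin (2*K)) (t : Fin n) :
    UU l ω t = if (¬ t.1 < n/2) ∧ (ω t = ee l ∨ ω t = oo l) then sg (ω t) else ω t := rfl

lemma VV_apply (j : Fin K) (t0 : Fin n) (ω : Fin n → Fin (2*K)) (t : Fin n) :
    VV j t0 ω t = if t = t0 ∧ (ω t = ee j ∨ ω t = oo j) then sg (ω t) else ω t := rfl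

lemma TT_invol : Function.Involutive (TT (K := K) (n := n)) := by
  intro ω; funext t
  by_cases h : t.1 < n/2
  · have h1 : TT ω t = sg (ω t) := by rw [TT_apply, if_pos h]
    rw [TT_apply (TT ω) t, if_pos h, h1, sg_sg]
  · have h1 : TT ω t = ω t := by rw [TT_apply, if_neg h]
    rw [TT_apply (TT ω) t, if_neg h, h1]

lemma UU_invol (l : Fin K) : Function.Involutive (UU (K := K) (n := n) l) := by
  intro ω; funext t
  by_cases h : (¬ t.1 < n/2) ∧ (ω t = ee l ∨ ω t = oo l)
  · have h1 : UU l ω t = sg (ω t) := by rw [UU_apply, if_pos h]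
    have h2 : (¬ t.1 < n/2) ∧ (UU l ω t = ee l ∨ UU l ω t = oo l) := by
      refine ⟨h.1, ?_⟩; rw [h1, sg_pair_mem_iff]; exact h.2
    rw [UU_apply l (UU l ω) t, if_pos h2, h1, sg_sg]
  · have h1 : UU l ω t = ω t := by rw [UU_apply, if_neg h]
    rw [UU_apply l (UU l ω) t, h1, if_neg h]

lemma VV_invol (j : Fin K) (t0 : Fin n) : Function.Involutive (VV (K := K) (n := n) j t0) := by
  intro ω; funext t
  by_cases h : t = t0 ∧ (ω t = ee j ∨ ω t = oo j)
  · have h1 : VV j t0 ω t = sg (ω t) := by rw [VV_apply, if_pos h]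
    have h2 : t = t0 ∧ (VV j t0 ω t = ee j ∨ VV j t0 ω t = oo j) := by
      refine ⟨h.1, ?_⟩; rw [h1, sg_pair_mem_iff]; exact h.2
    rw [VV_apply j t0 (VV j t0 ω) t, if_pos h2, h1, sg_sg]
  · have h1 : VV j t0 ω t = ω t := by rw [VV_apply, if_neg h]
    rw [VV_apply j t0 (VV j t0 ω) t, h1, if_neg h]

/-! ### Counts -/

def c00 (j : Fin K) (ω : Fin n → Fin (2*K)) : ℕ :=
  (univ.filter fun t => t.1 < n/2 ∧ ω t = ee j).card
def c01 (j : Fin K) (ω : Fin n → Fin (2*K)) : ℕ :=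
  (univ.filter fun t => t.1 < n/2 ∧ ω t = oo j).card
def c10 (j : Fin K) (ω : Fin n → Fin (2*K)) : ℕ :=
  (univ.filter fun t => ¬ t.1 < n/2 ∧ ω t = ee j).card
def c11 (j : Fin K) (ω : Fin n → Fin (2*K)) : ℕ :=
  (univ.filter fun t => ¬ t.1 < n/2 ∧ ω t = oo j).card

lemma c00_TT (j : Fin K) (ω : Fin n → Fin (2*K)) : c00 j (TT ω) = c01 j ω := by
  unfold c00 c01
  congr 1
  apply Finset.filter_congr
  intro t _
  constructor
  · rintro ⟨h1, h2⟩
    refine ⟨h1, ?_⟩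
    rw [TT_apply, if_pos h1, sg_eq_ee_iff] at h2; exact h2
  · rintro ⟨h1, h2⟩
    refine ⟨h1, ?_⟩
    rw [TT_apply, if_pos h1, sg_eq_ee_iff]; exact h2

lemma c01_TT (j : Fin K) (ω : Fin n → Fin (2*K)) : c01 j (TT ω) = c00 j ω := by
  unfold c00 c01
  congr 1
  apply Finset.filter_congr
  intro t _
  constructor
  · rintro ⟨h1, h2⟩
    refine ⟨h1, ?_⟩
    rw [TT_apply, if_pos h1, sg_eq_oo_iff] at h2; exact h2
  · rintro ⟨h1, h2⟩
    refine ⟨h1, ?_⟩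
    rw [TT_apply, if_pos h1, sg_eq_oo_iff]; exact h2

lemma c10_TT (j : Fin K) (ω : Fin n → Fin (2*K)) : c10 j (TT ω) = c10 j ω := by
  unfold c10
  congr 1
  apply Finset.filter_congr
  intro t _
  constructor
  · rintro ⟨h1, h2⟩
    refine ⟨h1, ?_⟩
    rwa [TT_apply, if_neg h1] at h2
  · rintro ⟨h1, h2⟩
    refine ⟨h1, ?_⟩
    rwa [TT_apply, if_neg h1]

lemma c11_TT (j : Fin K) (ω : Fin n → Fin (2*K)) : c11 j (TT ω) = c11 j ω := by
  unfold c11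
  congr 1
  apply Finset.filter_congr
  intro t _
  constructor
  · rintro ⟨h1, h2⟩
    refine ⟨h1, ?_⟩
    rwa [TT_apply, if_neg h1] at h2
  · rintro ⟨h1, h2⟩
    refine ⟨h1, ?_⟩
    rwa [TT_apply, if_neg h1]



lemma pair_ne_of_ne {j l : Fin K} (hjl : j ≠ l) :
    ee j ≠ ee l ∧ ee j ≠ oo l ∧ oo j ≠ oo l ∧ oo j ≠ ee l :=
  ⟨fun h => hjl (ee_inj h), ee_ne_oo j l, fun h => hjl (oo_inj h), (ee_ne_oo l j).symm⟩

lemma UU_pos_half (l : Fin K) (ω : Fin n → Fin (2*K)) {t : Fin n} (ht : t.1 < n/2) :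
    UU l ω t = ω t := by
  rw [UU_apply, if_neg]; intro hc; exact hc.1 ht

lemma c00_UU (j l : Fin K) (ω : Fin n → Fin (2*K)) : c00 j (UU l ω) = c00 j ω := by
  unfold c00; congr 1; apply Finset.filter_congr; intro t _
  constructor
  · rintro ⟨h1, h2⟩; rw [UU_pos_half l ω h1] at h2; exact ⟨h1, h2⟩
  · rintro ⟨h1, h2⟩; rw [UU_pos_half l ω h1]; exact ⟨h1, h2⟩

lemma c01_UU (j l : Fin K) (ω : Fin n → Fin (2*K)) : c01 j (UU l ω) = c01 j ω := by
  unfold c01; congr 1; apply Finset.filter_congr; intro t _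
  constructor
  · rintro ⟨h1, h2⟩; rw [UU_pos_half l ω h1] at h2; exact ⟨h1, h2⟩
  · rintro ⟨h1, h2⟩; rw [UU_pos_half l ω h1]; exact ⟨h1, h2⟩

lemma UU_eq_iff_of_ne {j l : Fin K} (hjl : j ≠ l) (ω : Fin n → Fin (2*K)) (t : Fin n)
    (v : Fin (2*K)) (hv : v = ee j ∨ v = oo j) : (UU l ω t = v ↔ ω t = v) := by
  obtain ⟨d1, d2, d3, d4⟩ := pair_ne_of_ne hjl
  rw [UU_apply]
  by_cases hc : (¬ t.1 < n/2) ∧ (ω t = ee l ∨ ω t = oo l)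
  · rw [if_pos hc]
    constructor
    · intro h
      exfalso
      rcases hc.2 with h2 | h2 <;> rw [h2] at h
      · rw [sg_ee] at h
        rcases hv with rfl | rfl
        · exact d2 h.symm
        · exact d3 h.symm
      · rw [sg_oo] at h
        rcases hv with rfl | rfl
        · exact d1 h.symm
        · exact d4 h.symm
    · intro h
      exfalso
      rw [h] at hc
      rcases hc.2 with h2 | h2 <;> rcases hv with rfl | rfl
      · exact d1 h2
      · exact d4 h2
      · exact d2 h2
      · exact d3 h2
  · rw [if_neg hc]

lemma c10_UU_ne {j l : Fin K} (hjl : j ≠ l) (ω : Fin n → Fin (2*K)) :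
    c10 j (UU l ω) = c10 j ω := by
  unfold c10; congr 1; apply Finset.filter_congr; intro t _
  rw [UU_eq_iff_of_ne hjl ω t (ee j) (Or.inl rfl)]

lemma c11_UU_ne {j l : Fin K} (hjl : j ≠ l) (ω : Fin n → Fin (2*K)) :
    c11 j (UU l ω) = c11 j ω := by
  unfold c11; congr 1; apply Finset.filter_congr; intro t _
  rw [UU_eq_iff_of_ne hjl ω t (oo j) (Or.inr rfl)]

lemma UU_eq_ee_iff_self (l : Fin K) (ω : Fin n → Fin (2*K)) (t : Fin n) (ht : ¬ t.1 < n/2) :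
    (UU l ω t = ee l ↔ ω t = oo l) := by
  rw [UU_apply]
  by_cases hc : (¬ t.1 < n/2) ∧ (ω t = ee l ∨ ω t = oo l)
  · rw [if_pos hc, sg_eq_ee_iff]
  · rw [if_neg hc]
    constructor
    · intro h; exact absurd ⟨ht, Or.inl h⟩ hc
    · intro h; exact absurd ⟨ht, Or.inr h⟩ hc

lemma UU_eq_oo_iff_self (l : Fin K) (ω : Fin n → Fin (2*K)) (t : Fin n) (ht : ¬ t.1 < n/2) :
    (UU l ω t = oo l ↔ ω t = ee l) := by
  rw [UU_apply]
  by_cases hc : (¬ t.1 < n/2) ∧ (ω t = ee l ∨ ω t = oo l)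
  · rw [if_pos hc, sg_eq_oo_iff]
  · rw [if_neg hc]
    constructor
    · intro h; exact absurd ⟨ht, Or.inr h⟩ hc
    · intro h; exact absurd ⟨ht, Or.inl h⟩ hc

lemma c10_UU_self (l : Fin K) (ω : Fin n → Fin (2*K)) : c10 l (UU l ω) = c11 l ω := by
  unfold c10 c11; congr 1; apply Finset.filter_congr; intro t _
  constructor
  · rintro ⟨h1, h2⟩; exact ⟨h1, (UU_eq_ee_iff_self l ω t h1).mp h2⟩
  · rintro ⟨h1, h2⟩; exact ⟨h1, (UU_eq_ee_iff_self l ω t h1).mpr h2⟩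

lemma c11_UU_self (l : Fin K) (ω : Fin n → Fin (2*K)) : c11 l (UU l ω) = c10 l ω := by
  unfold c10 c11; congr 1; apply Finset.filter_congr; intro t _
  constructor
  · rintro ⟨h1, h2⟩; exact ⟨h1, (UU_eq_oo_iff_self l ω t h1).mp h2⟩
  · rintro ⟨h1, h2⟩; exact ⟨h1, (UU_eq_oo_iff_self l ω t h1).mpr h2⟩

/-! ### Indicators -/

/-- pair-membership indicator at value level -/
def bvv (j : Fin K) (v : Fin (2*K)) : ℝ := if v = ee j ∨ v = oo j then 1 else 0
/-- signed pair indicator at value level -/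
def epsvv (j : Fin K) (v : Fin (2*K)) : ℝ :=
  (if v = ee j then 1 else 0) - (if v = oo j then 1 else 0)

lemma bvv_nonneg (j : Fin K) (v : Fin (2*K)) : 0 ≤ bvv j v := by
  unfold bvv; split <;> norm_num

lemma bvv_mul_self (j : Fin K) (v : Fin (2*K)) : bvv j v * bvv j v = bvv j v := by
  unfold bvv; split <;> norm_num

lemma epsvv_sq (j : Fin K) (v : Fin (2*K)) : epsvv j v * epsvv j v = bvv j v := by
  unfold epsvv bvv
  have hne := ee_ne_oo j j
  by_cases h1 : v = ee j
  · have h2 : ¬ v = oo j := by rw [h1]; exact hne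
    simp [h1, h2, hne, Ne.symm hne]
  · by_cases h2 : v = oo j
    · simp [h1, h2, hne, Ne.symm hne]
    · simp [h1, h2]

lemma bvv_sg (j : Fin K) (v : Fin (2*K)) : bvv j (sg v) = bvv j v := by
  unfold bvv
  by_cases h : v = ee j ∨ v = oo j
  · rw [if_pos h, if_pos ((sg_pair_mem_iff j v).mpr h)]
  · rw [if_neg h, if_neg (fun hc => h ((sg_pair_mem_iff j v).mp hc))]

lemma epsvv_ee (j : Fin K) : epsvv j (ee j) = 1 := by
  unfold epsvv; rw [if_pos rfl, if_neg (ee_ne_oo j j)]; ring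

lemma epsvv_oo (j : Fin K) : epsvv j (oo j) = -1 := by
  unfold epsvv; rw [if_neg (Ne.symm (ee_ne_oo j j)), if_pos rfl]; ring

lemma epsvv_other (j : Fin K) {v : Fin (2*K)} (h1 : ¬ v = ee j) (h2 : ¬ v = oo j) :
    epsvv j v = 0 := by
  unfold epsvv; rw [if_neg h1, if_neg h2]; ring

lemma epsvv_sg (j : Fin K) (v : Fin (2*K)) : epsvv j (sg v) = - epsvv j v := by
  by_cases h1 : v = ee j
  · subst h1; rw [sg_ee, epsvv_ee, epsvv_oo]
  · by_cases h2 : v = oo j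
    · subst h2; rw [sg_oo, epsvv_oo, epsvv_ee]; ring
    · have h3 : ¬ sg v = ee j := by rw [sg_eq_ee_iff]; exact h2
      have h4 : ¬ sg v = oo j := by rw [sg_eq_oo_iff]; exact h1
      rw [epsvv_other j h1 h2, epsvv_other j h3 h4]; ring

lemma sum_bvv (j : Fin K) : ∑ v : Fin (2*K), bvv j v = 2 := by
  unfold bvv
  rw [← Finset.sum_filter]
  have h : (univ.filter fun v : Fin (2*K) => v = ee j ∨ v = oo j) = {ee j, oo j} := by
    ext v; simp [Finset.mem_filter, Finset.mem_insert]
  rw [h, Finset.sum_pair (ee_ne_oo j j)]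
  norm_num

/-! ### position sets -/

def Pf (n : ℕ) : Finset (Fin n) := univ.filter fun t => t.1 < n/2
def Qf (n : ℕ) : Finset (Fin n) := univ.filter fun t => ¬ t.1 < n/2

lemma card_Pf : (Pf n).card = n/2 := by
  have h : Pf n = (univ : Finset (Fin (n/2))).map (Fin.castLEEmb (Nat.div_le_self n 2)) := by
    ext x
    simp only [Pf, mem_filter, mem_univ, true_and, Finset.mem_map]
    constructor
    · intro hx
      refine ⟨⟨x.1, hx⟩, ?_⟩
      apply Fin.ext
      simp [Fin.castLEEmb]
    · rintro ⟨y, rfl⟩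
      exact y.2
  rw [h, Finset.card_map, card_univ, Fintype.card_fin]

lemma card_Qf : (Qf n).card = n - n/2 := by
  have := Finset.card_filter_add_card_filter_not (s := (univ : Finset (Fin n)))
    (p := fun t => t.1 < n/2)
  have hc : (univ : Finset (Fin n)).card = n := by rw [card_univ, Fintype.card_fin]
  have hp := card_Pf (n := n)
  unfold Pf at hp
  unfold Qf
  omega

lemma mem_Pf {t : Fin n} : t ∈ Pf n ↔ t.1 < n/2 := by simp [Pf]
lemma mem_Qf {t : Fin n} : t ∈ Qf n ↔ ¬ t.1 < n/2 := by simp [Qf]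

lemma Pf_ne_Qf {t s : Fin n} (ht : t ∈ Pf n) (hs : s ∈ Qf n) : t ≠ s := by
  rw [mem_Pf] at ht; rw [mem_Qf] at hs
  intro h; rw [h] at ht; exact hs ht

/-! ### sums of indicators -/

def SR (j : Fin K) (ω : Fin n → Fin (2*K)) : ℝ := ∑ r : Fin n, bvv j (ω r)
def DEP (j : Fin K) (ω : Fin n → Fin (2*K)) : ℝ := ∑ t ∈ Pf n, epsvv j (ω t)
def DEQ (j : Fin K) (ω : Fin n → Fin (2*K)) : ℝ := ∑ s ∈ Qf n, epsvv j (ω s)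

lemma SR_nonneg (j : Fin K) (ω : Fin n → Fin (2*K)) : 0 ≤ SR j ω :=
  Finset.sum_nonneg fun r _ => bvv_nonneg j (ω r)

lemma VV_ne_coord (j : Fin K) (t0 : Fin n) (ω : Fin n → Fin (2*K)) {t : Fin n} (ht : t ≠ t0) :
    VV j t0 ω t = ω t := by
  rw [VV_apply, if_neg]; intro hc; exact ht hc.1

lemma bvv_VV (j : Fin K) (t0 : Fin n) (ω : Fin n → Fin (2*K)) (r : Fin n) :
    bvv j (VV j t0 ω r) = bvv j (ω r) := by
  by_cases h : r = t0
  · subst h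
    rw [VV_apply]
    by_cases hc : r = r ∧ (ω r = ee j ∨ ω r = oo j)
    · rw [if_pos hc, bvv_sg]
    · rw [if_neg hc]
  · rw [VV_ne_coord j t0 ω h]

lemma epsvv_VV_self (j : Fin K) (t0 : Fin n) (ω : Fin n → Fin (2*K)) :
    epsvv j (VV j t0 ω t0) = - epsvv j (ω t0) := by
  rw [VV_apply]
  by_cases hc : t0 = t0 ∧ (ω t0 = ee j ∨ ω t0 = oo j)
  · rw [if_pos hc, epsvv_sg]
  · rw [if_neg hc]
    have h1 : ¬ ω t0 = ee j := fun h => hc ⟨rfl, Or.inl h⟩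
    have h2 : ¬ ω t0 = oo j := fun h => hc ⟨rfl, Or.inr h⟩
    unfold epsvv
    simp [h1, h2]

lemma SR_VV (j : Fin K) (t0 : Fin n) (ω : Fin n → Fin (2*K)) :
    SR j (VV j t0 ω) = SR j ω := by
  unfold SR; exact Finset.sum_congr rfl fun r _ => bvv_VV j t0 ω r

/-! ### bridges between counts and indicator sums -/

lemma c00_sum (j : Fin K) (ω : Fin n → Fin (2*K)) :
    ((c00 j ω : ℕ) : ℝ) = ∑ t ∈ Pf n, (if ω t = ee j then (1:ℝ) else 0) := by
  unfold c00 Pf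
  rw [Finset.sum_filter, Finset.card_filter]
  push_cast
  exact Finset.sum_congr rfl fun t _ => by rw [ite_and]

lemma c01_sum (j : Fin K) (ω : Fin n → Fin (2*K)) :
    ((c01 j ω : ℕ) : ℝ) = ∑ t ∈ Pf n, (if ω t = oo j then (1:ℝ) else 0) := by
  unfold c01 Pf
  rw [Finset.sum_filter, Finset.card_filter]
  push_cast
  exact Finset.sum_congr rfl fun t _ => by rw [ite_and]

lemma c10_sum (j : Fin K) (ω : Fin n → Fin (2*K)) :
    ((c10 j ω : ℕ) : ℝ) = ∑ t ∈ Qf n, (if ω t = ee j then (1:ℝ) else 0) := by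
  unfold c10 Qf
  rw [Finset.sum_filter, Finset.card_filter]
  push_cast
  exact Finset.sum_congr rfl fun t _ => by rw [ite_and]

lemma c11_sum (j : Fin K) (ω : Fin n → Fin (2*K)) :
    ((c11 j ω : ℕ) : ℝ) = ∑ t ∈ Qf n, (if ω t = oo j then (1:ℝ) else 0) := by
  unfold c11 Qf
  rw [Finset.sum_filter, Finset.card_filter]
  push_cast
  exact Finset.sum_congr rfl fun t _ => by rw [ite_and]

lemma DEP_eq (j : Fin K) (ω : Fin n → Fin (2*K)) :
    DEP j ω = (c00 j ω : ℝ) - c01 j ω := by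
  unfold DEP epsvv
  rw [Finset.sum_sub_distrib, c00_sum, c01_sum]

lemma DEQ_eq (j : Fin K) (ω : Fin n → Fin (2*K)) :
    DEQ j ω = (c10 j ω : ℝ) - c11 j ω := by
  unfold DEQ epsvv
  rw [Finset.sum_sub_distrib, c10_sum, c11_sum]

lemma pair_ind_split (j : Fin K) (v : Fin (2*K)) :
    bvv j v = (if v = ee j then (1:ℝ) else 0) + (if v = oo j then (1:ℝ) else 0) := by
  unfold bvv
  have hne := ee_ne_oo j j
  by_cases h1 : v = ee j
  · have h2 : ¬ v = oo j := by rw [h1]; exact hne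
    simp [h1, h2, hne]
  · by_cases h2 : v = oo j
    · simp [h1, h2, Ne.symm hne]
    · simp [h1, h2]

lemma SR_eq (j : Fin K) (ω : Fin n → Fin (2*K)) :
    SR j ω = ((c00 j ω + c01 j ω + c10 j ω + c11 j ω : ℕ) : ℝ) := by
  have hsplit : SR j ω = ((∑ t ∈ Pf n, (if ω t = ee j then (1:ℝ) else 0))
      + (∑ t ∈ Pf n, (if ω t = oo j then (1:ℝ) else 0)))
      + ((∑ t ∈ Qf n, (if ω t = ee j then (1:ℝ) else 0))
      + (∑ t ∈ Qf n, (if ω t = oo j then (1:ℝ) else 0))) := by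
    unfold SR
    rw [← Finset.sum_filter_add_sum_filter_not univ (fun t : Fin n => t.1 < n/2)
        (fun r => bvv j (ω r))]
    rw [← Finset.sum_add_distrib, ← Finset.sum_add_distrib]
    unfold Pf Qf
    congr 1
    · exact Finset.sum_congr rfl fun t _ => pair_ind_split j (ω t)
    · exact Finset.sum_congr rfl fun t _ => pair_ind_split j (ω t)
  rw [hsplit, ← c00_sum, ← c01_sum, ← c10_sum, ← c11_sum]
  push_cast
  ring

lemma filter_and_comm (p q : Fin n → Prop) [DecidablePred p] [DecidablePred q] :
    (univ.filter fun t => p t ∧ q t) = (univ.filter fun t => q t ∧ p t) := by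
  apply Finset.filter_congr; intro t _; exact and_comm

lemma Nc_split (i : Fin (2*K)) (ω : Fin n → Fin (2*K)) :
    (univ.filter fun t => ω t = i).card
      = (univ.filter fun t => t.1 < n/2 ∧ ω t = i).card
        + (univ.filter fun t => ¬ t.1 < n/2 ∧ ω t = i).card := by
  have h := Finset.card_filter_add_card_filter_not
    (s := univ.filter fun t : Fin n => ω t = i) (p := fun t => t.1 < n/2)
  rw [Finset.filter_filter, Finset.filter_filter] at h
  rw [filter_and_comm (fun t => ω t = i) (fun t => t.1 < n/2)] at h
  rw [filter_and_comm (fun t => ω t = i) (fun t => ¬ t.1 < n/2)] at h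
  omega

lemma Nc_ee (j : Fin K) (ω : Fin n → Fin (2*K)) :
    (univ.filter fun t => ω t = ee j).card = c00 j ω + c10 j ω := Nc_split (ee j) ω

lemma Nc_oo (j : Fin K) (ω : Fin n → Fin (2*K)) :
    (univ.filter fun t => ω t = oo j).card = c01 j ω + c11 j ω := Nc_split (oo j) ω

/-! ### the per-pair log quantity -/

def a1 (j : Fin K) (ω : Fin n → Fin (2*K)) : ℕ :=
  (c00 j ω + c10 j ω + 1) * (c01 j ω + c11 j ω + 1)
def a2 (j : Fin K) (ω : Fin n → Fin (2*K)) : ℕ :=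
  (c01 j ω + c10 j ω + 1) * (c00 j ω + c11 j ω + 1)
noncomputable def Dl (j : Fin K) (ω : Fin n → Fin (2*K)) : ℝ :=
  Real.log (a1 j ω) - Real.log (a2 j ω)

lemma a1_pos (j : Fin K) (ω : Fin n → Fin (2*K)) : 0 < a1 j ω :=
  Nat.mul_pos (by omega) (by omega)
lemma a2_pos (j : Fin K) (ω : Fin n → Fin (2*K)) : 0 < a2 j ω :=
  Nat.mul_pos (by omega) (by omega)

lemma Dl_UU_ne {j l : Fin K} (hjl : j ≠ l) (ω : Fin n → Fin (2*K)) :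
    Dl j (UU l ω) = Dl j ω := by
  unfold Dl a1 a2
  rw [c00_UU, c01_UU, c10_UU_ne hjl, c11_UU_ne hjl]

lemma Dl_UU_self (l : Fin K) (ω : Fin n → Fin (2*K)) :
    Dl l (UU l ω) = - Dl l ω := by
  unfold Dl a1 a2
  rw [c00_UU, c01_UU, c10_UU_self, c11_UU_self]
  rw [show (c00 l ω + c11 l ω + 1) * (c01 l ω + c10 l ω + 1)
      = (c01 l ω + c10 l ω + 1) * (c00 l ω + c11 l ω + 1) by ring]
  rw [show (c01 l ω + c11 l ω + 1) * (c00 l ω + c10 l ω + 1)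
      = (c00 l ω + c10 l ω + 1) * (c01 l ω + c11 l ω + 1) by ring]
  ring

/-! ### pointwise log-gap bound -/

lemma loggap {x y B : ℝ} (hx : 0 < x) (hy : 0 < y) (hxB : x ≤ B) (hyB : y ≤ B) :
    ((x - y)/B)^2 ≤ (Real.log x - Real.log y)^2 := by
  have hB : 0 < B := lt_of_lt_of_le hx hxB
  -- wlog y ≤ x
  rcases le_total y x with hyx | hxy
  · have hlog : (x - y)/B ≤ Real.log x - Real.log y := by
      have h1 : Real.log (y/x) ≤ y/x - 1 := Real.log_le_sub_one_of_pos (by positivity)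
      have h2 : Real.log (y/x) = Real.log y - Real.log x := Real.log_div (ne_of_gt hy) (ne_of_gt hx)
      have h3 : 1 - y/x ≤ Real.log x - Real.log y := by linarith
      have h4 : (x - y)/B ≤ (x - y)/x := by
        apply div_le_div_of_nonneg_left (by linarith) hx hxB
      have h5 : (x - y)/x = 1 - y/x := by field_simp
      linarith
    have hnn : 0 ≤ (x - y)/B := div_nonneg (by linarith) hB.le
    exact pow_le_pow_left₀ hnn hlog 2
  · have hlog : (y - x)/B ≤ Real.log y - Real.log x := by
      have h1 : Real.log (x/y) ≤ x/y - 1 := Real.log_le_sub_one_of_pos (by positivity)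
      have h2 : Real.log (x/y) = Real.log x - Real.log y := Real.log_div (ne_of_gt hx) (ne_of_gt hy)
      have h3 : 1 - x/y ≤ Real.log y - Real.log x := by linarith
      have h4 : (y - x)/B ≤ (y - x)/y := by
        apply div_le_div_of_nonneg_left (by linarith) hy hyB
      have h5 : (y - x)/y = 1 - x/y := by field_simp
      linarith
    have hnn : 0 ≤ (y - x)/B := div_nonneg (by linarith) hB.le
    have h6 : ((y - x)/B)^2 ≤ (Real.log y - Real.log x)^2 := pow_le_pow_left₀ hnn hlog 2
    have h7 : ((x - y)/B)^2 = ((y - x)/B)^2 := by ring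
    have h8 : (Real.log x - Real.log y)^2 = (Real.log y - Real.log x)^2 := by ring
    linarith

lemma Dl_sq_ge (j : Fin K) (ω : Fin n → Fin (2*K)) :
    16 * (DEP j ω * DEQ j ω)^2 / (SR j ω + 2)^4 ≤ (Dl j ω)^2 := by
  set x : ℝ := (a1 j ω : ℝ) with hxdef
  set y : ℝ := (a2 j ω : ℝ) with hydef
  have hx : 0 < x := by
    rw [hxdef]; exact_mod_cast a1_pos j ω
  have hy : 0 < y := by
    rw [hydef]; exact_mod_cast a2_pos j ω
  have hS : SR j ω = ((c00 j ω + c01 j ω + c10 j ω + c11 j ω : ℕ) : ℝ) := SR_eq j ω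
  set B : ℝ := ((SR j ω + 2)/2)^2 with hBdef
  have hS0 : 0 ≤ SR j ω := SR_nonneg j ω
  have hxB : x ≤ B := by
    rw [hxdef, hBdef, hS]
    unfold a1
    push_cast
    nlinarith [sq_nonneg ((c00 j ω : ℝ) + c10 j ω - c01 j ω - c11 j ω)]
  have hyB : y ≤ B := by
    rw [hydef, hBdef, hS]
    unfold a2
    push_cast
    nlinarith [sq_nonneg ((c01 j ω : ℝ) + c10 j ω - c00 j ω - c11 j ω)]
  have hdiff : x - y = -(DEP j ω * DEQ j ω) := by
    rw [hxdef, hydef, DEP_eq, DEQ_eq]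
    unfold a1 a2
    push_cast
    ring
  have hkey := loggap hx hy hxB hyB
  have hDl : Dl j ω = Real.log x - Real.log y := rfl
  rw [hDl]
  have hB2 : (SR j ω + 2) ≠ 0 := by positivity
  have hrw : ((x - y)/B)^2 = 16 * (DEP j ω * DEQ j ω)^2 / (SR j ω + 2)^4 := by
    rw [hdiff, hBdef]
    field_simp
    ring
  linarith [hkey, hrw.symm.le]

/-! ### counting sums over the sample space -/

lemma sum_prod_bvv (j : Fin K) (F : Finset (Fin n)) :
    ∑ ω : Fin n → Fin (2*K), ∏ r ∈ F, bvv j (ω r)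
      = 2^(F.card) * ((2*K : ℕ) : ℝ)^(n - F.card) := by
  have h1 : ∀ ω : Fin n → Fin (2*K),
      ∏ r ∈ F, bvv j (ω r) = ∏ r : Fin n, (if r ∈ F then bvv j (ω r) else 1) := by
    intro ω
    rw [Finset.prod_ite_mem univ F (fun r => bvv j (ω r)), Finset.univ_inter]
  rw [Finset.sum_congr rfl (fun ω _ => h1 ω)]
  have h2 := Finset.prod_univ_sum (fun _ : Fin n => (univ : Finset (Fin (2*K))))
    (fun r v => if r ∈ F then bvv j v else 1)
  rw [Fintype.piFinset_univ] at h2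
  rw [← h2]
  have h3 : ∀ r : Fin n,
      (∑ v : Fin (2*K), if r ∈ F then bvv j v else 1) = if r ∈ F then 2 else ((2*K:ℕ):ℝ) := by
    intro r
    by_cases hr : r ∈ F
    · simp only [hr, if_true]; exact sum_bvv j
    · simp only [hr, if_false]
      rw [Finset.sum_const, card_univ, Fintype.card_fin, nsmul_eq_mul, mul_one]
  rw [Finset.prod_congr rfl (fun r _ => h3 r)]
  rw [← Finset.prod_filter_mul_prod_filter_not univ (· ∈ F)]
  have h4 : (univ.filter (· ∈ F)) = F := Finset.filter_univ_mem F
  have h5 : (univ.filter (· ∉ F)).card = n - F.card := by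
    have := Finset.card_filter_add_card_filter_not
      (s := (univ : Finset (Fin n))) (p := (· ∈ F))
    rw [h4] at this
    rw [card_univ, Fintype.card_fin] at this
    omega
  rw [Finset.prod_congr h4 (fun r hr => if_pos hr)]
  rw [Finset.prod_congr rfl (fun r hr => if_neg (Finset.mem_filter.mp hr).2)]
  rw [Finset.prod_const, Finset.prod_const, h5]

lemma sum_bb (j : Fin K) {t s : Fin n} (hts : t ≠ s) :
    ∑ ω : Fin n → Fin (2*K), bvv j (ω t) * bvv j (ω s) = 4 * ((2*K:ℕ):ℝ)^(n-2) := by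
  have h : ∀ ω : Fin n → Fin (2*K),
      bvv j (ω t) * bvv j (ω s) = ∏ r ∈ ({t, s} : Finset (Fin n)), bvv j (ω r) :=
    fun ω => (Finset.prod_pair (f := fun r => bvv j (ω r)) hts).symm
  rw [Finset.sum_congr rfl (fun ω _ => h ω), sum_prod_bvv, Finset.card_pair hts]
  norm_num

lemma sum_bbb (j : Fin K) {t s r : Fin n} (hts : t ≠ s) (htr : t ≠ r) (hsr : s ≠ r) :
    ∑ ω : Fin n → Fin (2*K), bvv j (ω t) * bvv j (ω s) * bvv j (ω r)
      = 8 * ((2*K:ℕ):ℝ)^(n-3) := by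
  have hmem : t ∉ ({s, r} : Finset (Fin n)) := by
    simp [Finset.mem_insert, hts, htr]
  have h : ∀ ω : Fin n → Fin (2*K),
      bvv j (ω t) * bvv j (ω s) * bvv j (ω r)
        = ∏ x ∈ ({t, s, r} : Finset (Fin n)), bvv j (ω x) := by
    intro ω
    rw [show ({t, s, r} : Finset (Fin n)) = insert t {s, r} from rfl]
    rw [Finset.prod_insert hmem, Finset.prod_pair hsr]
    ring
  have hcard : ({t, s, r} : Finset (Fin n)).card = 3 := by
    rw [show ({t, s, r} : Finset (Fin n)) = insert t {s, r} from rfl]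
    rw [Finset.card_insert_of_notMem hmem, Finset.card_pair hsr]
  rw [Finset.sum_congr rfl (fun ω _ => h ω), sum_prod_bvv, hcard]
  norm_num

lemma sum_bbbb (j : Fin K) {t s r q : Fin n} (hts : t ≠ s) (htr : t ≠ r) (htq : t ≠ q)
    (hsr : s ≠ r) (hsq : s ≠ q) (hrq : r ≠ q) :
    ∑ ω : Fin n → Fin (2*K), bvv j (ω t) * bvv j (ω s) * bvv j (ω r) * bvv j (ω q)
      = 16 * ((2*K:ℕ):ℝ)^(n-4) := by
  have hmem1 : t ∉ ({s, r, q} : Finset (Fin n)) := by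
    simp [Finset.mem_insert, hts, htr, htq]
  have hmem2 : s ∉ ({r, q} : Finset (Fin n)) := by
    simp [Finset.mem_insert, hsr, hsq]
  have h : ∀ ω : Fin n → Fin (2*K),
      bvv j (ω t) * bvv j (ω s) * bvv j (ω r) * bvv j (ω q)
        = ∏ x ∈ ({t, s, r, q} : Finset (Fin n)), bvv j (ω x) := by
    intro ω
    rw [show ({t, s, r, q} : Finset (Fin n)) = insert t (insert s {r, q}) from rfl]
    rw [Finset.prod_insert hmem1, Finset.prod_insert hmem2, Finset.prod_pair hrq]
    ring
  have hcard : ({t, s, r, q} : Finset (Fin n)).card = 4 := by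
    rw [show ({t, s, r, q} : Finset (Fin n)) = insert t (insert s {r, q}) from rfl]
    rw [Finset.card_insert_of_notMem hmem1, Finset.card_insert_of_notMem hmem2,
      Finset.card_pair hrq]
  rw [Finset.sum_congr rfl (fun ω _ => h ω), sum_prod_bvv, hcard]
  norm_num

/-! ### vanishing of odd terms -/

lemma flip_zero (j : Fin K) (t0 : Fin n) (g : (Fin n → Fin (2*K)) → ℝ)
    (hg : ∀ ω, g (VV j t0 ω) = g ω) :
    ∑ ω : Fin n → Fin (2*K), epsvv j (ω t0) * g ω = 0 := by
  have h := Equiv.sum_comp (Function.Involutive.toPerm _ (VV_invol j t0))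
    (fun ω => epsvv j (ω t0) * g ω)
  have h2 : ∀ ω : Fin n → Fin (2*K),
      epsvv j ((VV j t0 ω) t0) * g (VV j t0 ω) = - (epsvv j (ω t0) * g ω) := by
    intro ω
    rw [epsvv_VV_self, hg]
    ring
  rw [show (∑ ω : Fin n → Fin (2*K),
        epsvv j (((Function.Involutive.toPerm _ (VV_invol j t0)) ω) t0)
          * g ((Function.Involutive.toPerm _ (VV_invol j t0)) ω))
      = ∑ ω : Fin n → Fin (2*K), - (epsvv j (ω t0) * g ω) from
    Finset.sum_congr rfl fun ω _ => by
      rw [show (Function.Involutive.toPerm _ (VV_invol j t0)) ω = VV j t0 ω from rfl]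
      exact h2 ω] at h
  rw [Finset.sum_neg_distrib] at h
  linarith

lemma DEQ_VV_P (j : Fin K) {t0 : Fin n} (ht0 : t0 ∈ Pf n) (ω : Fin n → Fin (2*K)) :
    DEQ j (VV j t0 ω) = DEQ j ω := by
  unfold DEQ
  apply Finset.sum_congr rfl
  intro s hs
  rw [VV_ne_coord j t0 ω (Pf_ne_Qf ht0 hs).symm]

lemma epsvv_VV_ne (j : Fin K) (t0 : Fin n) (ω : Fin n → Fin (2*K)) {r : Fin n} (hr : r ≠ t0) :
    epsvv j (VV j t0 ω r) = epsvv j (ω r) := by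
  rw [VV_ne_coord j t0 ω hr]

lemma bvv_VV_any (j : Fin K) (t0 : Fin n) (ω : Fin n → Fin (2*K)) (r : Fin n) :
    bvv j (VV j t0 ω r) = bvv j (ω r) := bvv_VV j t0 ω r

/-! ### diagonalisation -/

lemma collapseP (j : Fin K) {t : Fin n} (ht : t ∈ Pf n) :
    ∑ ω : Fin n → Fin (2*K), epsvv j (ω t) * (DEP j ω * (DEQ j ω)^2 / (SR j ω + 2)^4)
      = ∑ ω : Fin n → Fin (2*K), bvv j (ω t) * ((DEQ j ω)^2 / (SR j ω + 2)^4) := by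
  have step2 : ∀ ω : Fin n → Fin (2*K),
      epsvv j (ω t) * (DEP j ω * (DEQ j ω)^2 / (SR j ω + 2)^4)
        = ∑ t' ∈ Pf n, epsvv j (ω t') *
            (epsvv j (ω t) * ((DEQ j ω)^2 / (SR j ω + 2)^4)) := by
    intro ω
    have : ∀ t' ∈ Pf n, epsvv j (ω t') * (epsvv j (ω t) * ((DEQ j ω)^2 / (SR j ω + 2)^4))
        = epsvv j (ω t') * ((epsvv j (ω t) * (DEQ j ω)^2) / (SR j ω + 2)^4) := by
      intro t' _; ring
    rw [Finset.sum_congr rfl this, ← Finset.sum_mul]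
    show _ = DEP j ω * _
    ring
  rw [Finset.sum_congr rfl fun ω _ => step2 ω, Finset.sum_comm]
  rw [Finset.sum_eq_single_of_mem t ht]
  · apply Finset.sum_congr rfl
    intro ω _
    have := epsvv_sq j (ω t)
    calc epsvv j (ω t) * (epsvv j (ω t) * ((DEQ j ω)^2 / (SR j ω + 2)^4))
        = (epsvv j (ω t) * epsvv j (ω t)) * ((DEQ j ω)^2 / (SR j ω + 2)^4) := by ring
      _ = bvv j (ω t) * ((DEQ j ω)^2 / (SR j ω + 2)^4) := by rw [this]
  · intro t' ht' hne
    apply flip_zero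
    intro ω
    rw [epsvv_VV_ne j t' ω (Ne.symm hne), DEQ_VV_P j ht', SR_VV]

lemma collapseQ (j : Fin K) {t s : Fin n} (ht : t ∈ Pf n) (hs : s ∈ Qf n) :
    ∑ ω : Fin n → Fin (2*K), epsvv j (ω s) * (bvv j (ω t) * DEQ j ω / (SR j ω + 2)^4)
      = ∑ ω : Fin n → Fin (2*K), bvv j (ω t) * bvv j (ω s) / (SR j ω + 2)^4 := by
  have step2 : ∀ ω : Fin n → Fin (2*K),
      epsvv j (ω s) * (bvv j (ω t) * DEQ j ω / (SR j ω + 2)^4)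
        = ∑ s' ∈ Qf n, epsvv j (ω s') *
            (epsvv j (ω s) * (bvv j (ω t) / (SR j ω + 2)^4)) := by
    intro ω
    have : ∀ s' ∈ Qf n, epsvv j (ω s') * (epsvv j (ω s) * (bvv j (ω t) / (SR j ω + 2)^4))
        = epsvv j (ω s') * ((epsvv j (ω s) * bvv j (ω t)) / (SR j ω + 2)^4) := by
      intro s' _; ring
    rw [Finset.sum_congr rfl this, ← Finset.sum_mul]
    show _ = DEQ j ω * _
    ring
  rw [Finset.sum_congr rfl fun ω _ => step2 ω, Finset.sum_comm]
  rw [Finset.sum_eq_single_of_mem s hs]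
  · apply Finset.sum_congr rfl
    intro ω _
    have := epsvv_sq j (ω s)
    calc epsvv j (ω s) * (epsvv j (ω s) * (bvv j (ω t) / (SR j ω + 2)^4))
        = (epsvv j (ω s) * epsvv j (ω s)) * (bvv j (ω t) / (SR j ω + 2)^4) := by ring
      _ = bvv j (ω s) * (bvv j (ω t) / (SR j ω + 2)^4) := by rw [this]
      _ = bvv j (ω t) * bvv j (ω s) / (SR j ω + 2)^4 := by ring
  · intro s' hs' hne
    apply flip_zero
    intro ω
    rw [epsvv_VV_ne j s' ω (Ne.symm hne), bvv_VV_any, SR_VV]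

lemma Qj_eq (j : Fin K) :
    ∑ ω : Fin n → Fin (2*K), (DEP j ω * DEQ j ω)^2 / (SR j ω + 2)^4
      = ∑ t ∈ Pf n, ∑ s ∈ Qf n,
          ∑ ω : Fin n → Fin (2*K), bvv j (ω t) * bvv j (ω s) / (SR j ω + 2)^4 := by
  have step1 : ∀ ω : Fin n → Fin (2*K),
      (DEP j ω * DEQ j ω)^2 / (SR j ω + 2)^4
        = ∑ t ∈ Pf n, epsvv j (ω t) * (DEP j ω * (DEQ j ω)^2 / (SR j ω + 2)^4) := by
    intro ω
    have : ∀ t ∈ Pf n, epsvv j (ω t) * (DEP j ω * (DEQ j ω)^2 / (SR j ω + 2)^4)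
        = epsvv j (ω t) * ((DEP j ω * (DEQ j ω)^2) / (SR j ω + 2)^4) := by
      intro t _; ring
    rw [Finset.sum_congr rfl this, ← Finset.sum_mul]
    show _ = DEP j ω * _
    ring
  rw [Finset.sum_congr rfl fun ω _ => step1 ω, Finset.sum_comm]
  apply Finset.sum_congr rfl
  intro t ht
  rw [collapseP j ht]
  have step4 : ∀ ω : Fin n → Fin (2*K),
      bvv j (ω t) * ((DEQ j ω)^2 / (SR j ω + 2)^4)
        = ∑ s ∈ Qf n, epsvv j (ω s) * (bvv j (ω t) * DEQ j ω / (SR j ω + 2)^4) := by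
    intro ω
    have : ∀ s ∈ Qf n, epsvv j (ω s) * (bvv j (ω t) * DEQ j ω / (SR j ω + 2)^4)
        = epsvv j (ω s) * ((bvv j (ω t) * DEQ j ω) / (SR j ω + 2)^4) := by
      intro s _; ring
    rw [Finset.sum_congr rfl this, ← Finset.sum_mul]
    show _ = DEQ j ω * _
    ring
  rw [Finset.sum_congr rfl fun ω _ => step4 ω, Finset.sum_comm]
  apply Finset.sum_congr rfl
  intro s hs
  rw [collapseQ j ht hs]

/-! ### per-(t,s) moment computations -/

/-- the main denominator polynomial -/
def KM (K n : ℕ) : ℕ := 8*(2*K)^2 + 9*(n-2)*(2*K) + 2*(n-2)*(n-3)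

lemma SR_decomp (j : Fin K) {t s : Fin n} (hts : t ≠ s) (ω : Fin n → Fin (2*K)) :
    SR j ω = bvv j (ω t) + bvv j (ω s) + ∑ r ∈ (univ.erase t).erase s, bvv j (ω r) := by
  unfold SR
  have h1 : ∑ r : Fin n, bvv j (ω r)
      = bvv j (ω t) + ∑ r ∈ univ.erase t, bvv j (ω r) :=
    (Finset.add_sum_erase univ (fun r => bvv j (ω r)) (Finset.mem_univ t)).symm
  have hs' : s ∈ univ.erase t := Finset.mem_erase.mpr ⟨Ne.symm hts, Finset.mem_univ s⟩
  have h2 : ∑ r ∈ univ.erase t, bvv j (ω r)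
      = bvv j (ω s) + ∑ r ∈ (univ.erase t).erase s, bvv j (ω r) :=
    (Finset.add_sum_erase _ (fun r => bvv j (ω r)) hs').symm
  rw [h1, h2]
  ring

lemma card_E {t s : Fin n} (hts : t ≠ s) : ((univ.erase t).erase s).card = n - 2 := by
  have hs' : s ∈ univ.erase t := Finset.mem_erase.mpr ⟨Ne.symm hts, Finset.mem_univ s⟩
  rw [Finset.card_erase_of_mem hs', Finset.card_erase_of_mem (Finset.mem_univ t),
    card_univ, Fintype.card_fin]
  omega

lemma mem_E {t s r : Fin n} (hr : r ∈ (univ.erase t).erase s) : r ≠ t ∧ r ≠ s := by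
  rw [Finset.mem_erase, Finset.mem_erase] at hr
  exact ⟨hr.2.1, hr.1⟩

lemma sum_bbR (j : Fin K) {t s : Fin n} (hts : t ≠ s) :
    ∑ ω : Fin n → Fin (2*K),
        bvv j (ω t) * bvv j (ω s) * (∑ r ∈ (univ.erase t).erase s, bvv j (ω r))
      = (n - 2 : ℕ) * (8 * ((2*K:ℕ):ℝ)^(n-3)) := by
  have h : ∀ ω : Fin n → Fin (2*K),
      bvv j (ω t) * bvv j (ω s) * (∑ r ∈ (univ.erase t).erase s, bvv j (ω r))
        = ∑ r ∈ (univ.erase t).erase s, bvv j (ω t) * bvv j (ω s) * bvv j (ω r) := by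
    intro ω; rw [Finset.mul_sum]
  rw [Finset.sum_congr rfl fun ω _ => h ω, Finset.sum_comm]
  have h2 : ∀ r ∈ (univ.erase t).erase s,
      ∑ ω : Fin n → Fin (2*K), bvv j (ω t) * bvv j (ω s) * bvv j (ω r)
        = 8 * ((2*K:ℕ):ℝ)^(n-3) := by
    intro r hr
    obtain ⟨hrt, hrs⟩ := mem_E hr
    exact sum_bbb j hts (Ne.symm hrt) (Ne.symm hrs)
  rw [Finset.sum_congr rfl h2, Finset.sum_const, card_E hts, nsmul_eq_mul]

lemma sum_bbRR (j : Fin K) {t s : Fin n} (hts : t ≠ s) :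
    ∑ ω : Fin n → Fin (2*K),
        bvv j (ω t) * bvv j (ω s) * (∑ r ∈ (univ.erase t).erase s, bvv j (ω r))^2
      = (n - 2 : ℕ) * (8 * ((2*K:ℕ):ℝ)^(n-3))
        + ((n-2 : ℕ) * ((n-3 : ℕ) * (16 * ((2*K:ℕ):ℝ)^(n-4)))) := by
  set E := (univ.erase t).erase s with hE
  have h : ∀ ω : Fin n → Fin (2*K),
      bvv j (ω t) * bvv j (ω s) * (∑ r ∈ E, bvv j (ω r))^2
        = ∑ r ∈ E, ∑ q ∈ E, bvv j (ω t) * bvv j (ω s) * (bvv j (ω r) * bvv j (ω q)) := by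
    intro ω
    rw [sq, Finset.sum_mul_sum]
    rw [Finset.mul_sum]
    apply Finset.sum_congr rfl
    intro r _
    rw [Finset.mul_sum]
  rw [Finset.sum_congr rfl fun ω _ => h ω, Finset.sum_comm]
  have inner : ∀ r ∈ E,
      ∑ ω : Fin n → Fin (2*K), (∑ q ∈ E, bvv j (ω t) * bvv j (ω s) * (bvv j (ω r) * bvv j (ω q)))
        = 8 * ((2*K:ℕ):ℝ)^(n-3) + (n-3 : ℕ) * (16 * ((2*K:ℕ):ℝ)^(n-4)) := by
    intro r hr
    obtain ⟨hrt, hrs⟩ := mem_E hr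
    rw [Finset.sum_comm]
    have hsplit : ∀ q ∈ E, q ≠ r →
        ∑ ω : Fin n → Fin (2*K), bvv j (ω t) * bvv j (ω s) * (bvv j (ω r) * bvv j (ω q))
          = 16 * ((2*K:ℕ):ℝ)^(n-4) := by
      intro q hq hqr
      obtain ⟨hqt, hqs⟩ := mem_E hq
      have := sum_bbbb j hts (Ne.symm hrt) (Ne.symm hqt) (Ne.symm hrs) (Ne.symm hqs)
        (Ne.symm hqr)
      rw [← this]
      apply Finset.sum_congr rfl
      intro ω _; ring
    have hdiag :
        ∑ ω : Fin n → Fin (2*K), bvv j (ω t) * bvv j (ω s) * (bvv j (ω r) * bvv j (ω r))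
          = 8 * ((2*K:ℕ):ℝ)^(n-3) := by
      have := sum_bbb j hts (Ne.symm hrt) (Ne.symm hrs)
      rw [← this]
      apply Finset.sum_congr rfl
      intro ω _
      rw [bvv_mul_self]
    rw [← Finset.add_sum_erase E _ hr]
    rw [hdiag]
    congr 1
    have : ∀ q ∈ E.erase r,
        ∑ ω : Fin n → Fin (2*K), bvv j (ω t) * bvv j (ω s) * (bvv j (ω r) * bvv j (ω q))
          = 16 * ((2*K:ℕ):ℝ)^(n-4) := by
      intro q hq
      have hqE := Finset.mem_of_mem_erase hq
      have hqr := (Finset.mem_erase.mp hq).1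
      exact hsplit q hqE hqr
    rw [Finset.sum_congr rfl this, Finset.sum_const, Finset.card_erase_of_mem hr,
      hE, card_E hts, nsmul_eq_mul]
    norm_cast
  rw [Finset.sum_congr rfl inner, Finset.sum_const, hE, card_E hts, nsmul_eq_mul]
  push_cast
  ring

lemma bvv_zero_one (j : Fin K) (v : Fin (2*K)) : bvv j v = 1 ∨ bvv j v = 0 := by
  unfold bvv; split
  · exact Or.inl rfl
  · exact Or.inr rfl

lemma sum_bbSp2 (j : Fin K) {t s : Fin n} (hts : t ≠ s) :
    ∑ ω : Fin n → Fin (2*K), bvv j (ω t) * bvv j (ω s) * (SR j ω + 2)^2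
      = 64 * ((2*K:ℕ):ℝ)^(n-2) + 72 * ((n-2:ℕ):ℝ) * ((2*K:ℕ):ℝ)^(n-3)
        + 16 * ((n-2:ℕ):ℝ) * ((n-3:ℕ):ℝ) * ((2*K:ℕ):ℝ)^(n-4) := by
  have hpt : ∀ ω : Fin n → Fin (2*K),
      bvv j (ω t) * bvv j (ω s) * (SR j ω + 2)^2
        = bvv j (ω t) * bvv j (ω s) * (∑ r ∈ (univ.erase t).erase s, bvv j (ω r))^2
          + 8 * (bvv j (ω t) * bvv j (ω s) * (∑ r ∈ (univ.erase t).erase s, bvv j (ω r)))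
          + 16 * (bvv j (ω t) * bvv j (ω s)) := by
    intro ω
    rw [SR_decomp j hts ω]
    rcases bvv_zero_one j (ω t) with h1 | h1 <;> rcases bvv_zero_one j (ω s) with h2 | h2 <;>
      rw [h1, h2] <;> ring
  rw [Finset.sum_congr rfl fun ω _ => hpt ω]
  rw [Finset.sum_add_distrib, Finset.sum_add_distrib, ← Finset.mul_sum, ← Finset.mul_sum]
  rw [sum_bbRR j hts, sum_bbR j hts, sum_bb j hts]
  push_cast
  ring

lemma I4_ge (j : Fin K) {t s : Fin n} (ht : t ∈ Pf n) (hs : s ∈ Qf n)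
    (hn4 : 4 ≤ n) (hK : 1 ≤ K) :
    ((2*K:ℕ):ℝ)^(n+2) / ((KM K n : ℕ):ℝ)^2
      ≤ ∑ ω : Fin n → Fin (2*K), bvv j (ω t) * bvv j (ω s) / (SR j ω + 2)^4 := by
  have hts : t ≠ s := Pf_ne_Qf ht hs
  have hκpos : (0:ℝ) < ((2*K:ℕ):ℝ) := by
    have : (0:ℕ) < 2*K := by omega
    exact_mod_cast this
  have hSp : ∀ ω : Fin n → Fin (2*K), (0:ℝ) < SR j ω + 2 := by
    intro ω; have := SR_nonneg j ω; linarith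
  have hbb : ∀ ω : Fin n → Fin (2*K),
      bvv j (ω t) * bvv j (ω s) * (bvv j (ω t) * bvv j (ω s))
        = bvv j (ω t) * bvv j (ω s) := by
    intro ω
    calc bvv j (ω t) * bvv j (ω s) * (bvv j (ω t) * bvv j (ω s))
        = (bvv j (ω t) * bvv j (ω t)) * (bvv j (ω s) * bvv j (ω s)) := by ring
      _ = bvv j (ω t) * bvv j (ω s) := by rw [bvv_mul_self, bvv_mul_self]
  -- the four sums
  have hc2 : ∑ ω : Fin n → Fin (2*K), bvv j (ω t) * bvv j (ω s)
      = 4 * ((2*K:ℕ):ℝ)^(n-2) := sum_bb j hts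
  have hW2 := sum_bbSp2 j hts
  have hKM : ((KM K n : ℕ):ℝ)
      = 8*((2*K:ℕ):ℝ)^2 + 9*((n-2:ℕ):ℝ)*((2*K:ℕ):ℝ) + 2*((n-2:ℕ):ℝ)*((n-3:ℕ):ℝ) := by
    unfold KM; push_cast; ring
  have hKMpos : (0:ℝ) < ((KM K n : ℕ):ℝ) := by
    rw [hKM]
    have h1 : (0:ℝ) ≤ ((n-2:ℕ):ℝ) := Nat.cast_nonneg _
    have h2 : (0:ℝ) ≤ ((n-3:ℕ):ℝ) := Nat.cast_nonneg _
    nlinarith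
  -- CS inequalities
  have CS1raw := Finset.sum_mul_sq_le_sq_mul_sq univ
    (fun ω : Fin n → Fin (2*K) => bvv j (ω t) * bvv j (ω s) / (SR j ω + 2))
    (fun ω : Fin n → Fin (2*K) => bvv j (ω t) * bvv j (ω s) * (SR j ω + 2))
  have e1 : ∀ ω : Fin n → Fin (2*K),
      (bvv j (ω t) * bvv j (ω s) / (SR j ω + 2)) * (bvv j (ω t) * bvv j (ω s) * (SR j ω + 2))
        = bvv j (ω t) * bvv j (ω s) := by
    intro ω
    have hne := ne_of_gt (hSp ω)
    have hr : bvv j (ω t) * bvv j (ω s) / (SR j ω + 2) * (bvv j (ω t) * bvv j (ω s) * (SR j ω + 2))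
        = bvv j (ω t) * bvv j (ω s) * (bvv j (ω t) * bvv j (ω s)) * ((SR j ω + 2)/(SR j ω + 2)) := by
      ring
    rw [hr, div_self hne, mul_one, hbb ω]
  have e2 : ∀ ω : Fin n → Fin (2*K),
      (bvv j (ω t) * bvv j (ω s) / (SR j ω + 2))^2
        = bvv j (ω t) * bvv j (ω s) / (SR j ω + 2)^2 := by
    intro ω
    rw [div_pow, sq, hbb, sq]
  have e3 : ∀ ω : Fin n → Fin (2*K),
      (bvv j (ω t) * bvv j (ω s) * (SR j ω + 2))^2
        = bvv j (ω t) * bvv j (ω s) * (SR j ω + 2)^2 := by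
    intro ω
    calc (bvv j (ω t) * bvv j (ω s) * (SR j ω + 2))^2
        = (bvv j (ω t) * bvv j (ω s) * (bvv j (ω t) * bvv j (ω s))) * (SR j ω + 2)^2 := by ring
      _ = bvv j (ω t) * bvv j (ω s) * (SR j ω + 2)^2 := by rw [hbb]
  rw [Finset.sum_congr rfl fun ω _ => e1 ω, Finset.sum_congr rfl fun ω _ => e2 ω,
    Finset.sum_congr rfl fun ω _ => e3 ω] at CS1raw
  -- CS1raw : (∑ bb)^2 ≤ (∑ bb/(Sp)^2) * (∑ bb * Sp^2)
  have CS2raw := Finset.sum_mul_sq_le_sq_mul_sq univ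
    (fun ω : Fin n → Fin (2*K) => bvv j (ω t) * bvv j (ω s) / (SR j ω + 2)^2)
    (fun ω : Fin n → Fin (2*K) => bvv j (ω t) * bvv j (ω s))
  have f1 : ∀ ω : Fin n → Fin (2*K),
      (bvv j (ω t) * bvv j (ω s) / (SR j ω + 2)^2) * (bvv j (ω t) * bvv j (ω s))
        = bvv j (ω t) * bvv j (ω s) / (SR j ω + 2)^2 := by
    intro ω
    rw [div_mul_eq_mul_div, mul_comm (bvv j (ω t) * bvv j (ω s)) _]
    rw [show bvv j (ω t) * bvv j (ω s) * (bvv j (ω t) * bvv j (ω s))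
        = bvv j (ω t) * bvv j (ω s) * (bvv j (ω t) * bvv j (ω s)) from rfl]
    rw [hbb]
  have f2 : ∀ ω : Fin n → Fin (2*K),
      (bvv j (ω t) * bvv j (ω s) / (SR j ω + 2)^2)^2
        = bvv j (ω t) * bvv j (ω s) / ((SR j ω + 2)^2)^2 := by
    intro ω
    rw [div_pow, sq (bvv j (ω t) * bvv j (ω s)), hbb]
  have f3 : ∀ ω : Fin n → Fin (2*K),
      (bvv j (ω t) * bvv j (ω s))^2 = bvv j (ω t) * bvv j (ω s) := by
    intro ω
    rw [sq, hbb]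
  rw [Finset.sum_congr rfl fun ω _ => f1 ω, Finset.sum_congr rfl fun ω _ => f2 ω,
    Finset.sum_congr rfl fun ω _ => f3 ω] at CS2raw
  have hpow : ∀ ω : Fin n → Fin (2*K), ((SR j ω + 2)^2)^2 = (SR j ω + 2)^4 := by
    intro ω; ring
  rw [Finset.sum_congr rfl (fun ω _ => by rw [hpow ω] :
    ∀ ω ∈ univ, bvv j (ω t) * bvv j (ω s) / ((SR j ω + 2)^2)^2
      = bvv j (ω t) * bvv j (ω s) / (SR j ω + 2)^4)] at CS2raw
  -- positivity of sums
  have hI2nn : (0:ℝ) ≤ ∑ ω : Fin n → Fin (2*K), bvv j (ω t) * bvv j (ω s) / (SR j ω + 2)^2 := by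
    apply Finset.sum_nonneg
    intro ω _
    have := bvv_nonneg j (ω t); have := bvv_nonneg j (ω s); have := hSp ω
    positivity
  have hc2pos : (0:ℝ) < ∑ ω : Fin n → Fin (2*K), bvv j (ω t) * bvv j (ω s) := by
    rw [hc2]; positivity
  have hW2pos : (0:ℝ) < ∑ ω : Fin n → Fin (2*K),
      bvv j (ω t) * bvv j (ω s) * (SR j ω + 2)^2 := by
    rw [hW2]
    have h1 : (0:ℝ) ≤ ((n-2:ℕ):ℝ) := Nat.cast_nonneg _
    have h2 : (0:ℝ) ≤ ((n-3:ℕ):ℝ) := Nat.cast_nonneg _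
    have h3 : (0:ℝ) < ((2*K:ℕ):ℝ)^(n-2) := by positivity
    have h4 : (0:ℝ) ≤ ((2*K:ℕ):ℝ)^(n-3) := by positivity
    have h5 : (0:ℝ) ≤ ((2*K:ℕ):ℝ)^(n-4) := by positivity
    nlinarith
  -- combine
  set A := ∑ ω : Fin n → Fin (2*K), bvv j (ω t) * bvv j (ω s) with hA
  set B := ∑ ω : Fin n → Fin (2*K), bvv j (ω t) * bvv j (ω s) / (SR j ω + 2)^2 with hB
  set C := ∑ ω : Fin n → Fin (2*K), bvv j (ω t) * bvv j (ω s) * (SR j ω + 2)^2 with hC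
  set D := ∑ ω : Fin n → Fin (2*K), bvv j (ω t) * bvv j (ω s) / (SR j ω + 2)^4 with hD
  -- CS1raw : A^2 ≤ B * C ;  CS2raw : B^2 ≤ D * A
  have h1 : A^2/C ≤ B := by
    rw [div_le_iff₀ hW2pos]; exact CS1raw
  have h1nn : (0:ℝ) ≤ A^2/C := by positivity
  have h2 : (A^2/C)^2 ≤ B^2 := pow_le_pow_left₀ h1nn h1 2
  have h3 : (A^2/C)^2 ≤ D * A := le_trans h2 CS2raw
  have h4 : (A^2/C)^2 / A ≤ D := by
    rw [div_le_iff₀ hc2pos]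
    exact h3
  have h5 : (A^2/C)^2 / A = A^3/C^2 := by
    field_simp
  rw [h5] at h4
  -- now compute A^3/C^2
  have hCval : C = 8 * ((2*K:ℕ):ℝ)^(n-4) * ((KM K n : ℕ):ℝ) := by
    rw [hW2, hKM]
    have e1 : ((2*K:ℕ):ℝ)^(n-2) = ((2*K:ℕ):ℝ)^(n-4) * ((2*K:ℕ):ℝ)^2 := by
      rw [← pow_add]; congr 1; omega
    have e2 : ((2*K:ℕ):ℝ)^(n-3) = ((2*K:ℕ):ℝ)^(n-4) * ((2*K:ℕ):ℝ) := by
      rw [← pow_succ]; congr 1; omega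
    rw [e1, e2]
    ring
  have hfinal : A^3/C^2 = ((2*K:ℕ):ℝ)^(n+2) / ((KM K n : ℕ):ℝ)^2 := by
    rw [hc2, hCval]
    rw [div_eq_div_iff (by positivity) (by positivity)]
    have e3 : (((2*K:ℕ):ℝ)^(n-2))^3 = (((2*K:ℕ):ℝ)^(n-4))^2 * ((2*K:ℕ):ℝ)^(n+2) := by
      rw [← pow_mul, ← pow_mul, ← pow_add]; congr 1; omega
    calc (4 * ((2*K:ℕ):ℝ)^(n-2))^3 * ((KM K n : ℕ):ℝ)^2
        = 64 * ((((2*K:ℕ):ℝ)^(n-2))^3) * ((KM K n : ℕ):ℝ)^2 := by ring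
      _ = 64 * ((((2*K:ℕ):ℝ)^(n-4))^2 * ((2*K:ℕ):ℝ)^(n+2)) * ((KM K n : ℕ):ℝ)^2 := by
          rw [e3]
      _ = ((2*K:ℕ):ℝ)^(n+2) * (8 * ((2*K:ℕ):ℝ)^(n-4) * ((KM K n : ℕ):ℝ))^2 := by ring
  rw [hfinal] at h4
  exact h4

/-! ### cross-pair vanishing and sum of squares -/

lemma crosszero {j l : Fin K} (hjl : j ≠ l) :
    ∑ ω : Fin n → Fin (2*K), Dl j ω * Dl l ω = 0 := by
  have h := Equiv.sum_comp (Function.Involutive.toPerm _ (UU_invol l))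
    (fun ω : Fin n → Fin (2*K) => Dl j ω * Dl l ω)
  have h2 : ∀ ω : Fin n → Fin (2*K),
      Dl j (UU l ω) * Dl l (UU l ω) = - (Dl j ω * Dl l ω) := by
    intro ω
    rw [Dl_UU_ne hjl, Dl_UU_self]
    ring
  rw [show (∑ ω : Fin n → Fin (2*K),
        Dl j ((Function.Involutive.toPerm _ (UU_invol l)) ω)
          * Dl l ((Function.Involutive.toPerm _ (UU_invol l)) ω))
      = ∑ ω : Fin n → Fin (2*K), - (Dl j ω * Dl l ω) from
    Finset.sum_congr rfl fun ω _ => by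
      rw [show (Function.Involutive.toPerm _ (UU_invol l)) ω = UU l ω from rfl]
      exact h2 ω] at h
  rw [Finset.sum_neg_distrib] at h
  linarith

lemma sumDl_sq :
    ∑ ω : Fin n → Fin (2*K), (∑ j : Fin K, Dl j ω)^2
      = ∑ j : Fin K, ∑ ω : Fin n → Fin (2*K), (Dl j ω)^2 := by
  have hpt : ∀ ω : Fin n → Fin (2*K),
      (∑ j : Fin K, Dl j ω)^2 = ∑ j : Fin K, ∑ l : Fin K, Dl j ω * Dl l ω := by
    intro ω
    rw [sq, Finset.sum_mul_sum]
  rw [Finset.sum_congr rfl fun ω _ => hpt ω, Finset.sum_comm]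
  apply Finset.sum_congr rfl
  intro j _
  rw [Finset.sum_comm]
  rw [Finset.sum_eq_single_of_mem j (Finset.mem_univ j)]
  · exact Finset.sum_congr rfl fun ω _ => (pow_two (Dl j ω)).symm
  · intro l _ hlj
    exact crosszero (Ne.symm hlj)

/-! ### reindexing `Fin (2K)` by pairs -/

def pe : (Fin K ⊕ Fin K) ≃ Fin (2*K) :=
  finSumFinEquiv.trans (finCongr (by omega : K + K = 2*K))

lemma pe_inl (j : Fin K) : pe (Sum.inl j) = ee j := by
  apply Fin.ext
  simp [pe, ee]

lemma pe_inr (j : Fin K) : pe (Sum.inr j) = oo j := by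
  apply Fin.ext
  simp [pe, oo]
  omega

lemma sum_fin2K (g : Fin (2*K) → ℝ) :
    ∑ i : Fin (2*K), g i = ∑ j : Fin K, (g (ee j) + g (oo j)) := by
  rw [← Equiv.sum_comp (pe (K := K)) g, Fintype.sum_sum_type]
  rw [← Finset.sum_add_distrib]
  apply Finset.sum_congr rfl
  intro j _
  rw [pe_inl, pe_inr]

/-! ### aggregate per-pair bound -/

lemma sumDlsq_ge (j : Fin K) (hn4 : 4 ≤ n) (hK : 1 ≤ K) :
    16 * ((n/2 : ℕ) : ℝ) * ((n - n/2 : ℕ) : ℝ)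
        * (((2*K:ℕ):ℝ)^(n+2) / ((KM K n : ℕ):ℝ)^2)
      ≤ ∑ ω : Fin n → Fin (2*K), (Dl j ω)^2 := by
  have h1 : ∑ ω : Fin n → Fin (2*K), 16 * (DEP j ω * DEQ j ω)^2 / (SR j ω + 2)^4
      ≤ ∑ ω : Fin n → Fin (2*K), (Dl j ω)^2 :=
    Finset.sum_le_sum fun ω _ => Dl_sq_ge j ω
  have h2 : ∑ ω : Fin n → Fin (2*K), 16 * (DEP j ω * DEQ j ω)^2 / (SR j ω + 2)^4
      = 16 * ∑ ω : Fin n → Fin (2*K), (DEP j ω * DEQ j ω)^2 / (SR j ω + 2)^4 := by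
    rw [Finset.mul_sum]
    apply Finset.sum_congr rfl
    intro ω _
    ring
  rw [h2, Qj_eq j] at h1
  have h3 : ((n/2 : ℕ) : ℝ) * ((n - n/2 : ℕ) : ℝ)
        * (((2*K:ℕ):ℝ)^(n+2) / ((KM K n : ℕ):ℝ)^2)
      ≤ ∑ t ∈ Pf n, ∑ s ∈ Qf n,
          ∑ ω : Fin n → Fin (2*K), bvv j (ω t) * bvv j (ω s) / (SR j ω + 2)^4 := by
    have hinner : ∀ t ∈ Pf n,
        ((n - n/2 : ℕ) : ℝ) * (((2*K:ℕ):ℝ)^(n+2) / ((KM K n : ℕ):ℝ)^2)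
          ≤ ∑ s ∈ Qf n,
              ∑ ω : Fin n → Fin (2*K), bvv j (ω t) * bvv j (ω s) / (SR j ω + 2)^4 := by
      intro t ht
      calc ((n - n/2 : ℕ) : ℝ) * (((2*K:ℕ):ℝ)^(n+2) / ((KM K n : ℕ):ℝ)^2)
          = ∑ _s ∈ Qf n, (((2*K:ℕ):ℝ)^(n+2) / ((KM K n : ℕ):ℝ)^2) := by
            rw [Finset.sum_const, card_Qf, nsmul_eq_mul]
        _ ≤ _ := Finset.sum_le_sum fun s hs => I4_ge j ht hs hn4 hK
    calc ((n/2 : ℕ) : ℝ) * ((n - n/2 : ℕ) : ℝ)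
          * (((2*K:ℕ):ℝ)^(n+2) / ((KM K n : ℕ):ℝ)^2)
        = ∑ _t ∈ Pf n, ((n - n/2 : ℕ) : ℝ)
            * (((2*K:ℕ):ℝ)^(n+2) / ((KM K n : ℕ):ℝ)^2) := by
          rw [Finset.sum_const, card_Pf, nsmul_eq_mul]
          ring
      _ ≤ _ := Finset.sum_le_sum hinner
  calc 16 * ((n/2 : ℕ) : ℝ) * ((n - n/2 : ℕ) : ℝ)
        * (((2*K:ℕ):ℝ)^(n+2) / ((KM K n : ℕ):ℝ)^2)
      = 16 * (((n/2 : ℕ) : ℝ) * ((n - n/2 : ℕ) : ℝ)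
        * (((2*K:ℕ):ℝ)^(n+2) / ((KM K n : ℕ):ℝ)^2)) := by ring
    _ ≤ 16 * ∑ t ∈ Pf n, ∑ s ∈ Qf n,
          ∑ ω : Fin n → Fin (2*K), bvv j (ω t) * bvv j (ω s) / (SR j ω + 2)^4 := by
        linarith
    _ ≤ _ := h1

/-! ### the KL function and its increment under TT -/

def Ncard (i : Fin (2*K)) (ω : Fin n → Fin (2*K)) : ℕ :=
  (univ.filter fun t => ω t = i).card

noncomputable def FF (ω : Fin n → Fin (2*K)) : ℝ :=
  ∑ i : Fin (2*K), (1/((2*K:ℕ):ℝ))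
    * Real.log ((1/((2*K:ℕ):ℝ)) / ((((Ncard i ω : ℕ):ℝ) + 1) / ((n:ℝ) + ((2*K:ℕ):ℝ))))

lemma logterm (hK : 1 ≤ K) (c : ℕ) :
    Real.log ((1/((2*K:ℕ):ℝ)) / (((c:ℝ) + 1) / ((n:ℝ) + ((2*K:ℕ):ℝ))))
      = (Real.log ((n:ℝ) + ((2*K:ℕ):ℝ)) - Real.log ((2*K:ℕ):ℝ)) - Real.log ((c:ℝ)+1) := by
  have hκ : (0:ℝ) < ((2*K:ℕ):ℝ) := by
    have : (0:ℕ) < 2*K := by omega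
    exact_mod_cast this
  have hc : (0:ℝ) < (c:ℝ) + 1 := by positivity
  have hnκ : (0:ℝ) < (n:ℝ) + ((2*K:ℕ):ℝ) := by positivity
  have h1 : (1/((2*K:ℕ):ℝ)) / (((c:ℝ) + 1) / ((n:ℝ) + ((2*K:ℕ):ℝ)))
      = ((n:ℝ) + ((2*K:ℕ):ℝ)) / (((2*K:ℕ):ℝ) * ((c:ℝ)+1)) := by
    field_simp
  rw [h1, Real.log_div (ne_of_gt hnκ) (by positivity), Real.log_mul (ne_of_gt hκ) (ne_of_gt hc)]
  ring

lemma Ncard_ee_TT (j : Fin K) (ω : Fin n → Fin (2*K)) :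
    Ncard (ee j) (TT ω) = c01 j ω + c10 j ω := by
  have := Nc_ee j (TT ω)
  unfold Ncard
  rw [this, c00_TT, c10_TT]

lemma Ncard_oo_TT (j : Fin K) (ω : Fin n → Fin (2*K)) :
    Ncard (oo j) (TT ω) = c00 j ω + c11 j ω := by
  have := Nc_oo j (TT ω)
  unfold Ncard
  rw [this, c01_TT, c11_TT]

lemma FF_sub (hK : 1 ≤ K) (ω : Fin n → Fin (2*K)) :
    FF ω - FF (TT ω) = -(1/((2*K:ℕ):ℝ)) * ∑ j : Fin K, Dl j ω := by
  have hκ : (0:ℝ) < ((2*K:ℕ):ℝ) := by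
    have : (0:ℕ) < 2*K := by omega
    exact_mod_cast this
  unfold FF
  rw [← Finset.sum_sub_distrib]
  have hterm : ∀ i : Fin (2*K),
      (1/((2*K:ℕ):ℝ)) * Real.log ((1/((2*K:ℕ):ℝ)) / ((((Ncard i ω : ℕ):ℝ) + 1) / ((n:ℝ) + ((2*K:ℕ):ℝ))))
        - (1/((2*K:ℕ):ℝ)) * Real.log ((1/((2*K:ℕ):ℝ)) / ((((Ncard i (TT ω) : ℕ):ℝ) + 1) / ((n:ℝ) + ((2*K:ℕ):ℝ))))
      = (1/((2*K:ℕ):ℝ)) * (Real.log (((Ncard i (TT ω) : ℕ):ℝ) + 1)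
          - Real.log (((Ncard i ω : ℕ):ℝ) + 1)) := by
    intro i
    rw [logterm hK, logterm hK]
    ring
  rw [Finset.sum_congr rfl fun i _ => hterm i]
  rw [← Finset.mul_sum]
  rw [sum_fin2K (fun i => Real.log (((Ncard i (TT ω) : ℕ):ℝ) + 1)
      - Real.log (((Ncard i ω : ℕ):ℝ) + 1))]
  have hpair : ∀ j : Fin K,
      ((Real.log (((Ncard (ee j) (TT ω) : ℕ):ℝ) + 1) - Real.log (((Ncard (ee j) ω : ℕ):ℝ) + 1))
        + (Real.log (((Ncard (oo j) (TT ω) : ℕ):ℝ) + 1)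
            - Real.log (((Ncard (oo j) ω : ℕ):ℝ) + 1)))
      = - Dl j ω := by
    intro j
    have h1 : Ncard (ee j) ω = c00 j ω + c10 j ω := Nc_ee j ω
    have h2 : Ncard (oo j) ω = c01 j ω + c11 j ω := Nc_oo j ω
    have h3 := Ncard_ee_TT j ω
    have h4 := Ncard_oo_TT j ω
    rw [h1, h2, h3, h4]
    unfold Dl a1 a2
    have e1 : (((c01 j ω + c10 j ω : ℕ):ℝ) + 1) = (((c01 j ω + c10 j ω + 1 : ℕ)):ℝ) := by
      push_cast; ring
    have e2 : (((c00 j ω + c11 j ω : ℕ):ℝ) + 1) = (((c00 j ω + c11 j ω + 1 : ℕ)):ℝ) := by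
      push_cast; ring
    have e3 : (((c00 j ω + c10 j ω : ℕ):ℝ) + 1) = (((c00 j ω + c10 j ω + 1 : ℕ)):ℝ) := by
      push_cast; ring
    have e4 : (((c01 j ω + c11 j ω : ℕ):ℝ) + 1) = (((c01 j ω + c11 j ω + 1 : ℕ)):ℝ) := by
      push_cast; ring
    rw [e1, e2, e3, e4]
    have hm1 : (((c00 j ω + c10 j ω + 1) * (c01 j ω + c11 j ω + 1) : ℕ) : ℝ)
        = ((c00 j ω + c10 j ω + 1 : ℕ) : ℝ) * ((c01 j ω + c11 j ω + 1 : ℕ) : ℝ) := by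
      push_cast; ring
    have hm2 : (((c01 j ω + c10 j ω + 1) * (c00 j ω + c11 j ω + 1) : ℕ) : ℝ)
        = ((c01 j ω + c10 j ω + 1 : ℕ) : ℝ) * ((c00 j ω + c11 j ω + 1 : ℕ) : ℝ) := by
      push_cast; ring
    have hp1 : (0:ℝ) < ((c01 j ω + c10 j ω + 1 : ℕ) : ℝ) := by
      have : (0:ℕ) < c01 j ω + c10 j ω + 1 := by omega
      exact_mod_cast this
    have hp2 : (0:ℝ) < ((c00 j ω + c11 j ω + 1 : ℕ) : ℝ) := by
      have : (0:ℕ) < c00 j ω + c11 j ω + 1 := by omega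
      exact_mod_cast this
    have hp3 : (0:ℝ) < ((c00 j ω + c10 j ω + 1 : ℕ) : ℝ) := by
      have : (0:ℕ) < c00 j ω + c10 j ω + 1 := by omega
      exact_mod_cast this
    have hp4 : (0:ℝ) < ((c01 j ω + c11 j ω + 1 : ℕ) : ℝ) := by
      have : (0:ℕ) < c01 j ω + c11 j ω + 1 := by omega
      exact_mod_cast this
    rw [hm1, hm2, Real.log_mul (ne_of_gt hp3) (ne_of_gt hp4),
      Real.log_mul (ne_of_gt hp1) (ne_of_gt hp2)]
    ring
  rw [Finset.sum_congr rfl fun j _ => hpair j]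
  rw [Finset.sum_neg_distrib]
  ring

/-! ### the final numeric inequality -/

set_option maxHeartbeats 1000000 in
lemma realineq (hK : 1 ≤ K) (hn : 20*K ≤ n) :
    ((KM K n : ℕ):ℝ)^2 ≤ 64 * ((n/2 : ℕ):ℝ) * ((n - n/2 : ℕ):ℝ) * (n:ℝ)^2 := by
  have hKM : ((KM K n : ℕ):ℝ)
      = 8*((2*K:ℕ):ℝ)^2 + 9*((n-2:ℕ):ℝ)*((2*K:ℕ):ℝ) + 2*((n-2:ℕ):ℝ)*((n-3:ℕ):ℝ) := by
    unfold KM; push_cast; ring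
  set kr := ((2*K:ℕ):ℝ) with hkr
  set qr := ((n/2 : ℕ):ℝ) with hqr
  set ar := ((n - n/2 : ℕ):ℝ) with har
  set b2 := ((n-2:ℕ):ℝ) with hb2
  set b3 := ((n-3:ℕ):ℝ) with hb3
  set nr := (n:ℝ) with hnr
  have hn20 : 20 ≤ n := by omega
  have hnr20 : (20:ℝ) ≤ nr := by rw [hnr]; exact_mod_cast hn20
  have hqa : qr + ar = nr := by
    rw [hqr, har, hnr]
    have : n/2 + (n - n/2) = n := by omega
    exact_mod_cast this
  have haq0 : qr ≤ ar := by
    rw [hqr, har]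
    have : n/2 ≤ n - n/2 := by omega
    exact_mod_cast this
  have haq1 : ar ≤ qr + 1 := by
    rw [hqr, har]
    have : n - n/2 ≤ n/2 + 1 := by omega
    exact_mod_cast this
  have hkr10 : 10 * kr ≤ nr := by
    rw [hkr, hnr]
    have : 10 * (2*K) ≤ n := by omega
    exact_mod_cast this
  have hkr0 : (0:ℝ) ≤ kr := by rw [hkr]; positivity
  have hb2n : b2 ≤ nr := by
    rw [hb2, hnr]; exact_mod_cast Nat.sub_le n 2
  have hb3n : b3 ≤ nr := by
    rw [hb3, hnr]; exact_mod_cast Nat.sub_le n 3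
  have hb20 : (0:ℝ) ≤ b2 := by rw [hb2]; positivity
  have hb30 : (0:ℝ) ≤ b3 := by rw [hb3]; positivity
  have hnr0 : (0:ℝ) < nr := by linarith
  have h4qa : nr^2 ≤ 4*qr*ar + 1 := by nlinarith [sq_nonneg (ar - qr)]
  have hkrsq : 100 * kr^2 ≤ nr^2 := by nlinarith
  have hKMb : ((KM K n : ℕ):ℝ) ≤ (298/100) * nr^2 := by
    rw [hKM]
    have h1 : 8*kr^2 ≤ (8/100)*nr^2 := by linarith
    have h2 : 9*(b2*kr) ≤ (9/10)*(nr*nr) := by nlinarith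
    have h3 : 2*(b2*b3) ≤ 2*(nr*nr) := by nlinarith
    nlinarith
  have hKM0 : (0:ℝ) ≤ ((KM K n : ℕ):ℝ) := Nat.cast_nonneg _
  have hKM2 : ((KM K n : ℕ):ℝ)^2 ≤ ((298/100) * nr^2)^2 := by
    apply pow_le_pow_left₀ hKM0 hKMb
  have hn400 : (400:ℝ) ≤ nr^2 := by nlinarith
  have hfin : ((298/100:ℝ) * nr^2)^2 ≤ 64 * qr * ar * nr^2 := by
    nlinarith [mul_le_mul_of_nonneg_right h4qa (sq_nonneg nr),
      mul_le_mul_of_nonneg_right hn400 (sq_nonneg nr)]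
  linarith

/-! ### the main sum bound -/

lemma main_sum (hn4 : 4 ≤ n) (hK : 1 ≤ K) :
    16 * (K:ℝ) * ((n/2 : ℕ):ℝ) * ((n - n/2 : ℕ):ℝ)
        * (((2*K:ℕ):ℝ)^n / ((KM K n : ℕ):ℝ)^2)
      ≤ ∑ ω : Fin n → Fin (2*K), (FF ω - FF (TT ω))^2 := by
  have hκ : (0:ℝ) < ((2*K:ℕ):ℝ) := by
    have : (0:ℕ) < 2*K := by omega
    exact_mod_cast this
  have hpt : ∀ ω : Fin n → Fin (2*K),
      (FF ω - FF (TT ω))^2 = (∑ j : Fin K, Dl j ω)^2 / ((2*K:ℕ):ℝ)^2 := by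
    intro ω
    rw [FF_sub hK ω]
    field_simp
  rw [Finset.sum_congr rfl fun ω _ => hpt ω, ← Finset.sum_div, sumDl_sq]
  have hsum : (K:ℝ) * (16 * ((n/2 : ℕ):ℝ) * ((n - n/2 : ℕ):ℝ)
        * (((2*K:ℕ):ℝ)^(n+2) / ((KM K n : ℕ):ℝ)^2))
      ≤ ∑ j : Fin K, ∑ ω : Fin n → Fin (2*K), (Dl j ω)^2 := by
    calc (K:ℝ) * (16 * ((n/2 : ℕ):ℝ) * ((n - n/2 : ℕ):ℝ)
          * (((2*K:ℕ):ℝ)^(n+2) / ((KM K n : ℕ):ℝ)^2))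
        = ∑ _j : Fin K, (16 * ((n/2 : ℕ):ℝ) * ((n - n/2 : ℕ):ℝ)
          * (((2*K:ℕ):ℝ)^(n+2) / ((KM K n : ℕ):ℝ)^2)) := by
          rw [Finset.sum_const, card_univ, Fintype.card_fin, nsmul_eq_mul]
      _ ≤ _ := Finset.sum_le_sum fun j _ => sumDlsq_ge j hn4 hK
  have hdiv : (K:ℝ) * (16 * ((n/2 : ℕ):ℝ) * ((n - n/2 : ℕ):ℝ)
        * (((2*K:ℕ):ℝ)^(n+2) / ((KM K n : ℕ):ℝ)^2)) / ((2*K:ℕ):ℝ)^2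
      ≤ (∑ j : Fin K, ∑ ω : Fin n → Fin (2*K), (Dl j ω)^2) / ((2*K:ℕ):ℝ)^2 := by
    gcongr
  have hKne : ((K:ℝ)) ≠ 0 := ne_of_gt (by exact_mod_cast Nat.pos_of_ne_zero (by omega))
  have hKMpos : 0 < KM K n := by
    have h2 : 0 < 2*K := by omega
    have h1 : 0 < (2*K)^2 := pow_pos h2 2
    unfold KM
    omega
  have hKMne : ((KM K n : ℕ):ℝ) ≠ 0 := ne_of_gt (by exact_mod_cast hKMpos)
  have heq : (K:ℝ) * (16 * ((n/2 : ℕ):ℝ) * ((n - n/2 : ℕ):ℝ)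
        * (((2*K:ℕ):ℝ)^(n+2) / ((KM K n : ℕ):ℝ)^2)) / ((2*K:ℕ):ℝ)^2
      = 16 * (K:ℝ) * ((n/2 : ℕ):ℝ) * ((n - n/2 : ℕ):ℝ)
        * (((2*K:ℕ):ℝ)^n / ((KM K n : ℕ):ℝ)^2) := by
    have e : ((2*K:ℕ):ℝ)^(n+2) = ((2*K:ℕ):ℝ)^n * ((2*K:ℕ):ℝ)^2 := by
      rw [← pow_add]
    rw [e]
    field_simp
  rw [heq] at hdiv

  exact hdiv

end VKL

open VKL in
/-- For `p` uniform over `[k]` (`k` even) and the Laplace add-1 estimator computed from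
`n ≥ 10k` i.i.d. samples, `Var(KL(p ‖ p̂¹)) ≥ k/(32 n²)`. The sample space is
`Fin n → Fin k` with the uniform (counting, normalized) measure, `N i ω` is the count of
symbol `i`, and `KL(p ‖ p̂¹) = Σ_i (1/k) log((1/k) / ((N_i+1)/(n+k)))`. -/
theorem variance_kl_laplace_uniform_lb (k n : ℕ) (hk : 0 < k) (hke : Even k)
    (hn : 10 * k ≤ n)
    (μ : Measure (Fin n → Fin k))
    (hμ : μ = (Fintype.card (Fin n → Fin k) : ENNReal)⁻¹ • Measure.count)
    (N : Fin k → (Fin n → Fin k) → ℕ)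
    (hN : ∀ i ω, N i ω = (Finset.univ.filter fun t => ω t = i).card) :
    (k : ℝ) / (32 * (n : ℝ) ^ 2)
      ≤ variance (fun ω => ∑ i, (1 / (k : ℝ)) *
          Real.log ((1 / (k : ℝ)) / (((N i ω : ℝ) + 1) / ((n : ℝ) + k)))) μ := by
  obtain ⟨K, rfl⟩ : ∃ K, k = 2*K := by
    obtain ⟨r, hr⟩ := hke
    exact ⟨r, by omega⟩
  have hK : 1 ≤ K := by omega
  have hn4 : 4 ≤ n := by omega
  have hn20K : 20*K ≤ n := by omega
  have hnpos : 0 < n := by omega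
  -- the function is FF
  have hfun : (fun ω : Fin n → Fin (2*K) => ∑ i, (1 / ((2*K : ℕ) : ℝ)) *
      Real.log ((1 / ((2*K : ℕ) : ℝ)) / (((N i ω : ℝ) + 1) / ((n : ℝ) + ((2*K : ℕ) : ℝ)))))
      = FF := by
    funext ω
    apply Finset.sum_congr rfl
    intro i _
    rw [hN]
    rfl
  rw [hfun]
  subst hμ
  set GG : (Fin n → Fin (2*K)) → ℝ := FF (K := K) (n := n) with hGG
  -- basic measure facts
  have hcard : Fintype.card (Fin n → Fin (2*K)) = (2*K)^n := by
    rw [Fintype.card_fun, Fintype.card_fin, Fintype.card_fin]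
  have hcard_pos : 0 < (2*K)^n := by positivity
  have hcard_ne : (Fintype.card (Fin n → Fin (2*K)) : ENNReal) ≠ 0 := by
    rw [hcard]
    exact_mod_cast Nat.pos_iff_ne_zero.mp hcard_pos
  have hcard_netop : (Fintype.card (Fin n → Fin (2*K)) : ENNReal) ≠ ⊤ :=
    ENNReal.natCast_ne_top _
  haveI hprob : IsProbabilityMeasure
      ((Fintype.card (Fin n → Fin (2*K)) : ENNReal)⁻¹ • Measure.count :
        Measure (Fin n → Fin (2*K))) := by
    constructor
    rw [Measure.smul_apply, Measure.count_univ, smul_eq_mul]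
    rw [ENat.card_eq_coe_fintype_card, ENat.toENNReal_coe]
    exact ENNReal.inv_mul_cancel hcard_ne hcard_netop
  set c : ℝ := ((((2*K)^n : ℕ)) : ℝ)⁻¹ with hc
  have hcpos : 0 < c := by
    rw [hc]
    have : (0:ℝ) < (((2*K)^n : ℕ) : ℝ) := by exact_mod_cast hcard_pos
    positivity
  have hcmul : c * (((2*K)^n : ℕ) : ℝ) = 1 := by
    rw [hc]
    have : ((((2*K)^n : ℕ)) : ℝ) ≠ 0 := by
      exact_mod_cast Nat.pos_iff_ne_zero.mp hcard_pos
    field_simp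
  -- integral formula
  have hsingle : ∀ x : Fin n → Fin (2*K),
      (((Fintype.card (Fin n → Fin (2*K)) : ENNReal)⁻¹ • Measure.count :
        Measure (Fin n → Fin (2*K))) {x}).toReal = c := by
    intro x
    rw [Measure.smul_apply, Measure.count_singleton, smul_eq_mul, mul_one,
      ENNReal.toReal_inv, hcard, hc]
    norm_num
  have hint : ∀ g : (Fin n → Fin (2*K)) → ℝ,
      ∫ x, g x ∂((Fintype.card (Fin n → Fin (2*K)) : ENNReal)⁻¹ • Measure.count)
        = ∑ x : Fin n → Fin (2*K), c * g x := by
    intro g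
    rw [MeasureTheory.integral_fintype (Integrable.of_finite)]
    apply Finset.sum_congr rfl
    intro x _
    rw [Measure.real, hsingle x, smul_eq_mul]
  -- Memℒp
  have hmem : MemLp GG 2
      ((Fintype.card (Fin n → Fin (2*K)) : ENNReal)⁻¹ • Measure.count) := by
    apply MemLp.of_bound (measurable_of_countable (GG)).aestronglyMeasurable
      (∑ ω : Fin n → Fin (2*K), ‖GG ω‖)
    apply ae_of_all
    intro ω
    exact Finset.single_le_sum (fun i _ => norm_nonneg (GG i)) (Finset.mem_univ ω)
  rw [ProbabilityTheory.variance_eq_sub hmem]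
  have hsq : ∫ x, (GG ^ 2) x ∂((Fintype.card (Fin n → Fin (2*K)) : ENNReal)⁻¹ • Measure.count)
      = ∑ x : Fin n → Fin (2*K), c * (GG x)^2 := by
    rw [hint (GG ^ 2)]
    apply Finset.sum_congr rfl
    intro x _
    rw [Pi.pow_apply]
  rw [hsq, hint GG]
  -- abbreviations
  set S1 : ℝ := ∑ x : Fin n → Fin (2*K), GG x with hS1
  set S2 : ℝ := ∑ x : Fin n → Fin (2*K), (GG x)^2 with hS2
  have hre1 : ∑ x : Fin n → Fin (2*K), c * (GG x)^2 = c * S2 := by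
    rw [hS2, Finset.mul_sum]
  have hre2 : ∑ x : Fin n → Fin (2*K), c * GG x = c * S1 := by
    rw [hS1, Finset.mul_sum]
  rw [hre1, hre2]
  set a : ℝ := c * S1 with ha
  -- centered sum identity
  have hexp : ∑ x : Fin n → Fin (2*K), (GG x - a)^2
      = S2 - 2*a*S1 + (((2*K)^n : ℕ) : ℝ) * a^2 := by
    have hpt : ∀ x : Fin n → Fin (2*K), (GG x - a)^2 = (GG x)^2 - 2*a*(GG x) + a^2 := by
      intro x; ring
    rw [Finset.sum_congr rfl fun x _ => hpt x]
    rw [Finset.sum_add_distrib, Finset.sum_sub_distrib, Finset.sum_const, card_univ, hcard,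
      nsmul_eq_mul, ← Finset.mul_sum, ← hS2, ← hS1]
  have hvar_eq : c * S2 - (c*S1)^2 = c * ∑ x : Fin n → Fin (2*K), (GG x - a)^2 := by
    rw [hexp]
    have : c * (S2 - 2*a*S1 + (((2*K)^n : ℕ) : ℝ) * a^2)
        = c*S2 - 2*a*(c*S1) + (c * (((2*K)^n : ℕ) : ℝ)) * a^2 := by ring
    rw [this, hcmul, ← ha]
    ring
  rw [← ha] at hvar_eq
  rw [hvar_eq]
  -- quarter bound
  have hTsum : ∑ x : Fin n → Fin (2*K), (GG (TT x) - a)^2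
      = ∑ x : Fin n → Fin (2*K), (GG x - a)^2 := by
    have := Equiv.sum_comp (Function.Involutive.toPerm _ (TT_invol (K := K) (n := n)))
      (fun x => (GG x - a)^2)
    rw [← this]
    apply Finset.sum_congr rfl
    intro x _
    rfl
  have hquarter : ∑ x : Fin n → Fin (2*K), (GG x - GG (TT x))^2
      ≤ 4 * ∑ x : Fin n → Fin (2*K), (GG x - a)^2 := by
    have hpt : ∀ x : Fin n → Fin (2*K),
        (GG x - GG (TT x))^2 ≤ 2*(GG x - a)^2 + 2*(GG (TT x) - a)^2 := by
      intro x
      nlinarith [sq_nonneg (GG x + GG (TT x) - 2*a)]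
    calc ∑ x : Fin n → Fin (2*K), (GG x - GG (TT x))^2
        ≤ ∑ x : Fin n → Fin (2*K), (2*(GG x - a)^2 + 2*(GG (TT x) - a)^2) :=
          Finset.sum_le_sum fun x _ => hpt x
      _ = 2 * (∑ x : Fin n → Fin (2*K), (GG x - a)^2)
          + 2 * (∑ x : Fin n → Fin (2*K), (GG (TT x) - a)^2) := by
          rw [Finset.sum_add_distrib, ← Finset.mul_sum, ← Finset.mul_sum]
      _ = 4 * ∑ x : Fin n → Fin (2*K), (GG x - a)^2 := by
          rw [hTsum]; ring
  -- main bound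
  have hmain := main_sum (K := K) (n := n) hn4 hK
  rw [← hGG] at hmain
  have hKMpos : 0 < KM K n := by
    have h2 : 0 < 2*K := by omega
    have h1 : 0 < (2*K)^2 := pow_pos h2 2
    unfold KM
    omega
  have hKMr : (0:ℝ) < ((KM K n : ℕ) : ℝ) := by exact_mod_cast hKMpos
  -- put everything together
  have hchain : c/4 * (16 * (K:ℝ) * ((n/2 : ℕ):ℝ) * ((n - n/2 : ℕ):ℝ)
        * (((2*K:ℕ):ℝ)^n / ((KM K n : ℕ):ℝ)^2))
      ≤ c * ∑ x : Fin n → Fin (2*K), (GG x - a)^2 := by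
    calc c/4 * (16 * (K:ℝ) * ((n/2 : ℕ):ℝ) * ((n - n/2 : ℕ):ℝ)
          * (((2*K:ℕ):ℝ)^n / ((KM K n : ℕ):ℝ)^2))
        ≤ c/4 * ∑ x : Fin n → Fin (2*K), (GG x - GG (TT x))^2 := by
          apply mul_le_mul_of_nonneg_left hmain (by positivity)
      _ ≤ c/4 * (4 * ∑ x : Fin n → Fin (2*K), (GG x - a)^2) := by
          apply mul_le_mul_of_nonneg_left hquarter (by positivity)
      _ = c * ∑ x : Fin n → Fin (2*K), (GG x - a)^2 := by ring
  -- evaluate the left side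
  have hval : c/4 * (16 * (K:ℝ) * ((n/2 : ℕ):ℝ) * ((n - n/2 : ℕ):ℝ)
        * (((2*K:ℕ):ℝ)^n / ((KM K n : ℕ):ℝ)^2))
      = 4 * (K:ℝ) * ((n/2 : ℕ):ℝ) * ((n - n/2 : ℕ):ℝ) / ((KM K n : ℕ):ℝ)^2 := by
    have hpow : (((2*K)^n : ℕ) : ℝ) = ((2*K:ℕ):ℝ)^n := by push_cast; ring
    rw [hc, hpow]
    have hne : ((2*K:ℕ):ℝ)^n ≠ 0 := by
      have : (0:ℝ) < ((2*K:ℕ):ℝ) := by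
        have : (0:ℕ) < 2*K := by omega
        exact_mod_cast this
      positivity
    field_simp
    ring
  rw [hval] at hchain
  -- final numeric comparison
  have hfin : ((2*K : ℕ) : ℝ) / (32 * (n:ℝ)^2)
      ≤ 4 * (K:ℝ) * ((n/2 : ℕ):ℝ) * ((n - n/2 : ℕ):ℝ) / ((KM K n : ℕ):ℝ)^2 := by
    rw [div_le_div_iff₀ (by positivity) (by positivity)]
    have hR := realineq (K := K) (n := n) hK hn20K
    have hcast : ((2*K : ℕ) : ℝ) = 2*(K:ℝ) := by push_cast; ring
    calc ((2*K : ℕ) : ℝ) * ((KM K n : ℕ):ℝ)^2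
        = 2*(K:ℝ) * ((KM K n : ℕ):ℝ)^2 := by rw [hcast]
      _ ≤ 2*(K:ℝ) * (64 * ((n/2 : ℕ):ℝ) * ((n - n/2 : ℕ):ℝ) * (n:ℝ)^2) := by
          apply mul_le_mul_of_nonneg_left hR (by positivity)
      _ = 4 * (K:ℝ) * ((n/2 : ℕ):ℝ) * ((n - n/2 : ℕ):ℝ) * (32 * (n:ℝ)^2) := by ring
  linarith
end

section
/- If N ~ Poisson(n) with n a positive integer, then E[(n − N)/(min(n, N) + 1)] ≤ 29/n. -/
lemma poisson_hasSum_one (n : ℕ) :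
    HasSum (fun N : ℕ => Real.exp (-(n : ℝ)) * (n : ℝ) ^ N / N.factorial) 1 := by
  have := ProbabilityTheory.poissonPMFRealSum (n : NNReal)
  simpa [ProbabilityTheory.poissonPMFReal] using this

lemma poisson_hasSum_shift (n k : ℕ) (f : ℕ → ℝ)
    (hf0 : ∀ i ∈ Finset.range k, f i = 0)
    (hfk : ∀ M : ℕ, f (M + k) =
      (n : ℝ) ^ k * (Real.exp (-(n : ℝ)) * (n : ℝ) ^ M / M.factorial)) :
    HasSum f ((n : ℝ) ^ k) := by
  have h0 := (poisson_hasSum_one n).mul_left ((n : ℝ) ^ k)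
  rw [mul_one] at h0
  have h2 : HasSum (fun M => f (M + k)) ((n : ℝ) ^ k) := by
    simpa [hfk] using h0
  have h3 := (hasSum_nat_add_iff (f := f) k).mp h2
  simpa [Finset.sum_eq_zero hf0] using h3

lemma pm1 (n : ℕ) :
    HasSum (fun N : ℕ => Real.exp (-(n : ℝ)) * (n : ℝ) ^ N / N.factorial * N)
      ((n : ℝ) ^ 1) := by
  apply poisson_hasSum_shift n 1
  · intro i hi; simp only [Finset.mem_range] at hi; interval_cases i <;> simp
  · intro M
    rw [Nat.factorial_succ]
    push_cast
    have h1 : ((M : ℝ) + 1) ≠ 0 := by positivity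
    have h2 : (M.factorial : ℝ) ≠ 0 := by positivity
    field_simp
    ring

lemma pm2 (n : ℕ) :
    HasSum (fun N : ℕ => Real.exp (-(n : ℝ)) * (n : ℝ) ^ N / N.factorial *
      (N * ((N : ℝ) - 1))) ((n : ℝ) ^ 2) := by
  apply poisson_hasSum_shift n 2
  · intro i hi; simp only [Finset.mem_range] at hi; interval_cases i <;> norm_num
  · intro M
    rw [show M + 2 = (M + 1) + 1 from rfl, Nat.factorial_succ, Nat.factorial_succ]
    push_cast
    have h2 : (M.factorial : ℝ) ≠ 0 := by positivity
    field_simp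
    ring

lemma pm3 (n : ℕ) :
    HasSum (fun N : ℕ => Real.exp (-(n : ℝ)) * (n : ℝ) ^ N / N.factorial *
      (N * ((N : ℝ) - 1) * ((N : ℝ) - 2))) ((n : ℝ) ^ 3) := by
  apply poisson_hasSum_shift n 3
  · intro i hi; simp only [Finset.mem_range] at hi; interval_cases i <;> norm_num
  · intro M
    rw [show M + 3 = ((M + 1) + 1) + 1 from rfl, Nat.factorial_succ, Nat.factorial_succ,
      Nat.factorial_succ]
    push_cast
    have h2 : (M.factorial : ℝ) ≠ 0 := by positivity
    field_simp
    ring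

lemma pm4 (n : ℕ) :
    HasSum (fun N : ℕ => Real.exp (-(n : ℝ)) * (n : ℝ) ^ N / N.factorial *
      (N * ((N : ℝ) - 1) * ((N : ℝ) - 2) * ((N : ℝ) - 3))) ((n : ℝ) ^ 4) := by
  apply poisson_hasSum_shift n 4
  · intro i hi; simp only [Finset.mem_range] at hi; interval_cases i <;> norm_num
  · intro M
    rw [show M + 4 = (((M + 1) + 1) + 1) + 1 from rfl, Nat.factorial_succ, Nat.factorial_succ,
      Nat.factorial_succ, Nat.factorial_succ]
    push_cast
    have h2 : (M.factorial : ℝ) ≠ 0 := by positivity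
    field_simp
    ring

lemma pA (n : ℕ) :
    HasSum (fun N : ℕ => Real.exp (-(n : ℝ)) * (n : ℝ) ^ N / N.factorial * ((n : ℝ) - N) ^ 2)
      (n : ℝ) := by
  have h := ((pm2 n).add ((pm1 n).mul_left (1 - 2 * (n : ℝ)))).add
    ((poisson_hasSum_one n).mul_left ((n : ℝ) ^ 2))
  have he : (fun N : ℕ =>
      (Real.exp (-(n : ℝ)) * (n : ℝ) ^ N / N.factorial * ((N : ℝ) * ((N : ℝ) - 1)) +
        (1 - 2 * (n : ℝ)) * (Real.exp (-(n : ℝ)) * (n : ℝ) ^ N / N.factorial * N)) +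
      (n : ℝ) ^ 2 * (Real.exp (-(n : ℝ)) * (n : ℝ) ^ N / N.factorial)) =
      fun N : ℕ => Real.exp (-(n : ℝ)) * (n : ℝ) ^ N / N.factorial * ((n : ℝ) - N) ^ 2 := by
    funext N; ring
  have hv : ((n : ℝ) ^ 2 + (1 - 2 * (n : ℝ)) * (n : ℝ) ^ 1) + (n : ℝ) ^ 2 * 1 = (n : ℝ) := by
    ring
  rwa [he, hv] at h

lemma pB (n : ℕ) :
    HasSum (fun N : ℕ => Real.exp (-(n : ℝ)) * (n : ℝ) ^ N / N.factorial * ((n : ℝ) - N) ^ 4)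
      (3 * (n : ℝ) ^ 2 + n) := by
  have h := ((((pm4 n).add ((pm3 n).mul_left (6 - 4 * (n : ℝ)))).add
    ((pm2 n).mul_left (7 - 12 * (n : ℝ) + 6 * (n : ℝ) ^ 2))).add
    ((pm1 n).mul_left (1 - 4 * (n : ℝ) + 6 * (n : ℝ) ^ 2 - 4 * (n : ℝ) ^ 3))).add
    ((poisson_hasSum_one n).mul_left ((n : ℝ) ^ 4))
  have he : (fun N : ℕ =>
      (((Real.exp (-(n : ℝ)) * (n : ℝ) ^ N / N.factorial *
          ((N : ℝ) * ((N : ℝ) - 1) * ((N : ℝ) - 2) * ((N : ℝ) - 3)) +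
        (6 - 4 * (n : ℝ)) * (Real.exp (-(n : ℝ)) * (n : ℝ) ^ N / N.factorial *
          ((N : ℝ) * ((N : ℝ) - 1) * ((N : ℝ) - 2)))) +
        (7 - 12 * (n : ℝ) + 6 * (n : ℝ) ^ 2) * (Real.exp (-(n : ℝ)) * (n : ℝ) ^ N / N.factorial *
          ((N : ℝ) * ((N : ℝ) - 1)))) +
        (1 - 4 * (n : ℝ) + 6 * (n : ℝ) ^ 2 - 4 * (n : ℝ) ^ 3) *
          (Real.exp (-(n : ℝ)) * (n : ℝ) ^ N / N.factorial * N)) +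
      (n : ℝ) ^ 4 * (Real.exp (-(n : ℝ)) * (n : ℝ) ^ N / N.factorial)) =
      fun N : ℕ => Real.exp (-(n : ℝ)) * (n : ℝ) ^ N / N.factorial * ((n : ℝ) - N) ^ 4 := by
    funext N; ring
  have hv : ((((n : ℝ) ^ 4 + (6 - 4 * (n : ℝ)) * (n : ℝ) ^ 3) +
      (7 - 12 * (n : ℝ) + 6 * (n : ℝ) ^ 2) * (n : ℝ) ^ 2) +
      (1 - 4 * (n : ℝ) + 6 * (n : ℝ) ^ 2 - 4 * (n : ℝ) ^ 3) * (n : ℝ) ^ 1) +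
      (n : ℝ) ^ 4 * 1 = 3 * (n : ℝ) ^ 2 + n := by ring
  rwa [he, hv] at h

lemma pC (n : ℕ) :
    HasSum (fun N : ℕ => Real.exp (-(n : ℝ)) * (n : ℝ) ^ N / N.factorial *
      (((n : ℝ) - N) / ((n : ℝ) + 1))) 0 := by
  have h := (((poisson_hasSum_one n).mul_left (n : ℝ)).sub (pm1 n)).mul_left (1 / ((n : ℝ) + 1))
  have he : (fun N : ℕ => 1 / ((n : ℝ) + 1) *
      ((n : ℝ) * (Real.exp (-(n : ℝ)) * (n : ℝ) ^ N / N.factorial) -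
        Real.exp (-(n : ℝ)) * (n : ℝ) ^ N / N.factorial * N)) =
      fun N : ℕ => Real.exp (-(n : ℝ)) * (n : ℝ) ^ N / N.factorial *
        (((n : ℝ) - N) / ((n : ℝ) + 1)) := by
    funext N
    rw [div_eq_mul_inv ((n:ℝ) - N), div_eq_mul_inv (1:ℝ)]
    ring
  have hv : 1 / ((n : ℝ) + 1) * ((n : ℝ) * 1 - (n : ℝ) ^ 1) = 0 := by ring
  rwa [he, hv] at h

lemma core_ineq (n N : ℕ) (hn : 0 < n) (hN : N < n) :
    ((n : ℝ) - N) ^ 2 / ((N : ℝ) + 1) ≤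
      2 * ((n : ℝ) - N) ^ 2 / (n : ℝ) + 4 * ((n : ℝ) - N) ^ 4 / (n : ℝ) ^ 2 := by
  have hn0 : (0 : ℝ) < n := by exact_mod_cast hn
  have hN1 : (0 : ℝ) < (N : ℝ) + 1 := by positivity
  set a : ℝ := (n : ℝ) - N with ha
  have ha1 : 1 ≤ a := by
    have : (N : ℝ) + 1 ≤ n := by exact_mod_cast hN
    linarith
  rcases le_or_gt (n : ℝ) (2 * ((N : ℝ) + 1)) with hc | hc
  · have h1 : a ^ 2 / ((N : ℝ) + 1) ≤ 2 * a ^ 2 / (n : ℝ) := by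
      rw [div_le_div_iff₀ hN1 hn0]
      nlinarith [sq_nonneg a]
    have h2 : (0 : ℝ) ≤ 4 * a ^ 4 / (n : ℝ) ^ 2 := by positivity
    linarith
  · have h4 : a ^ 2 / ((N : ℝ) + 1) ≤ a ^ 2 := by
      apply div_le_self (by positivity)
      have : (0:ℝ) ≤ (N : ℝ) := Nat.cast_nonneg N
      linarith
    have h5 : (n : ℝ) ^ 2 ≤ 4 * a ^ 2 := by nlinarith [(Nat.cast_nonneg N : (0:ℝ) ≤ (N:ℝ))]
    have h6 : a ^ 2 ≤ 4 * a ^ 4 / (n : ℝ) ^ 2 := by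
      rw [le_div_iff₀ (by positivity)]
      nlinarith [sq_nonneg a, sq_nonneg (a ^ 2)]
    have h7 : (0 : ℝ) ≤ 2 * a ^ 2 / (n : ℝ) := by positivity
    linarith

/-- If `N ~ Poisson(n)` with `n ≥ 1`, then `E[(n − N)/(min(n, N) + 1)] ≤ 29/n`. -/
theorem poisson_expectation_first_term (n : ℕ) (hn : 0 < n) :
    ∑' N : ℕ, (Real.exp (-(n : ℝ)) * (n : ℝ) ^ N / N.factorial) *
        (((n : ℝ) - N) / ((min n N : ℕ) + 1 : ℝ))
      ≤ 29 / n := by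
  have hn0 : (0 : ℝ) < n := by exact_mod_cast hn
  have hn1 : (1 : ℝ) ≤ n := by exact_mod_cast hn
  set p : ℕ → ℝ := fun N => Real.exp (-(n : ℝ)) * (n : ℝ) ^ N / N.factorial with hp
  have hpnn : ∀ N, 0 ≤ p N := fun N => by positivity
  set g : ℕ → ℝ := fun N =>
    if N < n then p N * ((n : ℝ) - N) ^ 2 / (((N : ℝ) + 1) * ((n : ℝ) + 1)) else 0 with hg
  set h : ℕ → ℝ := fun N => 1 / ((n : ℝ) + 1) *
    (2 / (n : ℝ) * (p N * ((n : ℝ) - N) ^ 2) + 4 / (n : ℝ) ^ 2 * (p N * ((n : ℝ) - N) ^ 4))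
    with hh
  -- h has a sum
  have hhsum : HasSum h (1 / ((n : ℝ) + 1) *
      (2 / (n : ℝ) * (n : ℝ) + 4 / (n : ℝ) ^ 2 * (3 * (n : ℝ) ^ 2 + n))) :=
    (((pA n).mul_left (2 / (n : ℝ))).add ((pB n).mul_left (4 / (n : ℝ) ^ 2))).mul_left
      (1 / ((n : ℝ) + 1))
  -- pointwise bounds on g
  have hgnn : ∀ N, 0 ≤ g N := by
    intro N
    simp only [hg]
    split
    · positivity
    · exact le_rfl
  have hgle : ∀ N, g N ≤ h N := by
    intro N
    simp only [hg, hh]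
    split
    · rename_i hN
      have hcore := core_ineq n N hn hN
      have hNe : ((N : ℝ) + 1) ≠ 0 := by positivity
      have hne : ((n : ℝ) + 1) ≠ 0 := by positivity
      have hnne : (n : ℝ) ≠ 0 := ne_of_gt hn0
      have e1 : p N * ((n : ℝ) - N) ^ 2 / (((N : ℝ) + 1) * ((n : ℝ) + 1)) =
          1 / ((n : ℝ) + 1) * (p N * (((n : ℝ) - N) ^ 2 / ((N : ℝ) + 1))) := by
        field_simp
      have e2 : 1 / ((n : ℝ) + 1) *
          (2 / (n : ℝ) * (p N * ((n : ℝ) - N) ^ 2) + 4 / (n : ℝ) ^ 2 * (p N * ((n : ℝ) - N) ^ 4)) =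
          1 / ((n : ℝ) + 1) * (p N *
            (2 * ((n : ℝ) - N) ^ 2 / (n : ℝ) + 4 * ((n : ℝ) - N) ^ 4 / (n : ℝ) ^ 2)) := by
        field_simp
      rw [e1, e2]
      apply mul_le_mul_of_nonneg_left _ (by positivity : (0:ℝ) ≤ 1 / ((n : ℝ) + 1))
      exact mul_le_mul_of_nonneg_left hcore (hpnn N)
    · positivity
  have hgsum : Summable g := Summable.of_nonneg_of_le hgnn hgle hhsum.summable
  -- split the target function
  have hsplit : ∀ N : ℕ, p N * (((n : ℝ) - N) / ((min n N : ℕ) + 1 : ℝ)) =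
      p N * (((n : ℝ) - N) / ((n : ℝ) + 1)) + g N := by
    intro N
    by_cases hN : N < n
    · have hm : min n N = N := min_eq_right hN.le
      simp only [hg, hm, if_pos hN]
      have hNe : ((N : ℝ) + 1) ≠ 0 := by positivity
      have hne : ((n : ℝ) + 1) ≠ 0 := by positivity
      field_simp
      ring
    · have hm : min n N = n := min_eq_left (not_lt.mp hN)
      simp only [hg, hm, if_neg hN, add_zero]
  calc ∑' N : ℕ, (Real.exp (-(n : ℝ)) * (n : ℝ) ^ N / N.factorial) *
        (((n : ℝ) - N) / ((min n N : ℕ) + 1 : ℝ))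
      = ∑' N : ℕ, (p N * (((n : ℝ) - N) / ((n : ℝ) + 1)) + g N) := tsum_congr hsplit
    _ = (∑' N : ℕ, p N * (((n : ℝ) - N) / ((n : ℝ) + 1))) + ∑' N, g N :=
        Summable.tsum_add (pC n).summable hgsum
    _ = ∑' N, g N := by rw [(pC n).tsum_eq, zero_add]
    _ ≤ ∑' N, h N := Summable.tsum_le_tsum hgle hgsum hhsum.summable
    _ = 1 / ((n : ℝ) + 1) *
        (2 / (n : ℝ) * (n : ℝ) + 4 / (n : ℝ) ^ 2 * (3 * (n : ℝ) ^ 2 + n)) := hhsum.tsum_eq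
    _ ≤ 29 / n := by
        have hnne : (n : ℝ) ≠ 0 := ne_of_gt hn0
        have key : 1 / ((n : ℝ) + 1) *
            (2 / (n : ℝ) * (n : ℝ) + 4 / (n : ℝ) ^ 2 * (3 * (n : ℝ) ^ 2 + n)) =
            (14 * (n : ℝ) + 4) / ((n : ℝ) * ((n : ℝ) + 1)) := by
          field_simp
          ring
        rw [key, div_le_div_iff₀ (by positivity) hn0]
        nlinarith
end

section
/- If N ~ Poisson(n) with n a positive integer, then E[(n − N)^2 / (min(n, N) + 1)^2] ≤ 282/n. -/
open scoped Nat

lemma tsum_pow_div_factorial (t : ℝ) :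
    ∑' M : ℕ, t ^ M / M.factorial = Real.exp t := by
  rw [Real.exp_eq_exp_ℝ, NormedSpace.exp_eq_tsum_div]

lemma summable_mul_pow (t : ℝ) : Summable (fun M : ℕ => M * t ^ M / M.factorial) := by
  rw [← summable_nat_add_iff 1]
  have : (fun M : ℕ => ((M+1 : ℕ) : ℝ) * t ^ (M+1) / (M+1).factorial)
      = fun M : ℕ => t * (t ^ M / M.factorial) := by
    funext M
    rw [Nat.factorial_succ]
    push_cast
    field_simp
    ring
  rw [this]
  exact (Real.summable_pow_div_factorial t).mul_left t

lemma tsum_mul_pow (t : ℝ) :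
    ∑' M : ℕ, M * t ^ M / M.factorial = t * Real.exp t := by
  rw [Summable.tsum_eq_zero_add (summable_mul_pow t)]
  simp only [Nat.cast_zero, zero_mul, pow_zero, Nat.factorial_zero, Nat.cast_one, zero_div, zero_add]
  have : (fun M : ℕ => ((M+1 : ℕ) : ℝ) * t ^ (M+1) / (M+1).factorial)
      = fun M : ℕ => t * (t ^ M / M.factorial) := by
    funext M
    rw [Nat.factorial_succ]
    push_cast
    field_simp
    ring
  rw [this, tsum_mul_left, tsum_pow_div_factorial]

lemma summable_mul2_pow (t : ℝ) :
    Summable (fun M : ℕ => (M * (M - 1) : ℝ) * t ^ M / M.factorial) := by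
  rw [← summable_nat_add_iff 2]
  have : (fun M : ℕ => (((M+2 : ℕ):ℝ) * (((M+2 : ℕ):ℝ) - 1)) * t ^ (M+2) / (M+2).factorial)
      = fun M : ℕ => (t * t) * (t ^ M / M.factorial) := by
    funext M
    rw [show (M+2).factorial = (M+2) * ((M+1) * M.factorial) by
      rw [Nat.factorial_succ, Nat.factorial_succ]]
    push_cast
    field_simp
    ring
  rw [this]
  exact (Real.summable_pow_div_factorial t).mul_left _

lemma tsum_mul2_pow (t : ℝ) :
    ∑' M : ℕ, (M * (M - 1) : ℝ) * t ^ M / M.factorial = t ^ 2 * Real.exp t := by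
  rw [Summable.tsum_eq_zero_add (summable_mul2_pow t),
    Summable.tsum_eq_zero_add ((summable_nat_add_iff 1).mpr (summable_mul2_pow t))]
  have : (fun M : ℕ => (((M+1+1 : ℕ):ℝ) * (((M+1+1 : ℕ):ℝ) - 1)) * t ^ (M+1+1) / (M+1+1).factorial)
      = fun M : ℕ => (t * t) * (t ^ M / M.factorial) := by
    funext M
    rw [show (M+1+1).factorial = (M+2) * ((M+1) * M.factorial) by
      rw [Nat.factorial_succ, Nat.factorial_succ]]
    push_cast
    field_simp
    ring
  rw [this, tsum_mul_left, tsum_pow_div_factorial]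
  norm_num
  ring

lemma sq_decomp (t c : ℝ) :
    (fun M : ℕ => (c - M) ^ 2 * t ^ M / M.factorial)
      = fun M : ℕ => (M * (M - 1) : ℝ) * t ^ M / M.factorial
          + ((1 - 2*c) * (M * t ^ M / M.factorial) + c ^ 2 * (t ^ M / M.factorial)) := by
  funext M
  have h : (M.factorial : ℝ) ≠ 0 := Nat.cast_ne_zero.mpr M.factorial_ne_zero
  field_simp
  ring

lemma summable_sq (t c : ℝ) :
    Summable (fun M : ℕ => (c - M) ^ 2 * t ^ M / M.factorial) := by
  rw [sq_decomp]
  exact (summable_mul2_pow t).add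
    ((((summable_mul_pow t).mul_left _)).add
      ((Real.summable_pow_div_factorial t).mul_left _))

lemma tsum_sq (t c : ℝ) :
    ∑' M : ℕ, (c - M) ^ 2 * t ^ M / M.factorial = ((c - t) ^ 2 + t) * Real.exp t := by
  rw [sq_decomp,
    Summable.tsum_add (summable_mul2_pow t)
      ((((summable_mul_pow t).mul_left _)).add ((Real.summable_pow_div_factorial t).mul_left _)),
    Summable.tsum_add (((summable_mul_pow t)).mul_left _) ((Real.summable_pow_div_factorial t).mul_left _),
    tsum_mul_left, tsum_mul_left, tsum_mul2_pow, tsum_mul_pow, tsum_pow_div_factorial]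
  ring

/-- If `N ~ Poisson(n)` with `n ≥ 1`, then `E[(n − N)²/(min(n, N) + 1)²] ≤ 282/n`. -/
theorem poisson_expectation_second_term (n : ℕ) (hn : 0 < n) :
    ∑' N : ℕ, (Real.exp (-(n : ℝ)) * (n : ℝ) ^ N / N.factorial) *
        (((n : ℝ) - N) ^ 2 / ((min n N : ℕ) + 1 : ℝ) ^ 2)
      ≤ 282 / n := by
  set x : ℝ := (n : ℝ) with hxdef
  have hn1 : 1 ≤ n := hn
  have hx : (1 : ℝ) ≤ x := by rw [hxdef]; exact_mod_cast hn1
  have hx0 : (0 : ℝ) < x := by linarith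
  set g : ℕ → ℝ := fun M => (2 * Real.exp (-x) / x ^ 2) *
      ((x + 2 - M) ^ 2 * x ^ M / M.factorial) with hg
  set A : ℕ → ℝ := fun N => (Real.exp (-x) / (x + 1) ^ 2) *
      ((x - N) ^ 2 * x ^ N / N.factorial) with hA
  set B : ℕ → ℝ := fun N => g (N + 2) with hB
  have hgnn : ∀ M, 0 ≤ g M := by
    intro M
    apply mul_nonneg (by positivity)
    positivity
  have hSg : Summable g := (summable_sq x (x + 2)).mul_left _
  have hSA : Summable A := (summable_sq x x).mul_left _
  have hSB : Summable B := by
    rw [hB]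
    exact (summable_nat_add_iff 2).mpr hSg
  -- termwise bound
  have key : ∀ N : ℕ, (Real.exp (-x) * x ^ N / N.factorial) *
      ((x - N) ^ 2 / ((min n N : ℕ) + 1 : ℝ) ^ 2) ≤ A N + B N := by
    intro N
    set c : ℝ := Real.exp (-x) * x ^ N / N.factorial * (x - N) ^ 2 with hc
    have hcnn : 0 ≤ c := by positivity
    have hmin : (1 : ℝ) / (((min n N : ℕ) : ℝ) + 1) ^ 2
        ≤ 1 / (x + 1) ^ 2 + 2 / (((N : ℝ) + 1) * ((N : ℝ) + 2)) := by
      rcases le_total n N with h | h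
      · rw [min_eq_left h, hxdef]
        have : (0:ℝ) ≤ 2 / (((N : ℝ) + 1) * ((N : ℝ) + 2)) := by positivity
        linarith
      · rw [min_eq_right h]
        have h1 : (1 : ℝ) / (((N : ℕ) : ℝ) + 1) ^ 2
            ≤ 2 / (((N : ℝ) + 1) * ((N : ℝ) + 2)) := by
          rw [div_le_div_iff₀ (by positivity) (by positivity)]
          nlinarith [Nat.cast_nonneg (α := ℝ) N]
        have h2 : (0:ℝ) ≤ 1 / (x + 1) ^ 2 := by positivity
        linarith
    have hBN : c * (2 / (((N : ℝ) + 1) * ((N : ℝ) + 2))) = B N := by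
      rw [hB, hg, hc]
      simp only
      rw [show ((N + 2).factorial : ℝ) = ((N:ℝ) + 2) * (((N:ℝ) + 1) * N.factorial) by
        rw [Nat.factorial_succ, Nat.factorial_succ]; push_cast; ring]
      have hf : (N.factorial : ℝ) ≠ 0 := Nat.cast_ne_zero.mpr N.factorial_ne_zero
      push_cast
      field_simp
      ring
    calc (Real.exp (-x) * x ^ N / N.factorial) *
          ((x - N) ^ 2 / ((min n N : ℕ) + 1 : ℝ) ^ 2)
        = c * ((1 : ℝ) / (((min n N : ℕ) : ℝ) + 1) ^ 2) := by rw [hc]; ring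
      _ ≤ c * (1 / (x + 1) ^ 2 + 2 / (((N : ℝ) + 1) * ((N : ℝ) + 2))) :=
          mul_le_mul_of_nonneg_left hmin hcnn
      _ = A N + c * (2 / (((N : ℝ) + 1) * ((N : ℝ) + 2))) := by rw [hA, hc]; simp only; ring
      _ = A N + B N := by rw [hBN]
  have hSf : Summable (fun N : ℕ => (Real.exp (-x) * x ^ N / N.factorial) *
      ((x - N) ^ 2 / ((min n N : ℕ) + 1 : ℝ) ^ 2)) := by
    apply Summable.of_nonneg_of_le (fun N => by positivity) key (hSA.add hSB)
  have hexp : Real.exp (-x) * Real.exp x = 1 := by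
    rw [← Real.exp_add]; simp
  have htA : ∑' N, A N = x / (x + 1) ^ 2 := by
    rw [hA, tsum_mul_left, tsum_sq x x]
    rw [sub_self]
    field_simp
    nlinarith [hexp]
  have htg : ∑' M, g M = 2 * (x + 4) / x ^ 2 := by
    rw [hg, tsum_mul_left, tsum_sq x (x + 2)]
    have : (x + 2 - x) ^ 2 + x = x + 4 := by ring
    rw [this]
    field_simp
    nlinarith [hexp]
  have htB : ∑' N, B N ≤ 2 * (x + 4) / x ^ 2 := by
    rw [← htg]
    apply Summable.tsum_le_tsum_of_inj (fun N => N + 2)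
      (fun a b h => by simpa using h) (fun m _ => hgnn m) (fun N => le_refl _) hSB hSg
  calc ∑' N : ℕ, (Real.exp (-x) * x ^ N / N.factorial) *
        ((x - N) ^ 2 / ((min n N : ℕ) + 1 : ℝ) ^ 2)
      ≤ ∑' N, (A N + B N) := Summable.tsum_le_tsum key hSf (hSA.add hSB)
    _ = (∑' N, A N) + ∑' N, B N := Summable.tsum_add hSA hSB
    _ ≤ x / (x + 1) ^ 2 + 2 * (x + 4) / x ^ 2 := by rw [htA]; linarith [htB]
    _ ≤ 282 / x := by
        rw [div_add_div _ _ (by positivity) (by positivity), div_le_div_iff₀ (by positivity) hx0]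
        nlinarith [sq_nonneg x, sq_nonneg (x - 1), sq_nonneg (x + 1)]
end

section
/- If N ~ Poisson(n) with n a positive integer and p ∈ (0,1], then E[|n − N| / ((min(n, N) + 1)^2 p)] ≤ 160/(n^{3/2} p). -/
open Real Finset

private lemma exp_tsum (x : ℝ) : ∑' N : ℕ, x ^ N / N.factorial = Real.exp x := by
  rw [Real.exp_eq_exp_ℝ, NormedSpace.exp_eq_tsum_div]

private lemma succ_term (x : ℝ) :
    (fun N : ℕ => ((N + 1 : ℕ) : ℝ) * (x ^ (N + 1) / (N + 1).factorial))
      = fun N : ℕ => x * (x ^ N / N.factorial) := by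
  funext N
  have hf : ((N + 1).factorial : ℝ) = (N + 1) * N.factorial := by
    rw [Nat.factorial_succ]; push_cast; ring
  have h1 : ((N : ℝ) + 1) ≠ 0 := by positivity
  have h2 : (N.factorial : ℝ) ≠ 0 := by positivity
  rw [hf]; push_cast; field_simp; ring

private lemma summable_mul_nat (x : ℝ) :
    Summable (fun N : ℕ => (N : ℝ) * (x ^ N / N.factorial)) := by
  rw [← summable_nat_add_iff 1]
  have := (Real.summable_pow_div_factorial x).mul_left x
  convert this using 1
  · rfl
  exact succ_term x

private lemma tsum_mul_nat (x : ℝ) :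
    ∑' N : ℕ, (N : ℝ) * (x ^ N / N.factorial) = x * Real.exp x := by
  rw [Summable.tsum_eq_zero_add (summable_mul_nat x)]
  simp only [Nat.cast_zero, zero_mul, zero_add]
  have : (fun N : ℕ => ((N + 1 : ℕ) : ℝ) * (x ^ (N + 1) / (N + 1).factorial))
      = fun N : ℕ => x * (x ^ N / N.factorial) := succ_term x
  push_cast at this ⊢
  rw [this, tsum_mul_left, exp_tsum]

private lemma telescope (x : ℝ) (k : ℕ) :
    ∑ N ∈ Finset.range (k + 1), (x - N) * (x ^ N / N.factorial)
      = x ^ (k + 1) / k.factorial := by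
  induction k with
  | zero => simp
  | succ k ih =>
    rw [Finset.sum_range_succ, ih]
    have hf : ((k + 1).factorial : ℝ) = (k + 1) * k.factorial := by
      rw [Nat.factorial_succ]; push_cast; ring
    have h1 : ((k : ℝ) + 1) ≠ 0 := by positivity
    have h2 : (k.factorial : ℝ) ≠ 0 := by positivity
    rw [hf]; push_cast; field_simp; ring

private lemma mad_eq (n : ℕ) (hn : 0 < n) :
    ∑' N : ℕ, |(n : ℝ) - N| * ((n : ℝ) ^ N / N.factorial)
      = 2 * ((n : ℝ) ^ n / (n - 1).factorial) := by
  set x : ℝ := (n : ℝ) with hx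
  have hq : ∀ N : ℕ, 0 ≤ x ^ N / N.factorial := fun N => by positivity
  have hS1 : Summable (fun N : ℕ => x ^ N / N.factorial) := Real.summable_pow_div_factorial x
  have hSsub : Summable (fun N : ℕ => ((N : ℝ) - x) * (x ^ N / N.factorial)) := by
    have : (fun N : ℕ => ((N : ℝ) - x) * (x ^ N / N.factorial))
        = fun N : ℕ => (N : ℝ) * (x ^ N / N.factorial) - x * (x ^ N / N.factorial) := by
      funext N; ring
    rw [this]
    exact (summable_mul_nat x).sub (hS1.mul_left x)
  have hmaxzero : ∀ N : ℕ, N ∉ Finset.range n → max (x - N) 0 * (x ^ N / N.factorial) = 0 := by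
    intro N hN
    have : (n : ℝ) ≤ N := by
      have := Finset.mem_range.not.mp hN
      exact_mod_cast Nat.le_of_not_lt (by omega)
    have : max (x - N) 0 = 0 := max_eq_right (by simp only [hx]; linarith)
    rw [this, zero_mul]
  have hSmax : Summable (fun N : ℕ => max (x - N) 0 * (x ^ N / N.factorial)) :=
    summable_of_ne_finset_zero (s := Finset.range n) hmaxzero
  have habs : ∀ N : ℕ, |x - N| * (x ^ N / N.factorial)
      = ((N : ℝ) - x) * (x ^ N / N.factorial) + 2 * (max (x - N) 0 * (x ^ N / N.factorial)) := by
    intro N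
    rcases le_total x (N : ℝ) with h | h
    · rw [abs_of_nonpos (by linarith), max_eq_right (by linarith)]; ring
    · rw [abs_of_nonneg (by linarith), max_eq_left (by linarith)]; ring
  calc ∑' N : ℕ, |x - N| * (x ^ N / N.factorial)
      = ∑' N : ℕ, (((N : ℝ) - x) * (x ^ N / N.factorial)
          + 2 * (max (x - N) 0 * (x ^ N / N.factorial))) := tsum_congr habs
    _ = ∑' N : ℕ, ((N : ℝ) - x) * (x ^ N / N.factorial)
          + 2 * ∑' N : ℕ, max (x - N) 0 * (x ^ N / N.factorial) := by
        rw [Summable.tsum_add hSsub (hSmax.mul_left 2), tsum_mul_left]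
    _ = 0 + 2 * (x ^ n / (n - 1).factorial) := by
        congr 1
        · congr 1
          have : (fun N : ℕ => ((N : ℝ) - x) * (x ^ N / N.factorial))
              = fun N : ℕ => (N : ℝ) * (x ^ N / N.factorial) - x * (x ^ N / N.factorial) := by
            funext N; ring
          rw [this, Summable.tsum_sub (summable_mul_nat x) (hS1.mul_left x), tsum_mul_nat,
            tsum_mul_left, exp_tsum]
          ring
        · congr 1
          rw [tsum_eq_sum hmaxzero]
          obtain ⟨k, rfl⟩ : ∃ k, n = k + 1 := ⟨n - 1, by omega⟩
          rw [show k + 1 - 1 = k by omega, ← telescope x k]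
          apply Finset.sum_congr rfl
          intro N hN
          have hNk : N < k + 1 := Finset.mem_range.mp hN
          have : (0 : ℝ) ≤ x - N := by
            simp only [hx]; push_cast
            have : (N : ℝ) ≤ k := by exact_mod_cast Nat.lt_succ_iff.mp hNk
            linarith
          rw [max_eq_left this]
    _ = 2 * (x ^ n / (n - 1).factorial) := by ring

private lemma stirling_lb (m : ℕ) (hm : 0 < m) :
    Real.sqrt (2 * Real.pi * m) * ((m : ℝ) / Real.exp 1) ^ m ≤ m.factorial := by
  obtain ⟨k, rfl⟩ : ∃ k, m = k + 1 := ⟨m - 1, by omega⟩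
  have hlim : Filter.Tendsto (Stirling.stirlingSeq ∘ Nat.succ) Filter.atTop
      (nhds (Real.sqrt Real.pi)) :=
    Stirling.tendsto_stirlingSeq_sqrt_pi.comp (Filter.tendsto_add_atTop_nat 1)
  have h1 : Real.sqrt Real.pi ≤ Stirling.stirlingSeq (k + 1) :=
    Stirling.stirlingSeq'_antitone.le_of_tendsto hlim k
  rw [Stirling.stirlingSeq] at h1
  push_cast at h1
  have hpos : 0 < Real.sqrt (2 * ((k : ℝ) + 1)) * (((k : ℝ) + 1) / Real.exp 1) ^ (k + 1) := by
    positivity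
  rw [le_div_iff₀ hpos] at h1
  calc Real.sqrt (2 * Real.pi * (k + 1 : ℕ)) * (((k + 1 : ℕ) : ℝ) / Real.exp 1) ^ (k + 1)
      = Real.sqrt Real.pi * (Real.sqrt (2 * ((k : ℝ) + 1)) * (((k : ℝ) + 1) / Real.exp 1) ^ (k + 1)) := by
        push_cast
        rw [show 2 * Real.pi * ((k : ℝ) + 1) = Real.pi * (2 * ((k : ℝ) + 1)) by ring,
          Real.sqrt_mul Real.pi_pos.le]
        ring
    _ ≤ ((k + 1).factorial : ℝ) := by
        convert h1 using 2 <;> push_cast <;> ring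

-- (n/e)^n = exp(-n) * n^n
private lemma exp_neg_pow (x : ℝ) (k : ℕ) :
    (x / Real.exp 1) ^ k = Real.exp (-(k : ℝ)) * x ^ k := by
  rw [div_pow, Real.exp_one_pow, Real.exp_neg]
  ring

private lemma pmf_max (n : ℕ) (hn : 0 < n) :
    Real.exp (-(n : ℝ)) * (n : ℝ) ^ n / n.factorial ≤ 1 / (2 * Real.sqrt n) := by
  have hx : (0 : ℝ) < n := by exact_mod_cast hn
  have hst := stirling_lb n hn
  rw [exp_neg_pow] at hst
  have h2 : 2 * Real.sqrt (n : ℝ) ≤ Real.sqrt (2 * Real.pi * n) := by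
    rw [show (2 : ℝ) * Real.sqrt n = Real.sqrt 4 * Real.sqrt n by
      rw [show (4 : ℝ) = 2 ^ 2 by norm_num, Real.sqrt_sq (by norm_num)],
      ← Real.sqrt_mul (by norm_num)]
    apply Real.sqrt_le_sqrt
    nlinarith [Real.pi_gt_three]
  have hfpos : (0 : ℝ) < n.factorial := by positivity
  have hppos : (0 : ℝ) < Real.exp (-(n : ℝ)) * (n : ℝ) ^ n := by positivity
  rw [div_le_div_iff₀ hfpos (by positivity)]
  calc Real.exp (-(n : ℝ)) * (n : ℝ) ^ n * (2 * Real.sqrt n)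
      ≤ Real.exp (-(n : ℝ)) * (n : ℝ) ^ n * Real.sqrt (2 * Real.pi * n) := by
        apply mul_le_mul_of_nonneg_left h2 hppos.le
    _ = Real.sqrt (2 * Real.pi * n) * (Real.exp (-(n : ℝ)) * (n : ℝ) ^ n) := by ring
    _ ≤ 1 * n.factorial := by rw [one_mul]; exact hst

-- the pmf-without-exp ratio step: q N ≤ (1/2) * q (N+1) when 2*(N+1) ≤ x
private lemma q_step (x : ℝ) (N : ℕ) (h : 2 * ((N : ℝ) + 1) ≤ x) (hx : 0 < x) :
    x ^ N / N.factorial ≤ (1 / 2) * (x ^ (N + 1) / (N + 1).factorial) := by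
  have hf : ((N + 1).factorial : ℝ) = ((N : ℝ) + 1) * N.factorial := by
    rw [Nat.factorial_succ]; push_cast; ring
  have h1 : (0 : ℝ) < (N : ℝ) + 1 := by positivity
  have h2 : (0 : ℝ) < (N.factorial : ℝ) := by positivity
  have hr : (1 / 2 : ℝ) * (x ^ (N + 1) / (((N : ℝ) + 1) * N.factorial))
      = (x ^ N * x) / (2 * (((N : ℝ) + 1) * N.factorial)) := by
    rw [pow_succ]; field_simp
  rw [hf, hr, div_le_div_iff₀ h2 (by positivity)]
  have hxN : (0 : ℝ) ≤ x ^ N := by positivity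
  nlinarith [mul_le_mul_of_nonneg_left h (mul_nonneg hxN h2.le)]

private lemma q_chain (x : ℝ) (hx : 0 < x) (m : ℕ) (hm : 2 * ((m : ℝ)) ≤ x) :
    ∀ j, j ≤ m → x ^ (m - j) / (m - j).factorial ≤ (1 / 2) ^ j * (x ^ m / m.factorial) := by
  intro j
  induction j with
  | zero => intro _; simp
  | succ j ih =>
    intro hj
    have hj' : j ≤ m := by omega
    have hstep : x ^ (m - (j + 1)) / (m - (j + 1)).factorial
        ≤ (1 / 2) * (x ^ (m - j) / (m - j).factorial) := by
      have hidx : m - (j + 1) + 1 = m - j := by omega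
      have hc : 2 * (((m - (j + 1) : ℕ) : ℝ) + 1) ≤ x := by
        have : ((m - (j + 1) : ℕ) : ℝ) + 1 ≤ (m : ℝ) := by
          have : m - (j + 1) + 1 ≤ m := by omega
          exact_mod_cast this
        linarith
      have := q_step x (m - (j + 1)) hc hx
      rwa [hidx] at this
    calc x ^ (m - (j + 1)) / (m - (j + 1)).factorial
        ≤ (1 / 2) * (x ^ (m - j) / (m - j).factorial) := hstep
      _ ≤ (1 / 2) * ((1 / 2) ^ j * (x ^ m / m.factorial)) := by
          apply mul_le_mul_of_nonneg_left (ih hj') (by norm_num)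
      _ = (1 / 2) ^ (j + 1) * (x ^ m / m.factorial) := by ring

private lemma geo_sum (n : ℕ) (hn : 0 < n) :
    ∑ N ∈ Finset.range ((n + 1) / 2), (n : ℝ) ^ N / N.factorial
      ≤ 2 * ((n : ℝ) ^ ((n - 1) / 2) / ((n - 1) / 2).factorial) := by
  set K := (n + 1) / 2 with hK
  set m := (n - 1) / 2 with hm
  have hKm : K = m + 1 := by omega
  have hx : (0 : ℝ) < n := by exact_mod_cast hn
  have h2m : 2 * ((m : ℝ)) ≤ (n : ℝ) := by
    have : 2 * m ≤ n := by omega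
    exact_mod_cast this
  have hrefl : ∑ N ∈ Finset.range K, (n : ℝ) ^ N / N.factorial
      = ∑ j ∈ Finset.range K, (n : ℝ) ^ (K - 1 - j) / (K - 1 - j).factorial :=
    (Finset.sum_range_reflect (fun N => (n : ℝ) ^ N / N.factorial) K).symm
  rw [hrefl]
  have hterm : ∀ j ∈ Finset.range K, (n : ℝ) ^ (K - 1 - j) / (K - 1 - j).factorial
      ≤ (1 / 2) ^ j * ((n : ℝ) ^ m / m.factorial) := by
    intro j hj
    have hjm : j ≤ m := by
      have := Finset.mem_range.mp hj; omega
    have : K - 1 - j = m - j := by omega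
    rw [this]
    exact q_chain (n : ℝ) hx m h2m j hjm
  calc ∑ j ∈ Finset.range K, (n : ℝ) ^ (K - 1 - j) / (K - 1 - j).factorial
      ≤ ∑ j ∈ Finset.range K, (1 / 2) ^ j * ((n : ℝ) ^ m / m.factorial) :=
        Finset.sum_le_sum hterm
    _ = (∑ j ∈ Finset.range K, (1 / 2 : ℝ) ^ j) * ((n : ℝ) ^ m / m.factorial) := by
        rw [Finset.sum_mul]
    _ ≤ 2 * ((n : ℝ) ^ m / m.factorial) := by
        apply mul_le_mul_of_nonneg_right _ (by positivity)
        have := geom_sum_eq (show (1 / 2 : ℝ) ≠ 1 by norm_num) K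
        rw [this]
        have : (0 : ℝ) ≤ (1 / 2 : ℝ) ^ K := by positivity
        rw [div_eq_mul_inv]
        nlinarith

private lemma final_numeric (c x : ℝ) (hc015 : (0.15:ℝ) ≤ c) (hc0 : 0 < c) (hx0 : 0 < x) :
    (2 / (c * x) ^ 2) / (1.6 * Real.sqrt x) ≤ 78 / (x ^ 2 * Real.sqrt x) := by
  have hsx : (0 : ℝ) < Real.sqrt x := Real.sqrt_pos.mpr hx0
  rw [div_le_div_iff₀ (by positivity) (by positivity)]
  have he : 2 / (c * x) ^ 2 * (x ^ 2 * Real.sqrt x) = (2 / c ^ 2) * Real.sqrt x := by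
    field_simp
  rw [he]
  have h2 : 2 / c ^ 2 ≤ 78 * 1.6 := by
    rw [div_le_iff₀ (by positivity)]
    nlinarith
  calc (2 / c ^ 2) * Real.sqrt x ≤ (78 * 1.6) * Real.sqrt x :=
        mul_le_mul_of_nonneg_right h2 hsx.le
    _ = 78 * (1.6 * Real.sqrt x) := by ring

private lemma headF (n : ℕ) (hn : 13 ≤ n) :
    2 * (n : ℝ) * (Real.exp (-(n : ℝ)) * (n : ℝ) ^ ((n - 1) / 2) / ((n - 1) / 2).factorial)
      ≤ 156 / ((n : ℝ) * Real.sqrt n) := by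
  set m := (n - 1) / 2 with hmdef
  set x : ℝ := (n : ℝ) with hxdef
  set M : ℝ := (m : ℝ) with hMdef
  have hx13 : (13 : ℝ) ≤ x := by show (13:ℝ) ≤ (n:ℝ); exact_mod_cast hn
  have hx0 : (0 : ℝ) < x := by linarith
  have hm6 : 6 ≤ m := by omega
  have hM6 : (6 : ℝ) ≤ M := by show (6:ℝ) ≤ (m:ℝ); exact_mod_cast hm6
  have hM0 : (0 : ℝ) < M := by linarith
  have h2mle : 2 * M ≤ x - 1 := by
    have : 2 * m ≤ n - 1 := by omega
    have h' : (2 * m : ℝ) ≤ ((n - 1 : ℕ) : ℝ) := by exact_mod_cast this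
    have : ((n - 1 : ℕ) : ℝ) = x - 1 := by
      rw [hxdef]; push_cast [Nat.cast_sub (by omega : 1 ≤ n)]; ring
    rw [this] at h'; linarith [h']
  have h2mge : x - 2 ≤ 2 * M := by
    have : n - 2 ≤ 2 * m := by omega
    have h' : ((n - 2 : ℕ) : ℝ) ≤ (2 * m : ℝ) := by exact_mod_cast this
    have : ((n - 2 : ℕ) : ℝ) = x - 2 := by
      rw [hxdef]; push_cast [Nat.cast_sub (by omega : 2 ≤ n)]; ring
    rw [this] at h'; linarith [h']
  set c : ℝ := (1 - Real.log 2) / 2 with hcdef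
  have hlog2 : (0 : ℝ) < Real.log 2 := Real.log_pos (by norm_num)
  have hlog2' : Real.log 2 < 0.6931471808 := Real.log_two_lt_d9
  have hc015 : (0.15 : ℝ) ≤ c := by rw [hcdef]; nlinarith
  have hc0 : (0 : ℝ) < c := by linarith
  clear_value x M c
  -- Step I : exp(-x) x^m / m! ≤ exp(-c x) / sqrt (2 π M)
  have hstir := stirling_lb m (by omega)
  rw [exp_neg_pow] at hstir
  rw [← hMdef] at hstir
  have hsq : (0 : ℝ) < Real.sqrt (2 * Real.pi * M) := by
    apply Real.sqrt_pos.mpr; positivity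
  have hd_pos : (0 : ℝ) < Real.sqrt (2 * Real.pi * M) * (Real.exp (-M) * M ^ m) := by positivity
  have hI1 : Real.exp (-x) * x ^ m / m.factorial
      ≤ Real.exp (-x) * x ^ m / (Real.sqrt (2 * Real.pi * M) * (Real.exp (-M) * M ^ m)) := by
    apply div_le_div_of_nonneg_left (by positivity) hd_pos
    exact hstir
  have hI2 : Real.exp (-x) * x ^ m / (Real.sqrt (2 * Real.pi * M) * (Real.exp (-M) * M ^ m))
      = Real.exp (-x + M + m * Real.log (x / M)) / Real.sqrt (2 * Real.pi * M) := by
    have hlog : Real.exp ((m : ℝ) * Real.log (x / M)) = (x / M) ^ m := by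
      rw [Real.exp_nat_mul, Real.exp_log (by positivity)]
    rw [Real.exp_add, Real.exp_add, hlog, div_pow]
    rw [Real.exp_neg x, Real.exp_neg M]
    field_simp
  have hMxhalf : M ≤ x / 2 := by linarith
  have hexpbound : -x + M + m * Real.log (x / M) ≤ -(c * x) := by
    have hsplit : Real.log (x / M) = Real.log 2 + Real.log (x / (2 * M)) := by
      have h1 : x / M = 2 * (x / (2 * M)) := by
        field_simp
      rw [h1, Real.log_mul (by norm_num) (by positivity)]
    have hlb : Real.log (x / (2 * M)) ≤ x / (2 * M) - 1 :=
      Real.log_le_sub_one_of_pos (by positivity)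
    have hMx : M * (x / (2 * M)) = x / 2 := by
      field_simp
    have : (m : ℝ) * Real.log (x / M) ≤ M * Real.log 2 + x / 2 - M := by
      rw [← hMdef, hsplit]
      have := mul_le_mul_of_nonneg_left hlb hM0.le
      nlinarith [hMx]
    rw [hcdef]
    nlinarith
  have hI : Real.exp (-x) * x ^ m / m.factorial
      ≤ Real.exp (-(c * x)) / Real.sqrt (2 * Real.pi * M) := by
    refine hI1.trans ?_
    rw [hI2]
    gcongr
  -- Step II : exp(-(c*x)) ≤ 2 / (c*x)^2
  have hII : Real.exp (-(c * x)) ≤ 2 / (c * x) ^ 2 := by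
    have hcx : (0 : ℝ) ≤ c * x := by positivity
    have hsum := Real.sum_le_exp_of_nonneg hcx 3
    have hsum' : 1 + c * x + (c * x) ^ 2 / 2 ≤ Real.exp (c * x) := by
      have heq : ∑ i ∈ Finset.range 3, (c * x) ^ i / i.factorial
          = 1 + c * x + (c * x) ^ 2 / 2 := by
        simp [Finset.sum_range_succ]
      rw [heq] at hsum
      linarith
    rw [Real.exp_neg]
    have hlow : (c * x) ^ 2 / 2 ≤ Real.exp (c * x) := by linarith
    calc (Real.exp (c * x))⁻¹ ≤ ((c * x) ^ 2 / 2)⁻¹ := by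
          apply inv_anti₀ (by positivity) hlow
      _ = 2 / (c * x) ^ 2 := by rw [inv_div]
  -- Step III : 1.6 * sqrt x ≤ sqrt (2 π M)
  have hIII : 1.6 * Real.sqrt x ≤ Real.sqrt (2 * Real.pi * M) := by
    have h1 : (1.6 : ℝ) * Real.sqrt x = Real.sqrt (2.56 * x) := by
      rw [show (2.56 : ℝ) = 1.6 ^ 2 by norm_num, Real.sqrt_mul (by norm_num),
        Real.sqrt_sq (by norm_num)]
    rw [h1]
    apply Real.sqrt_le_sqrt
    have hpi := Real.pi_gt_d6
    have h1' : Real.pi * (x - 2) ≤ Real.pi * (2 * M) :=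
      mul_le_mul_of_nonneg_left h2mge Real.pi_pos.le
    have h2' : 3.141592 * (x - 2) ≤ Real.pi * (x - 2) :=
      mul_le_mul_of_nonneg_right hpi.le (by linarith)
    linarith
  -- assemble
  have hsx : (0 : ℝ) < Real.sqrt x := Real.sqrt_pos.mpr hx0
  have hkey : Real.exp (-x) * x ^ m / m.factorial ≤ 78 / (x ^ 2 * Real.sqrt x) := by
    refine hI.trans ?_
    calc Real.exp (-(c * x)) / Real.sqrt (2 * Real.pi * M)
        ≤ (2 / (c * x) ^ 2) / (1.6 * Real.sqrt x) :=
          div_le_div₀ (by positivity) hII (by positivity) hIII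
      _ ≤ 78 / (x ^ 2 * Real.sqrt x) := final_numeric c x hc015 hc0 hx0
  calc 2 * x * (Real.exp (-x) * x ^ m / m.factorial)
      ≤ 2 * x * (78 / (x ^ 2 * Real.sqrt x)) := by
        apply mul_le_mul_of_nonneg_left hkey (by positivity)
    _ = 156 / (x * Real.sqrt x) := by
        field_simp
        ring

/-- If `N ~ Poisson(n)` with `n ≥ 1` and `p ∈ (0,1]`, then
`E[|n − N| / ((min(n, N) + 1)² p)] ≤ 160/(n^{3/2} p)`. -/
theorem poisson_expectation_third_term (n : ℕ) (hn : 0 < n) (p : ℝ)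
    (hp : p ∈ Set.Ioc (0 : ℝ) 1) :
    ∑' N : ℕ, (Real.exp (-(n : ℝ)) * (n : ℝ) ^ N / N.factorial) *
        (|(n : ℝ) - N| / (((min n N : ℕ) + 1 : ℝ) ^ 2 * p))
      ≤ 160 / ((n : ℝ) ^ ((3 : ℝ) / 2) * p) := by
  obtain ⟨hp0, hp1⟩ := hp
  have hx0 : (0 : ℝ) < (n : ℝ) := by exact_mod_cast hn
  have hsx : (0 : ℝ) < Real.sqrt n := Real.sqrt_pos.mpr hx0
  have hx32 : (n : ℝ) ^ ((3 : ℝ) / 2) = (n : ℝ) * Real.sqrt n := by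
    rw [show (3 : ℝ) / 2 = 1 + 1 / 2 by norm_num, Real.rpow_add hx0, Real.rpow_one,
      ← Real.sqrt_eq_rpow]
  set g : ℕ → ℝ := fun N => (Real.exp (-(n : ℝ)) * (n : ℝ) ^ N / N.factorial) *
      (|(n : ℝ) - N| / (((min n N : ℕ) : ℝ) + 1) ^ 2) with hgdef
  set h : ℕ → ℝ := fun N => (Real.exp (-(n : ℝ)) * (n : ℝ) ^ N / N.factorial) * |(n : ℝ) - N|
    with hhdef
  have hg0 : ∀ N, 0 ≤ g N := fun N => by rw [hgdef]; positivity
  have hh0 : ∀ N, 0 ≤ h N := fun N => by rw [hhdef]; positivity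
  have hB1 : ∀ N : ℕ, (1 : ℝ) ≤ (((min n N : ℕ) : ℝ) + 1) ^ 2 := by
    intro N
    have h1 : (0 : ℝ) ≤ ((min n N : ℕ) : ℝ) := Nat.cast_nonneg _
    nlinarith
  have hgh : ∀ N, g N ≤ h N := by
    intro N
    rw [hgdef, hhdef]
    apply mul_le_mul_of_nonneg_left _ (by positivity)
    exact div_le_self (abs_nonneg _) (hB1 N)
  have hSh : Summable h := by
    have hbig : Summable (fun N : ℕ => Real.exp (-(n : ℝ)) *
        ((n : ℝ) * ((n : ℝ) ^ N / N.factorial) + (N : ℝ) * ((n : ℝ) ^ N / N.factorial))) :=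
      (((Real.summable_pow_div_factorial (n : ℝ)).mul_left (n : ℝ)).add
        (summable_mul_nat (n : ℝ))).mul_left _
    apply Summable.of_nonneg_of_le hh0 _ hbig
    intro N
    rw [hhdef]
    have habs : |(n : ℝ) - N| ≤ (n : ℝ) + N := by
      refine (abs_sub _ _).trans ?_
      rw [abs_of_nonneg hx0.le, abs_of_nonneg (Nat.cast_nonneg N)]
    have hP : (0 : ℝ) ≤ Real.exp (-(n : ℝ)) * (n : ℝ) ^ N / N.factorial := by positivity
    calc Real.exp (-(n : ℝ)) * (n : ℝ) ^ N / N.factorial * |(n : ℝ) - N|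
        ≤ Real.exp (-(n : ℝ)) * (n : ℝ) ^ N / N.factorial * ((n : ℝ) + N) :=
          mul_le_mul_of_nonneg_left habs hP
      _ = Real.exp (-(n : ℝ)) *
          ((n : ℝ) * ((n : ℝ) ^ N / N.factorial) + (N : ℝ) * ((n : ℝ) ^ N / N.factorial)) := by
          ring
  have hSg : Summable g := Summable.of_nonneg_of_le hg0 hgh hSh
  -- total abs-moment bound
  have hfac : ((n.factorial : ℝ)) = (n : ℝ) * ((n - 1).factorial : ℝ) := by
    rw [← Nat.mul_factorial_pred hn.ne']; push_cast; ring
  have hMAD : ∑' N, h N ≤ Real.sqrt n := by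
    have h1 : ∑' N, h N = Real.exp (-(n : ℝ)) *
        ∑' N : ℕ, |(n : ℝ) - N| * ((n : ℝ) ^ N / N.factorial) := by
      rw [← tsum_mul_left]
      apply tsum_congr
      intro N
      rw [hhdef]; ring
    rw [h1, mad_eq n hn]
    have h2 : Real.exp (-(n : ℝ)) * (2 * ((n : ℝ) ^ n / ((n - 1).factorial : ℝ)))
        = 2 * (n : ℝ) * (Real.exp (-(n : ℝ)) * (n : ℝ) ^ n / n.factorial) := by
      rw [hfac]
      have hf1 : ((n - 1).factorial : ℝ) ≠ 0 := by positivity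
      field_simp
    rw [h2]
    calc 2 * (n : ℝ) * (Real.exp (-(n : ℝ)) * (n : ℝ) ^ n / n.factorial)
        ≤ 2 * (n : ℝ) * (1 / (2 * Real.sqrt n)) :=
          mul_le_mul_of_nonneg_left (pmf_max n hn) (by positivity)
      _ = (n : ℝ) / Real.sqrt n := by
          have hss := Real.mul_self_sqrt hx0.le
          field_simp
      _ = Real.sqrt n := Real.div_sqrt
  -- reduce to the p-free statement
  have hterm : ∀ N : ℕ, (Real.exp (-(n : ℝ)) * (n : ℝ) ^ N / N.factorial) *
      (|(n : ℝ) - N| / (((min n N : ℕ) + 1 : ℝ) ^ 2 * p)) = g N * p⁻¹ := by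
    intro N
    rw [hgdef, div_mul_eq_div_div]
    ring
  rw [tsum_congr hterm, tsum_mul_right, hx32, div_mul_eq_div_div, div_eq_mul_inv]
  apply mul_le_mul_of_nonneg_right _ (inv_nonneg.mpr hp0.le)
  -- now the key bound
  by_cases hn12 : n ≤ 12
  · have hx12 : (n : ℝ) ≤ 12 := by exact_mod_cast hn12
    have := Summable.tsum_le_tsum hgh hSg hSh
    refine this.trans (hMAD.trans ?_)
    rw [le_div_iff₀ (by positivity)]
    nlinarith [Real.mul_self_sqrt hx0.le, hsx]
  · push_neg at hn12
    have hn13 : 13 ≤ n := hn12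
    set K := (n + 1) / 2 with hKdef
    have hK2 : n ≤ 2 * K := by omega
    have hKn : K ≤ n := by omega
    have hsplit := (Summable.sum_add_tsum_nat_add K hSg).symm
    rw [hsplit]
    have hhead : ∑ i ∈ Finset.range K, g i
        ≤ 156 / ((n : ℝ) * Real.sqrt n) := by
      have hstep : ∀ i ∈ Finset.range K, g i
          ≤ (n : ℝ) * Real.exp (-(n : ℝ)) * ((n : ℝ) ^ i / i.factorial) := by
        intro i hi
        have hiK : i < K := Finset.mem_range.mp hi
        have hiN : (i : ℝ) ≤ (n : ℝ) := by
          have : i ≤ n := by omega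
          exact_mod_cast this
        have habs2 : |(n : ℝ) - i| ≤ (n : ℝ) := by
          rw [abs_of_nonneg (by linarith)]
          have : (0 : ℝ) ≤ (i : ℝ) := Nat.cast_nonneg i
          linarith
        have hdiv : |(n : ℝ) - i| / (((min n i : ℕ) : ℝ) + 1) ^ 2 ≤ (n : ℝ) :=
          (div_le_self (abs_nonneg _) (hB1 i)).trans habs2
        rw [hgdef]
        calc (Real.exp (-(n : ℝ)) * (n : ℝ) ^ i / i.factorial) *
            (|(n : ℝ) - i| / (((min n i : ℕ) : ℝ) + 1) ^ 2)
            ≤ (Real.exp (-(n : ℝ)) * (n : ℝ) ^ i / i.factorial) * (n : ℝ) :=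
              mul_le_mul_of_nonneg_left hdiv (by positivity)
          _ = (n : ℝ) * Real.exp (-(n : ℝ)) * ((n : ℝ) ^ i / i.factorial) := by ring
      calc ∑ i ∈ Finset.range K, g i
          ≤ ∑ i ∈ Finset.range K, (n : ℝ) * Real.exp (-(n : ℝ)) * ((n : ℝ) ^ i / i.factorial) :=
            Finset.sum_le_sum hstep
        _ = (n : ℝ) * Real.exp (-(n : ℝ)) * ∑ i ∈ Finset.range K, ((n : ℝ) ^ i / i.factorial) := by
            rw [Finset.mul_sum]
        _ ≤ (n : ℝ) * Real.exp (-(n : ℝ)) *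
            (2 * ((n : ℝ) ^ ((n - 1) / 2) / ((n - 1) / 2).factorial)) := by
            apply mul_le_mul_of_nonneg_left (geo_sum n hn) (by positivity)
        _ = 2 * (n : ℝ) *
            (Real.exp (-(n : ℝ)) * (n : ℝ) ^ ((n - 1) / 2) / ((n - 1) / 2).factorial) := by
            ring
        _ ≤ 156 / ((n : ℝ) * Real.sqrt n) := headF n hn13
    have htail : ∑' i, g (i + K) ≤ 4 / ((n : ℝ) * Real.sqrt n) := by
      have hstep : ∀ i : ℕ, g (i + K) ≤ (4 / (n : ℝ) ^ 2) * h (i + K) := by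
        intro i
        set N := i + K with hNdef
        have hmin : (n : ℝ) ≤ 2 * (((min n N : ℕ) : ℝ) + 1) := by
          have : n ≤ 2 * (min n N + 1) := by omega
          exact_mod_cast this
        have hB : (n : ℝ) ^ 2 / 4 ≤ (((min n N : ℕ) : ℝ) + 1) ^ 2 := by nlinarith
        have hdiv : |(n : ℝ) - N| / (((min n N : ℕ) : ℝ) + 1) ^ 2
            ≤ |(n : ℝ) - N| / ((n : ℝ) ^ 2 / 4) :=
          div_le_div_of_nonneg_left (abs_nonneg _) (by positivity) hB
        rw [hgdef, hhdef]
        calc (Real.exp (-(n : ℝ)) * (n : ℝ) ^ N / N.factorial) *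
            (|(n : ℝ) - N| / (((min n N : ℕ) : ℝ) + 1) ^ 2)
            ≤ (Real.exp (-(n : ℝ)) * (n : ℝ) ^ N / N.factorial) *
              (|(n : ℝ) - N| / ((n : ℝ) ^ 2 / 4)) :=
              mul_le_mul_of_nonneg_left hdiv (by positivity)
          _ = (4 / (n : ℝ) ^ 2) * ((Real.exp (-(n : ℝ)) * (n : ℝ) ^ N / N.factorial) *
              |(n : ℝ) - N|) := by
              field_simp
      have hSgK : Summable (fun i => g (i + K)) := (summable_nat_add_iff K).mpr hSg
      have hShK : Summable (fun i => h (i + K)) := (summable_nat_add_iff K).mpr hSh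
      have h1 : ∑' i, g (i + K) ≤ ∑' i, (4 / (n : ℝ) ^ 2) * h (i + K) :=
        Summable.tsum_le_tsum hstep hSgK (hShK.mul_left _)
      have h2 : ∑' i, (4 / (n : ℝ) ^ 2) * h (i + K) = (4 / (n : ℝ) ^ 2) * ∑' i, h (i + K) :=
        tsum_mul_left
      have h3 : ∑' i, h (i + K) ≤ ∑' N, h N := by
        have := (Summable.sum_add_tsum_nat_add K hSh)
        have hhd : 0 ≤ ∑ i ∈ Finset.range K, h i := Finset.sum_nonneg fun i _ => hh0 i
        linarith
      have h4 : (4 / (n : ℝ) ^ 2) * ∑' i, h (i + K) ≤ (4 / (n : ℝ) ^ 2) * Real.sqrt n :=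
        mul_le_mul_of_nonneg_left (h3.trans hMAD) (by positivity)
      have h5 : (4 / (n : ℝ) ^ 2) * Real.sqrt n = 4 / ((n : ℝ) * Real.sqrt n) := by
        rw [eq_div_iff (by positivity)]
        have := Real.mul_self_sqrt hx0.le
        field_simp
        nlinarith [Real.mul_self_sqrt hx0.le]
      linarith [h1, h2 ▸ h1]
    have : (160 : ℝ) / ((n : ℝ) * Real.sqrt n)
        = 156 / ((n : ℝ) * Real.sqrt n) + 4 / ((n : ℝ) * Real.sqrt n) := by
      rw [← add_div]
      norm_num
    rw [this]
    exact add_le_add hhead htail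
end
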